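/- arXiv:1609.09480 — 6 statements merged into one kernel-verified Lean document; each statement's English description precedes it below -/
import Mathlib

section
/- Let (X,d) be a δ-hyperbolic metric space (δ ≥ 0), let α, β ≥ 0 be real numbers, and let a, x, y, z be four points of X. If y belongs to α-geod(a,x), z belongs to β-geod(a,y), and d(y,z) ≥ (α + β)/2, then z belongs to (β + δ)-geod(a,x). -/
/-- Lemma 3.4 of Alvarez–Lafforgue: in a δ-hyperbolic space, if `y ∈ α-geod(a,x)`,
`z ∈ β-geod(a,y)` and `d(y,z) ≥ (α+β)/2`, then `z ∈ (β+δ)-geod(a,x)`. -/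
theorem mem_approx_geod_trans
    {X : Type*} [MetricSpace X] (δ : ℝ) (hδ : 0 ≤ δ)
    (hhyp : ∀ x₁ x₂ x₃ x₄ : X, dist x₁ x₄ + dist x₂ x₃ ≤
      max (dist x₁ x₂ + dist x₃ x₄) (dist x₁ x₃ + dist x₂ x₄) + δ)
    (α β : ℝ) (hα : 0 ≤ α) (hβ : 0 ≤ β) (a x y z : X)
    (hy : dist a y + dist y x ≤ dist a x + α)
    (hz : dist a z + dist z y ≤ dist a y + β)
    (hyz : (α + β) / 2 ≤ dist y z) :
    dist a z + dist z x ≤ dist a x + (β + δ) := by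
  have h := hhyp x y a z
  have c1 : dist y x = dist x y := dist_comm y x
  have c2 : dist z y = dist y z := dist_comm z y
  have c3 : dist z x = dist x z := dist_comm z x
  have c4 : dist x a = dist a x := dist_comm x a
  have c5 : dist y a = dist a y := dist_comm y a
  rcases max_cases (dist x y + dist a z) (dist x a + dist y z) with ⟨he, _⟩ | ⟨he, _⟩ <;>
    rw [he] at h <;> linarith
end

section
/- Let (X,d) be a nonempty good discrete hyperbolic space, δ-hyperbolic for an integer δ ≥ 1, equipped with an isometric action of a group G that is metrically proper. Then there exists a real p₀ ≥ 1 such that for every real p ≥ p₀ there exists a map b : G → ℓ^p(X^{≤4δ}) which is a cocycle for the permutation representation π (i.e., b(gh) = b(g) + π(g)(b(h)) for all g,h ∈ G) and which is proper (for every M ≥ 0 the set {g ∈ G : ‖b(g)‖_p ≤ M} is finite). -/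
noncomputable section
open Classical
namespace AL

/-- Bundled data of a good discrete hyperbolic space. -/
structure Good (X : Type*) where
  δ : ℕ
  hδ : 1 ≤ δ
  d : X → X → ℕ
  dsymm : ∀ x y, d x y = d y x
  dself : ∀ x, d x x = 0
  dtri : ∀ x y z, d x z ≤ d x y + d y z
  hyp : ∀ x₁ x₂ x₃ x₄, d x₁ x₄ + d x₂ x₃ ≤ max (d x₁ x₂ + d x₃ x₄) (d x₁ x₃ + d x₂ x₄) + δ
  geo : ∀ x y : X, ∀ k ≤ d x y, ∃ z, d x z = k ∧ k + d z y = d x y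
  dzero : ∀ x y, d x y = 0 → x = y
  fin : ∀ (x : X) (r : ℕ), {y : X | d x y ≤ r}.Finite
  K : ℕ → ℕ
  cardK : ∀ (x : X) (r : ℕ), ((fin x r).toFinset).card ≤ K r

variable {X : Type*}

/-! ### Finitely supported measures -/

def mass : (X →₀ ℝ) →ₗ[ℝ] ℝ := Finsupp.lsum ℝ (fun _ => LinearMap.id)

def push (P : X → X →₀ ℝ) : (X →₀ ℝ) →ₗ[ℝ] (X →₀ ℝ) :=
  Finsupp.lsum ℝ (fun z => (LinearMap.id : ℝ →ₗ[ℝ] ℝ).smulRight (P z))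

def l1 (μ : X →₀ ℝ) : ℝ := μ.sum fun _ c => |c|

def Nonneg (μ : X →₀ ℝ) : Prop := ∀ b, 0 ≤ μ b

lemma mass_apply (μ : X →₀ ℝ) : mass μ = μ.sum fun _ c => c := rfl

lemma mass_single (x : X) (c : ℝ) : mass (Finsupp.single x c) = c := by
  simp [mass]

lemma mass_eq_sum {μ : X →₀ ℝ} {s : Finset X} (h : μ.support ⊆ s) :
    mass μ = ∑ b ∈ s, μ b :=
  Finsupp.sum_of_support_subset μ h _ (by simp)

lemma l1_eq_sum {μ : X →₀ ℝ} {s : Finset X} (h : μ.support ⊆ s) :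
    l1 μ = ∑ b ∈ s, |μ b| :=
  Finsupp.sum_of_support_subset μ h _ (by simp)

lemma l1_nonneg (μ : X →₀ ℝ) : 0 ≤ l1 μ := by
  rw [l1_eq_sum (subset_refl _)]
  exact Finset.sum_nonneg fun b _ => abs_nonneg _

lemma abs_apply_le_l1 (μ : X →₀ ℝ) (b : X) : |μ b| ≤ l1 μ := by
  by_cases hb : b ∈ μ.support
  · rw [l1_eq_sum (subset_refl _)]
    exact Finset.single_le_sum (f := fun b => |μ b|) (fun i _ => abs_nonneg _) hb
  · simp [Finsupp.notMem_support_iff.mp hb, l1_nonneg]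

lemma l1_eq_mass {μ : X →₀ ℝ} (h : Nonneg μ) : l1 μ = mass μ := by
  rw [l1_eq_sum (subset_refl _), mass_eq_sum (subset_refl _)]
  exact Finset.sum_congr rfl fun b _ => abs_of_nonneg (h b)

lemma l1_smul (c : ℝ) (μ : X →₀ ℝ) : l1 (c • μ) = |c| * l1 μ := by
  have hs : (c • μ).support ⊆ μ.support := Finsupp.support_smul
  rw [l1_eq_sum hs, l1_eq_sum (subset_refl _), Finset.mul_sum]
  exact Finset.sum_congr rfl fun b _ => by simp [abs_mul]

lemma l1_add_le (μ ν : X →₀ ℝ) : l1 (μ + ν) ≤ l1 μ + l1 ν := by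
  rw [l1_eq_sum (s := μ.support ∪ ν.support) (Finsupp.support_add),
      l1_eq_sum (s := μ.support ∪ ν.support) (Finset.subset_union_left),
      l1_eq_sum (s := μ.support ∪ ν.support) (Finset.subset_union_right),
      ← Finset.sum_add_distrib]
  exact Finset.sum_le_sum fun b _ => abs_add_le _ _

lemma l1_finsetSum_le {ι : Type*} (s : Finset ι) (f : ι → X →₀ ℝ) :
    l1 (∑ i ∈ s, f i) ≤ ∑ i ∈ s, l1 (f i) := by
  induction s using Finset.cons_induction with
  | empty => simp [l1]
  | cons i s hi ih =>
      rw [Finset.sum_cons, Finset.sum_cons]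
      exact le_trans (l1_add_le _ _) (by linarith)

lemma push_apply (P : X → X →₀ ℝ) (μ : X →₀ ℝ) :
    push P μ = ∑ z ∈ μ.support, μ z • P z := rfl

lemma push_apply' (P : X → X →₀ ℝ) (μ : X →₀ ℝ) (b : X) :
    push P μ b = ∑ z ∈ μ.support, μ z * P z b := by
  rw [push_apply, Finsupp.finset_sum_apply]
  exact Finset.sum_congr rfl fun z _ => rfl

lemma push_single (P : X → X →₀ ℝ) (x : X) (c : ℝ) :
    push P (Finsupp.single x c) = c • P x := by
  simp [push]

lemma mass_push {P : X → X →₀ ℝ} (hP : ∀ z, mass (P z) = 1) (μ : X →₀ ℝ) :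
    mass (push P μ) = mass μ := by
  rw [push_apply, map_sum, mass_eq_sum (subset_refl _)]
  exact Finset.sum_congr rfl fun z _ => by rw [map_smul, hP z, smul_eq_mul, mul_one]

lemma nonneg_push {P : X → X →₀ ℝ} (hP : ∀ z, Nonneg (P z)) {μ : X →₀ ℝ}
    (hμ : Nonneg μ) : Nonneg (push P μ) := by
  intro b
  rw [push_apply']
  exact Finset.sum_nonneg fun z _ => mul_nonneg (hμ z) (hP z b)

lemma support_push {P : X → X →₀ ℝ} (μ : X →₀ ℝ) {s : Finset X}
    (h : ∀ z ∈ μ.support, (P z).support ⊆ s) : (push P μ).support ⊆ s := by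
  intro b hb
  rw [Finsupp.mem_support_iff] at hb
  by_contra hbs
  apply hb
  rw [push_apply']
  refine Finset.sum_eq_zero fun z hz => ?_
  have : P z b = 0 := Finsupp.notMem_support_iff.mp (fun hmem => hbs (h z hz hmem))
  rw [this, mul_zero]

/-! ### Uniform measures -/

def unif (s : Finset X) : X →₀ ℝ := (s.card : ℝ)⁻¹ • ∑ w ∈ s, Finsupp.single w 1

lemma unif_apply (s : Finset X) (b : X) :
    unif s b = if b ∈ s then (s.card : ℝ)⁻¹ else 0 := by
  rw [unif, Finsupp.smul_apply, Finsupp.finset_sum_apply]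
  simp only [Finsupp.single_apply]
  rw [Finset.sum_ite_eq' s b (fun _ => (1:ℝ))]
  split <;> simp

lemma unif_nonneg (s : Finset X) : Nonneg (unif s) := by
  intro b; rw [unif_apply]; split <;> positivity

lemma unif_support (s : Finset X) : (unif s).support ⊆ s := by
  intro b hb
  rw [Finsupp.mem_support_iff, unif_apply] at hb
  by_contra h; simp [h] at hb

lemma mass_unif {s : Finset X} (h : s.Nonempty) : mass (unif s) = 1 := by
  have hc : (s.card : ℝ) ≠ 0 := Nat.cast_ne_zero.mpr (Finset.card_ne_zero_of_mem h.choose_spec)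
  rw [unif, map_smul, map_sum]
  simp only [mass_single]
  rw [Finset.sum_const, nsmul_eq_mul, mul_one, smul_eq_mul, inv_mul_cancel₀ hc]

lemma unif_apply_ge {s : Finset X} {b : X} (hb : b ∈ s) {N : ℕ} (hN : s.card ≤ N)
    (hN0 : 0 < N) : (N : ℝ)⁻¹ ≤ unif s b := by
  rw [unif_apply, if_pos hb]
  have h0 : 0 < s.card := Finset.card_pos.mpr ⟨b, hb⟩
  exact inv_anti₀ (by exact_mod_cast h0) (by exact_mod_cast hN)


/-! ### Total variation contraction (Dobrushin) -/

lemma max_sub_max_neg (t : ℝ) : max t 0 - max (-t) 0 = t := by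
  rcases le_total t 0 with h | h
  · rw [max_eq_right h, max_eq_left (by linarith)]; ring
  · rw [max_eq_left h, max_eq_right (by linarith)]; ring

def pos (σ : X →₀ ℝ) : X →₀ ℝ := Finsupp.mapRange (fun t => max t 0) (by simp) σ

lemma pos_apply (σ : X →₀ ℝ) (b : X) : pos σ b = max (σ b) 0 := rfl

lemma pos_nonneg (σ : X →₀ ℝ) : Nonneg (pos σ) := fun b => le_max_right _ _

lemma sub_pos_eq (σ : X →₀ ℝ) : pos σ - pos (-σ) = σ := by
  ext b
  simp only [Finsupp.sub_apply, pos_apply, Finsupp.neg_apply]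
  exact max_sub_max_neg _

lemma eq_zero_of_mass_zero {μ : X →₀ ℝ} (h : Nonneg μ) (hm : mass μ = 0) : μ = 0 := by
  ext b
  by_contra hb
  have hbs : b ∈ μ.support := Finsupp.mem_support_iff.mpr hb
  have : 0 < ∑ c ∈ μ.support, μ c := by
    refine Finset.sum_pos' (fun c _ => h c) ⟨b, hbs, ?_⟩
    exact lt_of_le_of_ne (h b) (Ne.symm hb)
  rw [← mass_eq_sum (subset_refl _), hm] at this
  exact lt_irrefl _ this

lemma l1_sub_le_of_overlap {ρ τ : X →₀ ℝ} (hρ : Nonneg ρ) (hτ : Nonneg τ)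
    (hρm : mass ρ = 1) (hτm : mass τ = 1) {β : ℝ} {w : X}
    (hw1 : β ≤ ρ w) (hw2 : β ≤ τ w) : l1 (ρ - τ) ≤ 2 - 2 * β := by
  classical
  set s : Finset X := (ρ.support ∪ τ.support) ∪ {w} with hs
  have hws : w ∈ s := by simp [hs]
  have hρs : ρ.support ⊆ s := fun b hb => by simp [hs, Finset.mem_union, hb]
  have hτs : τ.support ⊆ s := fun b hb => by simp [hs, Finset.mem_union, hb]
  have hsub : (ρ - τ).support ⊆ s :=
    fun b hb => by
      rcases Finset.mem_union.mp (Finsupp.support_sub hb) with h | h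
      · exact hρs h
      · exact hτs h
  rw [l1_eq_sum hsub]
  have habs : ∀ b, |ρ b - τ b| = ρ b + τ b - 2 * min (ρ b) (τ b) := by
    intro b
    rcases le_total (ρ b) (τ b) with h | h
    · rw [abs_of_nonpos (by linarith), min_eq_left h]; ring
    · rw [abs_of_nonneg (by linarith), min_eq_right h]; ring
  simp only [Finsupp.sub_apply, habs]
  have h1 : ∑ b ∈ s, (ρ b + τ b - 2 * min (ρ b) (τ b))
      = (∑ b ∈ s, ρ b) + (∑ b ∈ s, τ b) - 2 * ∑ b ∈ s, min (ρ b) (τ b) := by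
    rw [Finset.sum_sub_distrib, Finset.sum_add_distrib, Finset.mul_sum]
  rw [h1, ← mass_eq_sum hρs, ← mass_eq_sum hτs, hρm, hτm]
  have h2 : β ≤ ∑ b ∈ s, min (ρ b) (τ b) := by
    calc β ≤ min (ρ w) (τ w) := le_min hw1 hw2
    _ ≤ ∑ b ∈ s, min (ρ b) (τ b) :=
      Finset.single_le_sum (f := fun b => min (ρ b) (τ b))
        (fun b _ => le_min (hρ b) (hτ b)) hws
  linarith


lemma dobrushin {P : X → X →₀ ℝ} {μ ν : X →₀ ℝ} (hμ : Nonneg μ) (hν : Nonneg ν)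
    (hm : mass μ = mass ν) {β : ℝ} (hβ0 : 0 ≤ β) (hβ1 : β ≤ 1)
    (hov : ∀ z ∈ μ.support, ∀ z' ∈ ν.support, l1 (P z - P z') ≤ 2 - 2 * β) :
    l1 (push P μ - push P ν) ≤ (1 - β) * l1 (μ - ν) := by
  classical
  set σ : X →₀ ℝ := μ - ν with hσ
  set p : X →₀ ℝ := pos σ with hp
  set q : X →₀ ℝ := pos (-σ) with hq
  have hpq : p - q = σ := sub_pos_eq σ
  have hpn : Nonneg p := pos_nonneg σ
  have hqn : Nonneg q := pos_nonneg (-σ)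
  have hmass : mass p = mass q := by
    have : mass (p - q) = 0 := by rw [hpq, hσ, map_sub, hm, sub_self]
    rw [map_sub] at this; linarith
  set m : ℝ := mass p with hmm
  have hm0 : 0 ≤ m := by
    rw [hmm, mass_eq_sum (subset_refl _)]
    exact Finset.sum_nonneg fun b _ => hpn b
  -- support inclusions
  have hsuppp : p.support ⊆ μ.support := by
    intro b hb
    rw [Finsupp.mem_support_iff] at hb ⊢
    have h1 : 0 < σ b := by
      rcases lt_or_ge 0 (σ b) with h | h
      · exact h
      · exfalso; exact hb (by simp [hp, pos_apply, max_eq_right h])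
    intro h0
    have := hν b
    rw [hσ] at h1; simp only [Finsupp.sub_apply] at h1
    rw [h0] at h1; linarith
  have hsuppq : q.support ⊆ ν.support := by
    intro b hb
    rw [Finsupp.mem_support_iff] at hb ⊢
    have h1 : σ b < 0 := by
      rcases lt_or_ge (σ b) 0 with h | h
      · exact h
      · exfalso
        exact hb (by simp [hq, pos_apply, Finsupp.neg_apply, max_eq_right (by linarith : -σ b ≤ 0)])
    intro h0
    have := hμ b
    rw [hσ] at h1; simp only [Finsupp.sub_apply] at h1
    rw [h0] at h1; linarith
  -- l1 σ = 2 m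
  have hsp : p.support ⊆ σ.support := by
    intro b hb
    rw [Finsupp.mem_support_iff] at hb ⊢
    intro h0; exact hb (by simp [hp, pos_apply, h0])
  have hsq : q.support ⊆ σ.support := by
    intro b hb
    rw [Finsupp.mem_support_iff] at hb ⊢
    intro h0; exact hb (by simp [hq, pos_apply, h0])
  have hl1σ : l1 σ = 2 * m := by
    have habs : ∀ b, |σ b| = p b + q b := by
      intro b
      simp only [hp, hq, pos_apply, Finsupp.neg_apply]
      rcases le_total (σ b) 0 with h | h
      · rw [abs_of_nonpos h, max_eq_right h, max_eq_left (by linarith)]; ring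
      · rw [abs_of_nonneg h, max_eq_left h, max_eq_right (by linarith)]; ring
    rw [l1_eq_sum (subset_refl _)]
    simp only [habs]
    rw [Finset.sum_add_distrib, ← mass_eq_sum hsp, ← mass_eq_sum hsq, ← hmass, hmm]
    ring
  rcases eq_or_lt_of_le hm0 with hm0' | hmpos
  · -- m = 0 : σ = 0
    have hp0 : p = 0 := eq_zero_of_mass_zero hpn hm0'.symm
    have hq0 : q = 0 := eq_zero_of_mass_zero hqn (by rw [← hmass, ← hm0'])
    have hσ0 : σ = 0 := by rw [← hpq, hp0, hq0, sub_zero]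
    have : push P μ - push P ν = 0 := by
      rw [← map_sub, ← hσ, hσ0, map_zero]
    rw [this]
    have : l1 (0 : X →₀ ℝ) = 0 := by simp [l1]
    rw [this]
    exact mul_nonneg (by linarith) (l1_nonneg _)
  -- main case
  have hkey : m • (push P p - push P q)
      = ∑ z ∈ p.support, ∑ z' ∈ q.support, (p z * q z') • (P z - P z') := by
    have h1 : m • push P p = ∑ z ∈ p.support, ∑ z' ∈ q.support, (p z * q z') • P z := by
      rw [push_apply, Finset.smul_sum]
      refine Finset.sum_congr rfl fun z _ => ?_
      rw [smul_smul]
      have : ∑ z' ∈ q.support, (p z * q z') • P z = (∑ z' ∈ q.support, p z * q z') • P z :=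
        (Finset.sum_smul).symm
      rw [this, ← Finset.mul_sum, ← mass_eq_sum (subset_refl _), ← hmass, mul_comm m (p z)]
    have h2 : m • push P q = ∑ z ∈ p.support, ∑ z' ∈ q.support, (p z * q z') • P z' := by
      rw [push_apply, Finset.smul_sum, Finset.sum_comm]
      refine Finset.sum_congr rfl fun z' _ => ?_
      rw [smul_smul]
      have : ∑ z ∈ p.support, (p z * q z') • P z' = (∑ z ∈ p.support, p z * q z') • P z' :=
        (Finset.sum_smul).symm
      rw [this, ← Finset.sum_mul, ← mass_eq_sum (subset_refl _), ← hmm, mul_comm m (q z')]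
    rw [smul_sub, h1, h2, ← Finset.sum_sub_distrib]
    refine Finset.sum_congr rfl fun z _ => ?_
    rw [← Finset.sum_sub_distrib]
    exact Finset.sum_congr rfl fun z' _ => (smul_sub _ _ _).symm
  have hbound : l1 (m • (push P p - push P q)) ≤ m * m * (2 - 2 * β) := by
    rw [hkey]
    calc l1 (∑ z ∈ p.support, ∑ z' ∈ q.support, (p z * q z') • (P z - P z'))
        ≤ ∑ z ∈ p.support, l1 (∑ z' ∈ q.support, (p z * q z') • (P z - P z')) :=
          l1_finsetSum_le _ _
      _ ≤ ∑ z ∈ p.support, ∑ z' ∈ q.support, l1 ((p z * q z') • (P z - P z')) :=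
          Finset.sum_le_sum fun z _ => l1_finsetSum_le _ _
      _ ≤ ∑ z ∈ p.support, ∑ z' ∈ q.support, p z * q z' * (2 - 2 * β) := by
          refine Finset.sum_le_sum fun z hz => Finset.sum_le_sum fun z' hz' => ?_
          rw [l1_smul, abs_of_nonneg (mul_nonneg (hpn z) (hqn z'))]
          exact mul_le_mul_of_nonneg_left (hov z (hsuppp hz) z' (hsuppq hz'))
            (mul_nonneg (hpn z) (hqn z'))
      _ = m * m * (2 - 2 * β) := by
          have hq' : ∑ z' ∈ q.support, q z' * (2 - 2*β) = m * (2 - 2*β) := by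
            rw [← Finset.sum_mul, ← mass_eq_sum (subset_refl _), ← hmass]
          calc ∑ z ∈ p.support, ∑ z' ∈ q.support, p z * q z' * (2 - 2 * β)
              = ∑ z ∈ p.support, p z * (m * (2 - 2*β)) := by
                refine Finset.sum_congr rfl fun z _ => ?_
                rw [← hq', Finset.mul_sum]
                exact Finset.sum_congr rfl fun z' _ => by ring
            _ = m * m * (2 - 2*β) := by
                rw [← Finset.sum_mul, ← mass_eq_sum (subset_refl _), ← hmm]
                ring
  rw [l1_smul, abs_of_nonneg hm0] at hbound
  have hfinal : l1 (push P p - push P q) ≤ m * (2 - 2 * β) :=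
    le_of_mul_le_mul_left (by rw [← mul_assoc]; exact hbound) hmpos
  have : push P μ - push P ν = push P p - push P q := by
    rw [← map_sub, ← map_sub, ← hσ, hpq]
  rw [this, hl1σ]
  calc l1 (push P p - push P q) ≤ m * (2 - 2*β) := hfinal
    _ = (1 - β) * (2 * m) := by ring


/-! ### The geometric walk -/

variable (S : Good X)

def ball (x : X) (r : ℕ) : Finset X := (S.fin x r).toFinset

lemma mem_ball {x y : X} {r : ℕ} : y ∈ ball S x r ↔ S.d x y ≤ r := by
  simp [ball, Set.Finite.mem_toFinset]

lemma card_ball (x : X) (r : ℕ) : (ball S x r).card ≤ S.K r := S.cardK x r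

lemma ball_mono (x : X) {r r' : ℕ} (h : r ≤ r') : ball S x r ⊆ ball S x r' := by
  intro y hy; rw [mem_ball] at hy ⊢; omega

def N : ℕ := max (S.K (5 * S.δ)) 1

lemma N_pos : 0 < N S := by simp [N]

lemma card_ball_le_N (z : X) {r : ℕ} (hr : r ≤ 5 * S.δ) : (ball S z r).card ≤ N S :=
  le_trans (Finset.card_le_card (ball_mono S z hr)) (le_trans (card_ball S z _) (le_max_left _ _))

def nxt (L : ℕ) : ℕ := 3 * S.δ + 2 * S.δ * ((L - 5 * S.δ) / (2 * S.δ))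

lemma nxt_spec {L : ℕ} (h : 5 * S.δ ≤ L) :
    nxt S L + 2 * S.δ ≤ L ∧ L < nxt S L + 4 * S.δ ∧ 3 * S.δ ≤ nxt S L := by
  have hδ := S.hδ
  have h2δ : 0 < 2 * S.δ := by omega
  have hdm := Nat.div_add_mod (L - 5 * S.δ) (2 * S.δ)
  have hlt := Nat.mod_lt (L - 5 * S.δ) h2δ
  unfold nxt
  omega

lemma nxt_prog (j : ℕ) : nxt S (3 * S.δ + 2 * S.δ * (j + 1)) = 3 * S.δ + 2 * S.δ * j := by
  have hδ := S.hδ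
  have h2δ : 0 < 2 * S.δ := by omega
  have h1 : 3 * S.δ + 2 * S.δ * (j + 1) - 5 * S.δ = 2 * S.δ * j := by
    have : 2 * S.δ * (j+1) = 2*S.δ*j + 2*S.δ := by ring
    omega
  unfold nxt
  rw [h1, Nat.mul_div_cancel_left j h2δ]

def T (a z : X) : Finset X :=
  (ball S z (S.d z a - nxt S (S.d z a) + S.δ)).filter (fun w => S.d w a = nxt S (S.d z a))

lemma mem_T {a z w : X} :
    w ∈ T S a z ↔ S.d z w ≤ S.d z a - nxt S (S.d z a) + S.δ ∧ S.d w a = nxt S (S.d z a) := by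
  simp [T, mem_ball]

lemma T_nonempty {a z : X} (h : 5 * S.δ ≤ S.d z a) : (T S a z).Nonempty := by
  obtain ⟨h1, h2, h3⟩ := nxt_spec S h
  obtain ⟨w, hw1, hw2⟩ := S.geo z a (S.d z a - nxt S (S.d z a)) (by omega)
  refine ⟨w, (mem_T S).mpr ⟨by omega, by omega⟩⟩

lemma card_T_le (a z : X) (h : 5 * S.δ ≤ S.d z a) : (T S a z).card ≤ N S := by
  obtain ⟨h1, h2, h3⟩ := nxt_spec S h
  have hsub : T S a z ⊆ ball S z (S.d z a - nxt S (S.d z a) + S.δ) := Finset.filter_subset _ _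
  refine le_trans (Finset.card_le_card hsub) (card_ball_le_N S z (by omega))

def stepK (a z : X) : X →₀ ℝ :=
  if 5 * S.δ ≤ S.d z a then unif (T S a z) else Finsupp.single z 1

lemma stepK_nonneg (a z : X) : Nonneg (stepK S a z) := by
  unfold stepK; split
  · exact unif_nonneg _
  · intro b; rw [Finsupp.single_apply]; split <;> norm_num

lemma stepK_mass (a z : X) : mass (stepK S a z) = 1 := by
  unfold stepK; split
  · exact mass_unif (T_nonempty S (by assumption))
  · exact mass_single _ _

def walk (a x : X) : ℕ → (X →₀ ℝ)
  | 0 => Finsupp.single x 1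
  | k + 1 => push (stepK S a) (walk a x k)

lemma walk_mass (a x : X) (k : ℕ) : mass (walk S a x k) = 1 := by
  induction k with
  | zero => rw [walk]; exact mass_single _ _
  | succ k ih => rw [walk, mass_push (stepK_mass S a), ih]

lemma walk_nonneg (a x : X) (k : ℕ) : Nonneg (walk S a x k) := by
  induction k with
  | zero => intro b; rw [walk, Finsupp.single_apply]; split <;> norm_num
  | succ k ih => exact nonneg_push (stepK_nonneg S a) ih

/-- The level function: distance from `a` of points in the support of `walk a x k`. -/
def lvl (n k : ℕ) : ℕ :=
  if k = 0 then n else 3 * S.δ + 2 * S.δ * ((n - 5 * S.δ) / (2 * S.δ) + 1 - k)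

lemma lvl_zero (n : ℕ) : lvl S n 0 = n := rfl

lemma lvl_succ {n k : ℕ} (h5n : 5 * S.δ ≤ n) :
    lvl S n (k + 1) = if 5 * S.δ ≤ lvl S n k then nxt S (lvl S n k) else lvl S n k := by
  have hδ := S.hδ
  set J := (n - 5 * S.δ) / (2 * S.δ) with hJ
  rcases Nat.eq_zero_or_pos k with hk | hk
  · subst hk
    rw [show lvl S n 0 = n from rfl, if_pos h5n]
    simp only [lvl, if_neg (Nat.one_ne_zero)]
    rw [Nat.add_sub_cancel]
    rfl
  · have hk' : k ≠ 0 := by omega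
    simp only [lvl, if_neg (Nat.succ_ne_zero k), if_neg hk']
    rcases Nat.lt_or_ge k (J + 1) with hlt | hge
    · -- still moving : J + 1 - k ≥ 1
      have hm : J + 1 - k = (J - k) + 1 := by omega
      have h5 : 5 * S.δ ≤ 3 * S.δ + 2 * S.δ * (J + 1 - k) := by
        have : 1 ≤ J + 1 - k := by omega
        have := Nat.mul_le_mul_left (2 * S.δ) this
        omega
      rw [if_pos (by rw [← hJ]; exact h5), ← hJ, hm, nxt_prog]
      have he : J + 1 - (k + 1) = J - k := by omega
      rw [he]
    · -- stopped : J + 1 - k = 0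
      have hm : J + 1 - k = 0 := by omega
      have hm' : J + 1 - (k+1) = 0 := by omega
      rw [← hJ, hm, hm', if_neg (by omega)]

lemma lvl_final {n k : ℕ} (hk : (n - 5 * S.δ) / (2 * S.δ) + 1 ≤ k) (hk0 : k ≠ 0) :
    lvl S n k = 3 * S.δ := by
  simp only [lvl, if_neg hk0]
  have : (n - 5 * S.δ) / (2 * S.δ) + 1 - k = 0 := by omega
  rw [this, Nat.mul_zero, Nat.add_zero]


lemma mem_support_push {P : X → X →₀ ℝ} {μ : X →₀ ℝ} {b : X}
    (hb : b ∈ (push P μ).support) : ∃ z ∈ μ.support, b ∈ (P z).support := by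
  by_contra h
  push_neg at h
  rw [Finsupp.mem_support_iff, push_apply'] at hb
  exact hb (Finset.sum_eq_zero fun z hz =>
    by rw [Finsupp.notMem_support_iff.mp (h z hz), mul_zero])

lemma step_supp {a z : X} (h5 : 5 * S.δ ≤ S.d z a) {w : X} (hw : w ∈ (stepK S a z).support) :
    S.d w a = nxt S (S.d z a) ∧ S.d z w ≤ S.d z a - nxt S (S.d z a) + S.δ := by
  unfold stepK at hw
  rw [if_pos h5] at hw
  have := (mem_T S).mp (unif_support _ hw)
  exact ⟨this.2, this.1⟩

lemma quasi_step {a x z w : X} {L : ℕ} (hz : S.d z a = L) (h5 : 5 * S.δ ≤ L)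
    (hq : S.d x z + L ≤ S.d x a + 2 * S.δ)
    (hw : S.d w a = nxt S L) (hd : S.d z w ≤ L - nxt S L + S.δ) :
    S.d x w + nxt S L ≤ S.d x a + 2 * S.δ := by
  obtain ⟨h1, h2, h3⟩ := nxt_spec S h5
  have hyp := S.hyp x z a w
  have hsym : S.d a w = S.d w a := S.dsymm a w
  rcases le_total (S.d x z + S.d a w) (S.d x a + S.d z w) with hmx | hmx
  · rw [max_eq_right hmx] at hyp; omega
  · rw [max_eq_left hmx] at hyp; omega

lemma walk_supp (a x : X) (h5 : 5 * S.δ ≤ S.d x a) :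
    ∀ k, ∀ w ∈ (walk S a x k).support,
      S.d w a = lvl S (S.d x a) k ∧ S.d x w + S.d w a ≤ S.d x a + 2 * S.δ := by
  intro k
  induction k with
  | zero =>
    intro w hw
    rw [walk, Finsupp.support_single_ne_zero x (one_ne_zero)] at hw
    have hwx : w = x := Finset.mem_singleton.mp hw
    subst hwx
    rw [lvl_zero]
    refine ⟨rfl, ?_⟩
    rw [S.dself]
    omega
  | succ k ih =>
    intro w hw
    rw [walk] at hw
    obtain ⟨z, hz, hwz⟩ := mem_support_push hw
    obtain ⟨hlz, hqz⟩ := ih z hz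
    rw [lvl_succ S h5]
    by_cases hbig : 5 * S.δ ≤ lvl S (S.d x a) k
    · rw [if_pos hbig]
      have h5z : 5 * S.δ ≤ S.d z a := by rw [hlz]; exact hbig
      obtain ⟨hw1, hw2⟩ := step_supp S h5z hwz
      rw [hlz] at hw1 hw2
      refine ⟨hw1, ?_⟩
      have := quasi_step S hlz hbig (by rw [← hlz]; exact hqz) hw1 hw2
      rw [hw1]
      omega
    · rw [if_neg hbig]
      have h5z : ¬ 5 * S.δ ≤ S.d z a := by rw [hlz]; exact hbig
      unfold stepK at hwz
      rw [if_neg h5z, Finsupp.support_single_ne_zero z (one_ne_zero)] at hwz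
      have : w = z := Finset.mem_singleton.mp hwz
      subst this
      exact ⟨hlz, hqz⟩

/-- Number of steps of the walk towards `a` started at `x` with `d x a = n`. -/
def Jn (n : ℕ) : ℕ := (n - 5 * S.δ) / (2 * S.δ)

/-- The arrival measure of the walk from `x` towards `a`. -/
def F (a x : X) : X →₀ ℝ := walk S a x (Jn S (S.d x a) + 1)

lemma F_mass (a x : X) : mass (F S a x) = 1 := walk_mass S a x _

lemma F_nonneg (a x : X) : Nonneg (F S a x) := walk_nonneg S a x _

lemma F_supp {a x : X} (h5 : 5 * S.δ ≤ S.d x a) :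
    ∀ w ∈ (F S a x).support,
      S.d w a = 3 * S.δ ∧ S.d x w + S.d w a ≤ S.d x a + 2 * S.δ := by
  intro w hw
  have := walk_supp S a x h5 (Jn S (S.d x a) + 1) w hw
  rwa [lvl_final S (by unfold Jn; exact le_refl _) (Nat.succ_ne_zero _)] at this


lemma l1_neg (ν : X →₀ ℝ) : l1 (-ν) = l1 ν := by
  have hs : (-ν).support ⊆ ν.support := fun b hb => by
    rw [Finsupp.mem_support_iff] at hb ⊢; simpa using hb
  rw [l1_eq_sum hs, l1_eq_sum (subset_refl _)]
  exact Finset.sum_congr rfl fun b _ => by rw [Finsupp.neg_apply, abs_neg]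

lemma l1_sub_le (μ ν : X →₀ ℝ) : l1 (μ - ν) ≤ l1 μ + l1 ν := by
  have h := l1_add_le μ (-ν)
  rw [← sub_eq_add_neg] at h
  rw [l1_neg] at h
  exact h

lemma fellow {a x y z z' : X} {L : ℕ} (hz : S.d z a = L) (hz' : S.d z' a = L)
    (hxz : S.d x z + L ≤ S.d x a + 2 * S.δ) (hyz' : S.d y z' + L ≤ S.d y a + 2 * S.δ)
    (hG : 2 * L + S.d x y + 10 * S.δ ≤ S.d x a + S.d y a) :
    S.d z z' ≤ 4 * S.δ := by
  have h1 : S.d z' x + L ≤ S.d x a + 3 * S.δ := by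
    have hyp := S.hyp z' y a x
    have e1 : S.d a x = S.d x a := S.dsymm a x
    have e2 : S.d z' y = S.d y z' := S.dsymm z' y
    have e3 : S.d y x = S.d x y := S.dsymm y x
    rcases le_total (S.d z' y + S.d a x) (S.d z' a + S.d y x) with hmx | hmx
    · rw [max_eq_right hmx] at hyp; omega
    · rw [max_eq_left hmx] at hyp; omega
  have hyp := S.hyp z x a z'
  have e1 : S.d z x = S.d x z := S.dsymm z x
  have e2 : S.d a z' = S.d z' a := S.dsymm a z'
  have e3 : S.d x z' = S.d z' x := S.dsymm x z'
  rcases le_total (S.d z x + S.d a z') (S.d z a + S.d x z') with hmx | hmx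
  · rw [max_eq_right hmx] at hyp; omega
  · rw [max_eq_left hmx] at hyp; omega

lemma step_overlap {a z z' : X} {L : ℕ} (hz : S.d z a = L) (hz' : S.d z' a = L)
    (h5 : 5 * S.δ ≤ L) (hprog : nxt S L + 2 * S.δ = L) (hzz' : S.d z z' ≤ 4 * S.δ) :
    l1 (stepK S a z - stepK S a z') ≤ 2 - 2 * (N S : ℝ)⁻¹ := by
  have hδ := S.hδ
  -- the common witness
  obtain ⟨w, hw1, hw2⟩ := S.geo z a (2 * S.δ) (by omega)
  have hwa : S.d w a = nxt S L := by omega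
  have hwT : w ∈ T S a z := by
    rw [mem_T, hz]
    exact ⟨by omega, by rw [hwa]⟩
  have hwT' : w ∈ T S a z' := by
    rw [mem_T, hz']
    have hyp := S.hyp z' z a w
    have e1 : S.d z' z = S.d z z' := S.dsymm z' z
    have e2 : S.d a w = S.d w a := S.dsymm a w
    have hzw : S.d z' w ≤ 3 * S.δ := by
      rcases le_total (S.d z' z + S.d a w) (S.d z' a + S.d z w) with hmx | hmx
      · rw [max_eq_right hmx] at hyp; omega
      · rw [max_eq_left hmx] at hyp; omega
    exact ⟨by omega, by rw [hwa]⟩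
  have h5' : 5 * S.δ ≤ S.d z' a := by omega
  have h5z : 5 * S.δ ≤ S.d z a := by omega
  have hρ : stepK S a z = unif (T S a z) := by unfold stepK; rw [if_pos h5z]
  have hτ : stepK S a z' = unif (T S a z') := by unfold stepK; rw [if_pos h5']
  refine l1_sub_le_of_overlap (stepK_nonneg S a z) (stepK_nonneg S a z')
    (stepK_mass S a z) (stepK_mass S a z') (w := w) ?_ ?_
  · rw [hρ]; exact unif_apply_ge hwT (card_T_le S a z h5z) (N_pos S)
  · rw [hτ]; exact unif_apply_ge hwT' (card_T_le S a z' h5') (N_pos S)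

/-- The contraction factor. -/
def θ : ℝ := 1 - (N S : ℝ)⁻¹

lemma invN_le_one : (N S : ℝ)⁻¹ ≤ 1 := by
  have hNR : (1:ℝ) ≤ (N S : ℝ) := by exact_mod_cast N_pos S
  have := inv_anti₀ one_pos hNR
  rwa [inv_one] at this

lemma θ_nonneg : 0 ≤ θ S := by
  have := invN_le_one S
  unfold θ; linarith

lemma θ_lt_one : θ S < 1 := by
  have : (0:ℝ) < (N S : ℝ)⁻¹ := inv_pos.mpr (by exact_mod_cast N_pos S)
  unfold θ; linarith

lemma lvl_eq_of_rem {n j : ℕ} (h5n : 5 * S.δ ≤ n) (hj : j ≤ Jn S n) :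
    lvl S n (Jn S n + 1 - j) = 3 * S.δ + 2 * S.δ * j := by
  have hk0 : Jn S n + 1 - j ≠ 0 := by omega
  simp only [lvl, if_neg hk0]
  have : (n - 5 * S.δ) / (2 * S.δ) + 1 - (Jn S n + 1 - j) = j := by
    unfold Jn at hj ⊢
    omega
  rw [this]

lemma walk_tv (a x y : X) (hx5 : 5 * S.δ ≤ S.d x a) (hy5 : 5 * S.δ ≤ S.d y a)
    (t : ℕ) (hGt : 4 * S.δ * t + S.d x y + 24 * S.δ ≤ S.d x a + S.d y a) :
    l1 (F S a x - F S a y) ≤ 2 * θ S ^ t := by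
  have hδ := S.hδ
  have hlin : 4 * S.δ * t = 2 * S.δ * t + 2 * S.δ * t := by ring
  have htx : t ≤ Jn S (S.d x a) := by
    have htri : S.d y a ≤ S.d y x + S.d x a := S.dtri y x a
    have e : S.d y x = S.d x y := S.dsymm y x
    unfold Jn
    rw [Nat.le_div_iff_mul_le (by omega)]
    have e2 : t * (2 * S.δ) = 2 * S.δ * t := by ring
    rw [e2]
    omega
  have hty : t ≤ Jn S (S.d y a) := by
    have htri : S.d x a ≤ S.d x y + S.d y a := S.dtri x y a
    unfold Jn
    rw [Nat.le_div_iff_mul_le (by omega)]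
    have e2 : t * (2 * S.δ) = 2 * S.δ * t := by ring
    rw [e2]
    omega
  -- induction over the coupled steps
  have main : ∀ j, j ≤ t →
      l1 (walk S a x (Jn S (S.d x a) + 1 - (t - j)) -
          walk S a y (Jn S (S.d y a) + 1 - (t - j))) ≤ 2 * θ S ^ j := by
    intro j
    induction j with
    | zero =>
      intro _
      rw [pow_zero, mul_one]
      refine le_trans (l1_sub_le _ _) ?_
      rw [l1_eq_mass (walk_nonneg S a x _), l1_eq_mass (walk_nonneg S a y _),
        walk_mass, walk_mass]
      norm_num
    | succ j ih =>
      intro hj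
      have hj' : j ≤ t := by omega
      have ihj := ih hj'
      have hfx : Jn S (S.d x a) + 1 - (t - (j+1)) = (Jn S (S.d x a) + 1 - (t - j)) + 1 := by
        omega
      have hfy : Jn S (S.d y a) + 1 - (t - (j+1)) = (Jn S (S.d y a) + 1 - (t - j)) + 1 := by
        omega
      rw [hfx, hfy, walk, walk]
      set μ := walk S a x (Jn S (S.d x a) + 1 - (t - j)) with hμ
      set ν := walk S a y (Jn S (S.d y a) + 1 - (t - j)) with hν
      set L : ℕ := 3 * S.δ + 2 * S.δ * (t - j) with hL
      have hLx : lvl S (S.d x a) (Jn S (S.d x a) + 1 - (t - j)) = L :=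
        lvl_eq_of_rem S hx5 (by omega)
      have hLy : lvl S (S.d y a) (Jn S (S.d y a) + 1 - (t - j)) = L :=
        lvl_eq_of_rem S hy5 (by omega)
      have h5L : 5 * S.δ ≤ L := by
        have : 1 ≤ t - j := by omega
        have := Nat.mul_le_mul_left (2 * S.δ) this
        omega
      have hprog : nxt S L + 2 * S.δ = L := by
        have h1 : t - j = (t - j - 1) + 1 := by omega
        rw [hL, h1, nxt_prog]
        ring
      have hNR : (1:ℝ) ≤ (N S : ℝ) := by exact_mod_cast N_pos S
      have hcontr := dobrushin (P := stepK S a) (β := (N S : ℝ)⁻¹)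
        (walk_nonneg S a x _) (walk_nonneg S a y _)
        (by rw [← hμ, ← hν, walk_mass, walk_mass])
        (by positivity)
        (invN_le_one S)
        (fun z hz z' hz' => by
          obtain ⟨hza, hqz⟩ := walk_supp S a x hx5 _ z hz
          obtain ⟨hz'a, hqz'⟩ := walk_supp S a y hy5 _ z' hz'
          rw [hLx] at hza
          rw [hLy] at hz'a
          have hxz2 : S.d x z + L ≤ S.d x a + 2 * S.δ := by omega
          have hyz2 : S.d y z' + L ≤ S.d y a + 2 * S.δ := by omega
          have hmon : 2 * S.δ * (t - j) ≤ 2 * S.δ * t :=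
            Nat.mul_le_mul_left _ (by omega)
          have hGL : 2 * L + S.d x y + 10 * S.δ ≤ S.d x a + S.d y a := by omega
          have hzz' : S.d z z' ≤ 4 * S.δ := fellow S hza hz'a hxz2 hyz2 hGL
          exact step_overlap S hza hz'a h5L hprog hzz')
      calc l1 (push (stepK S a) μ - push (stepK S a) ν)
          ≤ (1 - (N S : ℝ)⁻¹) * l1 (μ - ν) := hcontr
        _ ≤ (1 - (N S : ℝ)⁻¹) * (2 * θ S ^ j) := by
            refine mul_le_mul_of_nonneg_left ihj ?_
            have := θ_nonneg S
            unfold θ at this; linarith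
        _ = 2 * θ S ^ (j + 1) := by rw [pow_succ]; unfold θ; ring
  have := main t (le_refl t)
  simp only [Nat.sub_self] at this
  unfold F
  simpa using this


/-! ### Lower bound : big atoms and disjoint supports -/

lemma F_big_atom {a x : X} (h5 : 5 * S.δ ≤ S.d x a) :
    ∃ w, S.d w a = 3 * S.δ ∧ S.d x w + S.d w a ≤ S.d x a + 2 * S.δ ∧
      (N S : ℝ)⁻¹ ≤ F S a x w := by
  have hδ := S.hδ
  set s := (F S a x).support with hs
  have hsub : s ⊆ ball S a (3 * S.δ) := by
    intro w hw
    rw [mem_ball, S.dsymm]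
    exact le_of_eq (F_supp S h5 w hw).1
  have hcard : s.card ≤ N S :=
    le_trans (Finset.card_le_card hsub) (card_ball_le_N S a (by omega))
  have hne : s.Nonempty := by
    rw [Finset.nonempty_iff_ne_empty]
    intro hemp
    have : mass (F S a x) = 0 := by
      rw [mass_eq_sum (subset_refl _), ← hs, hemp, Finset.sum_empty]
    rw [F_mass] at this
    norm_num at this
  have hsum : ∑ w ∈ s, (N S : ℝ)⁻¹ ≤ ∑ w ∈ s, F S a x w := by
    rw [Finset.sum_const, nsmul_eq_mul, ← mass_eq_sum (subset_refl _), F_mass]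
    rw [← div_eq_mul_inv]
    apply div_le_one_of_le₀
    · exact_mod_cast hcard
    · positivity
  obtain ⟨w, hws, hw⟩ := Finset.exists_le_of_sum_le hne hsum
  obtain ⟨h1, h2⟩ := F_supp S h5 w hws
  exact ⟨w, h1, h2, hw⟩

lemma exists_separated_pair {x y : X} {k : ℕ} (h5k : 5 * S.δ ≤ k)
    (hky : k + 5 * S.δ ≤ S.d x y) :
    ∃ a w, S.d x a = k ∧ k + S.d y a = S.d x y ∧ S.d w a = 3 * S.δ ∧
      (N S : ℝ)⁻¹ ≤ |F S a x w - F S a y w| := by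
  have hδ := S.hδ
  obtain ⟨a, ha1, ha2⟩ := S.geo x y k (by omega)
  have hax : S.d a x = k := by rw [S.dsymm]; exact ha1
  have hay : S.d a y = S.d x y - k := by omega
  have h5x : 5 * S.δ ≤ S.d x a := by rw [ha1]; exact h5k
  have h5y : 5 * S.δ ≤ S.d y a := by rw [S.dsymm]; omega
  obtain ⟨w, hw1, hw2, hw3⟩ := F_big_atom S h5x
  have hzero : F S a y w = 0 := by
    by_contra h0
    have hws : w ∈ (F S a y).support := Finsupp.mem_support_iff.mpr h0
    obtain ⟨h1, h2⟩ := F_supp S h5y w hws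
    -- d x y ≤ d x w + d w y ≤ (d x a - δ) + (d y a - δ)
    have htri : S.d x y ≤ S.d x w + S.d w y := S.dtri x w y
    have hsym : S.d w y = S.d y w := S.dsymm w y
    have hya : S.d y a = S.d x y - k := by rw [S.dsymm]; omega
    omega
  refine ⟨a, w, ha1, by have e := S.dsymm y a; omega, hw1, ?_⟩
  rw [hzero, sub_zero]
  calc (N S : ℝ)⁻¹ ≤ F S a x w := hw3
    _ ≤ |F S a x w| := le_abs_self _

/-! ### Ball growth -/

def K₁ : ℕ := max (S.K 1) 1

lemma card_ball_le_pow (z : X) (r : ℕ) : (ball S z r).card ≤ K₁ S ^ (r + 1) := by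
  induction r generalizing z with
  | zero =>
    have : ball S z 0 ⊆ {z} := by
      intro u hu
      rw [mem_ball] at hu
      rw [Finset.mem_singleton]
      exact (S.dzero z u (by omega)).symm
    calc (ball S z 0).card ≤ 1 := by
          simpa using Finset.card_le_card this
      _ ≤ K₁ S ^ (0+1) := by simp [K₁]
  | succ r ih =>
    have hsub : ball S z (r+1) ⊆ (ball S z r).biUnion (fun w => ball S w 1) := by
      intro u hu
      rw [mem_ball] at hu
      rw [Finset.mem_biUnion]
      rcases Nat.lt_or_ge (S.d z u) (r+1) with hlt | hge
      · exact ⟨u, (mem_ball S).mpr (by omega), (mem_ball S).mpr (by rw [S.dself]; omega)⟩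
      · have hzu : S.d z u = r + 1 := by omega
        obtain ⟨w, hw1, hw2⟩ := S.geo z u r (by omega)
        exact ⟨w, (mem_ball S).mpr (by omega), (mem_ball S).mpr (by omega)⟩
    calc (ball S z (r+1)).card ≤ ((ball S z r).biUnion (fun w => ball S w 1)).card :=
          Finset.card_le_card hsub
      _ ≤ ∑ w ∈ ball S z r, (ball S w 1).card := Finset.card_biUnion_le
      _ ≤ ∑ w ∈ ball S z r, K₁ S := by
          refine Finset.sum_le_sum fun w _ => ?_
          exact le_trans (card_ball S w 1) (le_max_left _ _)
      _ = (ball S z r).card * K₁ S := by rw [Finset.sum_const, smul_eq_mul]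
      _ ≤ K₁ S ^ (r+1) * K₁ S := Nat.mul_le_mul_right _ (ih z)
      _ = K₁ S ^ (r+1+1) := by ring

/-! ### Near-geodesic lemma -/

lemma near_geodesic (x y a : X) :
    ∃ k ≤ S.d x y, ∀ w, S.d x w = k → k + S.d w y = S.d x y →
      2 * S.d w a + S.d x y ≤ S.d x a + S.d y a + 2 * S.δ + 2 := by
  have hδ := S.hδ
  set n := S.d x y with hn
  have htri1 : S.d y a ≤ S.d y x + S.d x a := S.dtri y x a
  have htri2 : S.d x a ≤ S.d x y + S.d y a := S.dtri x y a
  have e0 : S.d y x = S.d x y := S.dsymm y x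
  refine ⟨(S.d x a + n - S.d y a) / 2, by omega, ?_⟩
  intro w hw1 hw2
  have hdm := Nat.div_add_mod (S.d x a + n - S.d y a) 2
  have hmlt := Nat.mod_lt (S.d x a + n - S.d y a) (show 0 < 2 by norm_num)
  have hyp := S.hyp a x y w
  have e1 : S.d a x = S.d x a := S.dsymm a x
  have e2 : S.d a y = S.d y a := S.dsymm a y
  have e3 : S.d y w = S.d w y := S.dsymm y w
  have e4 : S.d a w = S.d w a := S.dsymm a w
  rcases le_total (S.d a x + S.d y w) (S.d a y + S.d x w) with hmx | hmx
  · rw [max_eq_right hmx] at hyp; omega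
  · rw [max_eq_left hmx] at hyp; omega

/-! ### Equivariance -/

variable {φ : X ≃ X}

lemma ball_image (hφ : ∀ u v, S.d (φ u) (φ v) = S.d u v) (z : X) (r : ℕ) :
    ball S (φ z) r = (ball S z r).image φ := by
  ext u
  rw [mem_ball, Finset.mem_image]
  constructor
  · intro hu
    refine ⟨φ.symm u, (mem_ball S).mpr ?_, φ.apply_symm_apply u⟩
    have := hφ z (φ.symm u)
    rw [φ.apply_symm_apply] at this
    omega
  · rintro ⟨v, hv, rfl⟩
    rw [hφ]
    exact (mem_ball S).mp hv

lemma T_image (hφ : ∀ u v, S.d (φ u) (φ v) = S.d u v) (a z : X) :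
    T S (φ a) (φ z) = (T S a z).image φ := by
  ext w
  rw [Finset.mem_image]
  constructor
  · intro hw
    refine ⟨φ.symm w, ?_, φ.apply_symm_apply w⟩
    rw [mem_T] at hw ⊢
    rcases hw with ⟨h1, h2⟩
    rw [hφ] at h1 h2
    have e1 : S.d (φ z) w = S.d z (φ.symm w) := by
      conv_lhs => rw [← φ.apply_symm_apply w]
      rw [hφ]
    have e2 : S.d w (φ a) = S.d (φ.symm w) a := by
      conv_lhs => rw [← φ.apply_symm_apply w]
      rw [hφ]
    rw [e1] at h1
    rw [e2] at h2
    exact ⟨h1, h2⟩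
  · rintro ⟨v, hv, rfl⟩
    rw [mem_T] at hv ⊢
    rw [hφ, hφ, hφ]
    exact hv

lemma mapDomain_unif (s : Finset X) :
    Finsupp.mapDomain φ (unif s) = unif (s.image φ) := by
  unfold unif
  rw [Finsupp.mapDomain_smul, Finsupp.mapDomain_finset_sum]
  rw [Finset.card_image_of_injective s φ.injective]
  congr 1
  rw [Finset.sum_image (fun u _ v _ h => φ.injective h)]
  exact Finset.sum_congr rfl fun w _ => Finsupp.mapDomain_single

lemma mapDomain_stepK (hφ : ∀ u v, S.d (φ u) (φ v) = S.d u v) (a z : X) :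
    Finsupp.mapDomain φ (stepK S a z) = stepK S (φ a) (φ z) := by
  unfold stepK
  rw [hφ]
  split
  · rw [mapDomain_unif, T_image S hφ]
  · rw [Finsupp.mapDomain_single]

lemma mapDomain_push (hφ : ∀ u v, S.d (φ u) (φ v) = S.d u v) (a : X) (μ : X →₀ ℝ) :
    Finsupp.mapDomain φ (push (stepK S a) μ) =
      push (stepK S (φ a)) (Finsupp.mapDomain φ μ) := by
  have h1 : push (stepK S (φ a)) (Finsupp.mapDomain φ μ) =
      μ.sum fun z c => c • stepK S (φ a) (φ z) := by
    unfold push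
    rw [Finsupp.lsum_apply]
    exact Finsupp.sum_mapDomain_index (by simp) (by intro a' b₁ b₂; simp [add_smul])
  rw [h1, push_apply, Finsupp.mapDomain_finset_sum]
  rw [Finsupp.sum]
  refine Finset.sum_congr rfl fun z _ => ?_
  rw [Finsupp.mapDomain_smul, mapDomain_stepK S hφ]

lemma mapDomain_walk (hφ : ∀ u v, S.d (φ u) (φ v) = S.d u v) (a x : X) (k : ℕ) :
    Finsupp.mapDomain φ (walk S a x k) = walk S (φ a) (φ x) k := by
  induction k with
  | zero => rw [walk, walk, Finsupp.mapDomain_single]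
  | succ k ih => rw [walk, walk, mapDomain_push S hφ, ih]

lemma F_equivariant (hφ : ∀ u v, S.d (φ u) (φ v) = S.d u v) (a x b : X) :
    F S (φ a) (φ x) (φ b) = F S a x b := by
  unfold F
  rw [hφ, ← mapDomain_walk S hφ]
  exact Finsupp.mapDomain_apply φ.injective _ b


/-! ### The pair function and its estimates -/

lemma apply_le_mass {μ : X →₀ ℝ} (h : Nonneg μ) (b : X) : μ b ≤ mass μ := by
  rw [mass_eq_sum (s := μ.support ∪ {b}) Finset.subset_union_left]
  exact Finset.single_le_sum (f := fun c => μ c) (fun c _ => h c)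
    (Finset.mem_union_right _ (Finset.mem_singleton_self b))

def fP (x : X) (q : X × X) : ℝ := if 5 * S.δ ≤ S.d x q.1 then F S q.1 x q.2 else 0

lemma fP_nonneg (x : X) (q : X × X) : 0 ≤ fP S x q := by
  unfold fP; split
  · exact F_nonneg S _ _ _
  · exact le_refl 0

lemma fP_le_one (x : X) (q : X × X) : fP S x q ≤ 1 := by
  unfold fP; split
  · calc F S q.1 x q.2 ≤ mass (F S q.1 x) := apply_le_mass (F_nonneg S _ _) _
      _ = 1 := F_mass S _ _
  · norm_num

def tA (x y a : X) : ℕ := (S.d x a + S.d y a - (S.d x y + 24 * S.δ)) / (4 * S.δ)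

lemma pair_diff_bound (x y : X) (q : X × X) :
    |fP S x q - fP S y q| ≤ 2 * θ S ^ tA S x y q.1 := by
  have hδ := S.hδ
  set a := q.1 with ha
  have hcrude : |fP S x q - fP S y q| ≤ 2 := by
    have h1 := fP_nonneg S x q
    have h2 := fP_le_one S x q
    have h3 := fP_nonneg S y q
    have h4 := fP_le_one S y q
    rw [abs_le]; constructor <;> linarith
  by_cases h24 : S.d x a + S.d y a < S.d x y + 24 * S.δ
  · have ht0 : tA S x y a = 0 := by
      unfold tA
      rw [Nat.sub_eq_zero_of_le (le_of_lt h24), Nat.zero_div]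
    rw [ht0, pow_zero, mul_one]
    exact hcrude
  · push_neg at h24
    have htrix : S.d y a ≤ S.d y x + S.d x a := S.dtri y x a
    have htriy : S.d x a ≤ S.d x y + S.d y a := S.dtri x y a
    have e0 : S.d y x = S.d x y := S.dsymm y x
    have hx5 : 5 * S.δ ≤ S.d x a := by omega
    have hy5 : 5 * S.δ ≤ S.d y a := by omega
    set t := tA S x y a with ht
    have hdm : t * (4 * S.δ) ≤ S.d x a + S.d y a - (S.d x y + 24 * S.δ) :=
      Nat.div_mul_le_self _ _
    have e1 : t * (4 * S.δ) = 4 * S.δ * t := by ring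
    have hGt : 4 * S.δ * t + S.d x y + 24 * S.δ ≤ S.d x a + S.d y a := by omega
    have htv := walk_tv S a x y hx5 hy5 t hGt
    have happ : |fP S x q - fP S y q| = |(F S a x - F S a y) q.2| := by
      unfold fP
      rw [← ha, if_pos hx5, if_pos hy5, Finsupp.sub_apply]
    rw [happ]
    exact le_trans (abs_apply_le_l1 _ _) htv

lemma count_small {x y : X} {γ : ℕ → X}
    (hγ : ∀ k ≤ S.d x y, S.d x (γ k) = k ∧ k + S.d (γ k) y = S.d x y)
    (A : Finset X) (m : ℕ) :
    (A.filter (fun a => tA S x y a = m)).card ≤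
      (S.d x y + 1) * K₁ S ^ (2 * S.δ * m + 18 * S.δ + 1) := by
  have hδ := S.hδ
  set n := S.d x y with hn
  set R := 2 * S.δ * m + 18 * S.δ with hR
  have hsub : A.filter (fun a => tA S x y a = m) ⊆
      (Finset.range (n + 1)).biUnion (fun k => ball S (γ k) R) := by
    intro a hain
    rw [Finset.mem_filter] at hain
    obtain ⟨-, hta⟩ := hain
    obtain ⟨k, hk, hprop⟩ := near_geodesic S x y a
    obtain ⟨hg1, hg2⟩ := hγ k hk
    have hb := hprop (γ k) hg1 hg2
    -- from tA = m : d x a + d y a < d x y + 24δ + (m+1)•4δ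
    have hlt : S.d x a + S.d y a - (S.d x y + 24 * S.δ) < (m + 1) * (4 * S.δ) := by
      rw [← hta] at *
      exact (Nat.div_lt_iff_lt_mul (by omega)).mp (by unfold tA; omega)
    rw [Finset.mem_biUnion]
    refine ⟨k, Finset.mem_range.mpr (by omega), (mem_ball S).mpr ?_⟩
    have e1 : (m + 1) * (4 * S.δ) = 4 * (S.δ * m) + 4 * S.δ := by ring
    have e2 : 2 * S.δ * m = 2 * (S.δ * m) := by ring
    omega
  calc (A.filter (fun a => tA S x y a = m)).card
      ≤ ((Finset.range (n + 1)).biUnion (fun k => ball S (γ k) R)).card :=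
        Finset.card_le_card hsub
    _ ≤ ∑ k ∈ Finset.range (n + 1), (ball S (γ k) R).card := Finset.card_biUnion_le
    _ ≤ ∑ k ∈ Finset.range (n + 1), K₁ S ^ (R + 1) :=
        Finset.sum_le_sum fun k _ => card_ball_le_pow S (γ k) R
    _ = (n + 1) * K₁ S ^ (R + 1) := by
        rw [Finset.sum_const, Finset.card_range, smul_eq_mul]

lemma geom_le_two {r : ℝ} (h0 : 0 ≤ r) (h2 : r ≤ 1 / 2) (M : ℕ) :
    ∑ m ∈ Finset.range M, r ^ m ≤ 2 := by
  induction M with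
  | zero => norm_num
  | succ M ih =>
    rw [Finset.sum_range_succ' (fun m => r ^ m) M]
    have : ∑ k ∈ Finset.range M, r ^ (k + 1) = r * ∑ k ∈ Finset.range M, r ^ k := by
      rw [Finset.mul_sum]
      exact Finset.sum_congr rfl fun k _ => by ring
    rw [this, pow_zero]
    nlinarith [Finset.sum_nonneg (fun k (_ : k ∈ Finset.range M) => pow_nonneg h0 k)]


lemma sum_pow_le (x y : X) {p : ℝ} (hp1 : 1 ≤ p)
    (hΘ : θ S ^ p * (K₁ S : ℝ) ^ (2 * S.δ) ≤ 1 / 2)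
    (s : Finset (X × X)) (hs : ∀ q ∈ s, S.d q.1 q.2 ≤ 4 * S.δ) :
    ∑ q ∈ s, |fP S x q - fP S y q| ^ p ≤
      2 ^ p * (K₁ S : ℝ) ^ (4 * S.δ + 1) *
        (((S.d x y : ℝ) + 1) * (K₁ S : ℝ) ^ (18 * S.δ + 1) * 2) := by
  classical
  have hθ0 : 0 ≤ θ S := θ_nonneg S
  have hp0 : (0:ℝ) < p := by linarith
  set Θ : ℝ := θ S ^ p with hΘdef
  have hΘ0 : 0 ≤ Θ := Real.rpow_nonneg hθ0 p
  have hK0 : (0:ℝ) ≤ (K₁ S : ℝ) := Nat.cast_nonneg _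
  have hcomm : ∀ t : ℕ, (θ S ^ t : ℝ) ^ p = Θ ^ t := by
    intro t
    rw [hΘdef, ← Real.rpow_natCast (θ S) t, ← Real.rpow_mul hθ0, mul_comm,
      Real.rpow_mul hθ0, Real.rpow_natCast]
  -- pointwise bound
  have hpoint : ∀ q ∈ s, |fP S x q - fP S y q| ^ p ≤ 2 ^ p * Θ ^ tA S x y q.1 := by
    intro q _
    calc |fP S x q - fP S y q| ^ p ≤ (2 * θ S ^ tA S x y q.1) ^ p :=
          Real.rpow_le_rpow (abs_nonneg _) (pair_diff_bound S x y q) (le_of_lt hp0)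
      _ = 2 ^ p * (θ S ^ tA S x y q.1) ^ p :=
          Real.mul_rpow (by norm_num) (pow_nonneg hθ0 _)
      _ = 2 ^ p * Θ ^ tA S x y q.1 := by rw [hcomm]
  have h2p : (0:ℝ) ≤ 2 ^ p := Real.rpow_nonneg (by norm_num) p
  calc ∑ q ∈ s, |fP S x q - fP S y q| ^ p
      ≤ ∑ q ∈ s, 2 ^ p * Θ ^ tA S x y q.1 := Finset.sum_le_sum hpoint
    _ = 2 ^ p * ∑ q ∈ s, Θ ^ tA S x y q.1 := by rw [Finset.mul_sum]
    _ ≤ 2 ^ p * ((K₁ S : ℝ) ^ (4 * S.δ + 1) *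
          (((S.d x y : ℝ) + 1) * (K₁ S : ℝ) ^ (18 * S.δ + 1) * 2)) := by
        refine mul_le_mul_of_nonneg_left ?_ h2p
        -- group by first coordinate
        set A := s.image Prod.fst with hA
        have hmaps : ∀ q ∈ s, q.1 ∈ A := fun q hq => Finset.mem_image_of_mem _ hq
        rw [← Finset.sum_fiberwise_of_maps_to hmaps (fun q => Θ ^ tA S x y q.1)]
        have hfiber : ∀ a ∈ A,
            ∑ q ∈ s.filter (fun q => q.1 = a), Θ ^ tA S x y q.1
              ≤ (K₁ S : ℝ) ^ (4 * S.δ + 1) * Θ ^ tA S x y a := by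
          intro a _
          have hconst : ∀ q ∈ s.filter (fun q => q.1 = a),
              Θ ^ tA S x y q.1 = Θ ^ tA S x y a := by
            intro q hq
            rw [(Finset.mem_filter.mp hq).2]
          rw [Finset.sum_congr rfl hconst, Finset.sum_const, nsmul_eq_mul]
          refine mul_le_mul_of_nonneg_right ?_ (pow_nonneg hΘ0 _)
          have hcard : (s.filter (fun q => q.1 = a)).card ≤ (ball S a (4 * S.δ)).card := by
            refine Finset.card_le_card_of_injOn (fun q => q.2) ?_ ?_
            · intro q hq
              rw [Finset.mem_coe, Finset.mem_filter] at hq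
              rw [Finset.mem_coe, mem_ball, ← hq.2]
              exact hs q hq.1
            · intro q hq q' hq' hqq'
              simp only [Finset.coe_filter, Set.mem_setOf_eq] at hq hq'
              exact Prod.ext (hq.2.trans hq'.2.symm) hqq'
          calc ((s.filter (fun q => q.1 = a)).card : ℝ)
              ≤ ((ball S a (4 * S.δ)).card : ℝ) := by exact_mod_cast hcard
            _ ≤ (K₁ S : ℝ) ^ (4 * S.δ + 1) := by exact_mod_cast card_ball_le_pow S a _
        calc ∑ a ∈ A, ∑ q ∈ s.filter (fun q => q.1 = a), Θ ^ tA S x y q.1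
            ≤ ∑ a ∈ A, (K₁ S : ℝ) ^ (4 * S.δ + 1) * Θ ^ tA S x y a :=
              Finset.sum_le_sum hfiber
          _ = (K₁ S : ℝ) ^ (4 * S.δ + 1) * ∑ a ∈ A, Θ ^ tA S x y a := by
              rw [Finset.mul_sum]
          _ ≤ (K₁ S : ℝ) ^ (4 * S.δ + 1) *
                (((S.d x y : ℝ) + 1) * (K₁ S : ℝ) ^ (18 * S.δ + 1) * 2) := by
              refine mul_le_mul_of_nonneg_left ?_ (pow_nonneg hK0 _)
              -- group by the value of tA
              set M := A.sup (tA S x y) with hM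
              have hmaps2 : ∀ a ∈ A, tA S x y a ∈ Finset.range (M + 1) := by
                intro a ha
                rw [Finset.mem_range]
                exact Nat.lt_succ_of_le (Finset.le_sup ha)
              rw [← Finset.sum_fiberwise_of_maps_to hmaps2 (fun a => Θ ^ tA S x y a)]
              -- the geodesic points
              set γ : ℕ → X := fun k =>
                if h : k ≤ S.d x y then (S.geo x y k h).choose else x with hγdef
              have hγ : ∀ k ≤ S.d x y, S.d x (γ k) = k ∧ k + S.d (γ k) y = S.d x y := by
                intro k hk
                rw [hγdef]
                simp only [dif_pos hk]
                exact (S.geo x y k hk).choose_spec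
              have hfib2 : ∀ m ∈ Finset.range (M + 1),
                  ∑ a ∈ A.filter (fun a => tA S x y a = m), Θ ^ tA S x y a
                    ≤ ((S.d x y : ℝ) + 1) * (K₁ S : ℝ) ^ (18 * S.δ + 1) *
                        ((K₁ S : ℝ) ^ (2 * S.δ) * Θ) ^ m := by
                intro m _
                have hconst : ∀ a ∈ A.filter (fun a => tA S x y a = m),
                    Θ ^ tA S x y a = Θ ^ m := by
                  intro a ha
                  rw [(Finset.mem_filter.mp ha).2]
                rw [Finset.sum_congr rfl hconst, Finset.sum_const, nsmul_eq_mul]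
                have hcnt := count_small S hγ A m
                calc ((A.filter (fun a => tA S x y a = m)).card : ℝ) * Θ ^ m
                    ≤ (((S.d x y + 1) * K₁ S ^ (2 * S.δ * m + 18 * S.δ + 1) : ℕ) : ℝ) * Θ ^ m := by
                      refine mul_le_mul_of_nonneg_right ?_ (pow_nonneg hΘ0 _)
                      exact_mod_cast hcnt
                  _ = ((S.d x y : ℝ) + 1) * (K₁ S : ℝ) ^ (18 * S.δ + 1) *
                        ((K₁ S : ℝ) ^ (2 * S.δ) * Θ) ^ m := by
                      push_cast
                      have e : 2 * S.δ * m + 18 * S.δ + 1 = 2 * S.δ * m + (18 * S.δ + 1) := by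
                        omega
                      rw [e, pow_add (K₁ S : ℝ) (2 * S.δ * m), pow_mul, mul_pow]
                      ring
              calc ∑ m ∈ Finset.range (M + 1),
                    ∑ a ∈ A.filter (fun a => tA S x y a = m), Θ ^ tA S x y a
                  ≤ ∑ m ∈ Finset.range (M + 1),
                      ((S.d x y : ℝ) + 1) * (K₁ S : ℝ) ^ (18 * S.δ + 1) *
                        ((K₁ S : ℝ) ^ (2 * S.δ) * Θ) ^ m := Finset.sum_le_sum hfib2
                _ = ((S.d x y : ℝ) + 1) * (K₁ S : ℝ) ^ (18 * S.δ + 1) *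
                      ∑ m ∈ Finset.range (M + 1), ((K₁ S : ℝ) ^ (2 * S.δ) * Θ) ^ m := by
                    rw [Finset.mul_sum]
                _ ≤ ((S.d x y : ℝ) + 1) * (K₁ S : ℝ) ^ (18 * S.δ + 1) * 2 := by
                    refine mul_le_mul_of_nonneg_left ?_ ?_
                    · refine geom_le_two ?_ ?_ _
                      · positivity
                      · rw [mul_comm]; exact hΘ
                    · positivity
    _ = 2 ^ p * (K₁ S : ℝ) ^ (4 * S.δ + 1) *
          (((S.d x y : ℝ) + 1) * (K₁ S : ℝ) ^ (18 * S.δ + 1) * 2) := by ring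

end AL

/-- Corollary 4.2 of Alvarez–Lafforgue. A group `G` acting isometrically and metrically
properly on a nonempty good discrete hyperbolic space `(X, d)` (δ-hyperbolic for an
integer `δ ≥ 1`) admits, for all sufficiently large real `p`, a proper cocycle
`b : G → ℓ^p(X^{≤4δ})` for the permutation representation. -/
theorem exists_proper_lp_cocycle_good_discrete_hyperbolic
    {X : Type*} [MetricSpace X] [Nonempty X] {G : Type*} [Group G] [MulAction G X]
    (δ : ℤ) (hδ : 1 ≤ δ)
    (hnat : ∀ x y : X, ∃ n : ℕ, dist x y = n)
    (hgeo : ∀ x y : X, ∀ k : ℕ, (k : ℝ) ≤ dist x y →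
      ∃ z : X, dist x z = k ∧ dist z y = dist x y - k)
    (hulf : ∀ r : ℝ, ∃ K : ℕ, ∀ x : X,
      (Metric.closedBall x r).Finite ∧ Nat.card (Metric.closedBall x r) ≤ K)
    (hhyp : ∀ x₁ x₂ x₃ x₄ : X, dist x₁ x₄ + dist x₂ x₃ ≤
      max (dist x₁ x₂ + dist x₃ x₄) (dist x₁ x₃ + dist x₂ x₄) + (δ : ℝ))
    (hiso : ∀ (g : G) (x y : X), dist (g • x) (g • y) = dist x y)
    (hproper : ∀ (o : X) (M : ℝ), {g : G | dist o (g • o) ≤ M}.Finite) :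
    ∃ p₀ : ℝ, 1 ≤ p₀ ∧ ∀ p : ℝ, p₀ ≤ p →
      ∃ b : G → lp (fun _ : {q : X × X // dist q.1 q.2 ≤ 4 * (δ : ℝ)} => ℝ)
          (ENNReal.ofReal p),
        -- cocycle identity `b (g h) = b g + π g (b h)` where `(π g f) (x, y) = f (g⁻¹ x, g⁻¹ y)`
        (∀ g h : G, ∀ q : {q : X × X // dist q.1 q.2 ≤ 4 * (δ : ℝ)},
          (b (g * h) : _ → ℝ) q = (b g : _ → ℝ) q +
            (b h : _ → ℝ) ⟨(g⁻¹ • q.val.1, g⁻¹ • q.val.2), by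
              rw [hiso]; exact q.property⟩) ∧
        -- properness of the cocycle
        (∀ M : ℝ, 0 ≤ M → {g : G | ‖b g‖ ≤ M}.Finite) := by
  classical
  obtain ⟨δn, hδn1, hδcast⟩ : ∃ δn : ℕ, 1 ≤ δn ∧ ((δn : ℕ) : ℝ) = (δ : ℝ) :=
    ⟨δ.toNat, by omega, by exact_mod_cast Int.toNat_of_nonneg (by omega)⟩
  choose dN hdN using hnat
  choose KK hKK using hulf
  have hdsymm : ∀ x y : X, dN x y = dN y x := by
    intro x y
    have h1 := hdN x y
    have h2 := hdN y x
    rw [dist_comm] at h1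
    exact_mod_cast h1.symm.trans h2
  have hdself : ∀ x : X, dN x x = 0 := by
    intro x
    have h := hdN x x
    rw [dist_self] at h
    exact_mod_cast h.symm
  have hdtri : ∀ x y z : X, dN x z ≤ dN x y + dN y z := by
    intro x y z
    have h := dist_triangle x y z
    rw [hdN, hdN, hdN] at h
    exact_mod_cast h
  have hdzero : ∀ x y : X, dN x y = 0 → x = y := by
    intro x y h
    have h2 := hdN x y
    rw [h] at h2
    exact dist_eq_zero.mp (by exact_mod_cast h2)
  have hhyp' : ∀ x₁ x₂ x₃ x₄ : X,
      dN x₁ x₄ + dN x₂ x₃ ≤ max (dN x₁ x₂ + dN x₃ x₄) (dN x₁ x₃ + dN x₂ x₄) + δn := by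
    intro a b c d'
    have h := hhyp a b c d'
    rw [hdN, hdN, hdN, hdN, hdN, hdN, ← hδcast] at h
    exact_mod_cast h
  have hgeo' : ∀ x y : X, ∀ k ≤ dN x y, ∃ z, dN x z = k ∧ k + dN z y = dN x y := by
    intro x y k hk
    obtain ⟨z, hz1, hz2⟩ := hgeo x y k (by rw [hdN]; exact_mod_cast hk)
    have hz1' : dN x z = k := by
      have := hdN x z
      rw [this] at hz1
      exact_mod_cast hz1
    have hz2' : k + dN z y = dN x y := by
      have h3 := hdN z y
      have h4 := hdN x y
      rw [h3, h4] at hz2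
      have : (k : ℝ) + dN z y = dN x y := by linarith
      exact_mod_cast this
    exact ⟨z, hz1', hz2'⟩
  have hballeq : ∀ (x : X) (r : ℕ), {y : X | dN x y ≤ r} = Metric.closedBall x (r : ℝ) := by
    intro x r
    ext y
    rw [Metric.mem_closedBall, Set.mem_setOf_eq, dist_comm, hdN]
    exact ⟨fun h => by exact_mod_cast h, fun h => by exact_mod_cast h⟩
  have hfin : ∀ (x : X) (r : ℕ), {y : X | dN x y ≤ r}.Finite := by
    intro x r
    rw [hballeq]
    exact (hKK r x).1
  have hcardK : ∀ (x : X) (r : ℕ), ((hfin x r).toFinset).card ≤ KK r := by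
    intro x r
    rw [← Nat.card_eq_card_finite_toFinset]
    have he : Nat.card {y : X | dN x y ≤ r} = Nat.card (Metric.closedBall x (r : ℝ)) := by
      rw [hballeq]
    rw [he]
    exact (hKK r x).2
  set S : AL.Good X :=
    ⟨δn, hδn1, dN, hdsymm, hdself, hdtri, hhyp', hgeo', hdzero, hfin,
      fun r => KK r, hcardK⟩ with hS
  have hθ0 := AL.θ_nonneg S
  have hθ1 := AL.θ_lt_one S
  have hK₁1 : 1 ≤ AL.K₁ S := le_max_right _ 1
  have hK₁pos : (0:ℝ) < (AL.K₁ S : ℝ) := by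
    exact_mod_cast lt_of_lt_of_le (by norm_num : (0:ℕ) < 1) hK₁1
  obtain ⟨m₀, hm₀⟩ := exists_pow_lt_of_lt_one
    (x := 1 / (2 * (AL.K₁ S : ℝ) ^ (2 * S.δ))) (by positivity) hθ1
  refine ⟨max 1 (m₀ : ℝ), le_max_left _ _, ?_⟩
  intro p hp
  have hp1 : (1:ℝ) ≤ p := le_trans (le_max_left _ _) hp
  have hp0 : (0:ℝ) < p := by linarith
  have hΘp : AL.θ S ^ p * (AL.K₁ S : ℝ) ^ (2 * S.δ) ≤ 1 / 2 := by
    have hKpow : (0:ℝ) < (AL.K₁ S : ℝ) ^ (2 * S.δ) := by positivity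
    rcases eq_or_lt_of_le hθ0 with h0 | h0
    · rw [← h0, Real.zero_rpow (by linarith : p ≠ 0), zero_mul]
      norm_num
    · have h1 : AL.θ S ^ p ≤ AL.θ S ^ ((m₀ : ℝ)) :=
        Real.rpow_le_rpow_of_exponent_ge h0 (le_of_lt hθ1)
          (le_trans (le_max_right 1 (m₀:ℝ)) hp)
      rw [Real.rpow_natCast] at h1
      calc AL.θ S ^ p * (AL.K₁ S : ℝ) ^ (2 * S.δ)
          ≤ AL.θ S ^ m₀ * (AL.K₁ S : ℝ) ^ (2 * S.δ) :=
            mul_le_mul_of_nonneg_right h1 (le_of_lt hKpow)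
        _ ≤ (1 / (2 * (AL.K₁ S : ℝ) ^ (2 * S.δ))) * (AL.K₁ S : ℝ) ^ (2 * S.δ) :=
            mul_le_mul_of_nonneg_right (le_of_lt hm₀) (le_of_lt hKpow)
        _ = 1 / 2 := by field_simp
  -- stage 2
  have hSδ : S.δ = δn := rfl
  have hSd : S.d = dN := rfl
  set o : X := Classical.arbitrary X with ho
  have hdiso : ∀ (g : G) (u v : X), dN (g • u) (g • v) = dN u v := by
    intro g u v
    have h := hiso g u v
    rw [hdN, hdN] at h
    exact_mod_cast h
  have hfPequi : ∀ (g : G) (x a c : X),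
      AL.fP S (g • x) (g • a, g • c) = AL.fP S x (a, c) := by
    intro g x a c
    have hφ : ∀ u v, S.d ((MulAction.toPerm g) u) ((MulAction.toPerm g) v) = S.d u v := by
      intro u v
      simp only [MulAction.toPerm_apply]
      exact hdiso g u v
    have hFe := AL.F_equivariant S (φ := MulAction.toPerm g) hφ a x c
    simp only [MulAction.toPerm_apply] at hFe
    unfold AL.fP
    simp only
    rw [show S.d (g • x) (g • a) = S.d x a from hdiso g x a]
    split
    · exact hFe
    · rfl
  have hQd : ∀ q : {q : X × X // dist q.1 q.2 ≤ 4 * (δ : ℝ)},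
      dN q.val.1 q.val.2 ≤ 4 * δn := by
    intro q
    have h := q.property
    rw [hdN] at h
    have h2 : (dN q.val.1 q.val.2 : ℝ) ≤ ((4 * δn : ℕ) : ℝ) := by
      push_cast
      rw [hδcast]
      exact h
    exact_mod_cast h2
  set P : ENNReal := ENNReal.ofReal p with hP
  have hPto : P.toReal = p := ENNReal.toReal_ofReal (le_of_lt hp0)
  set bfun : G → {q : X × X // dist q.1 q.2 ≤ 4 * (δ : ℝ)} → ℝ :=
    fun g q => AL.fP S (g • o) q.val - AL.fP S o q.val with hbfun
  have hmem : ∀ g, Memℓp (bfun g) P := by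
    intro g
    refine memℓp_gen' (C := 2 ^ p * (AL.K₁ S : ℝ) ^ (4 * S.δ + 1) *
      (((S.d (g • o) o : ℝ) + 1) * (AL.K₁ S : ℝ) ^ (18 * S.δ + 1) * 2)) ?_
    intro sQ
    have hsk : ∀ qv ∈ sQ.image Subtype.val, S.d qv.1 qv.2 ≤ 4 * S.δ := by
      intro qv hqv
      rw [Finset.mem_image] at hqv
      obtain ⟨q, _, rfl⟩ := hqv
      exact hQd q
    have hbound := AL.sum_pow_le S (g • o) o hp1 hΘp (sQ.image Subtype.val) hsk
    have heq : ∑ q ∈ sQ, ‖bfun g q‖ ^ P.toReal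
        = ∑ qv ∈ sQ.image Subtype.val,
            |AL.fP S (g • o) qv - AL.fP S o qv| ^ p := by
      rw [Finset.sum_image (fun u _ v _ huv => Subtype.ext huv)]
      refine Finset.sum_congr rfl fun q _ => ?_
      rw [hPto, hbfun, Real.norm_eq_abs]
    rw [heq]
    exact hbound
  set b : G → lp (fun _ : {q : X × X // dist q.1 q.2 ≤ 4 * (δ : ℝ)} => ℝ) P :=
    fun g => ⟨bfun g, hmem g⟩ with hb
  refine ⟨b, ?_, ?_⟩
  · -- cocycle identity
    intro g h q
    show bfun (g * h) q = bfun g q + bfun h ⟨(g⁻¹ • q.val.1, g⁻¹ • q.val.2), _⟩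
    obtain ⟨⟨a, c⟩, hq⟩ := q
    simp only [hbfun]
    have e1 : AL.fP S (h • o) (g⁻¹ • a, g⁻¹ • c) = AL.fP S ((g * h) • o) (a, c) := by
      have h1 := hfPequi g (h • o) (g⁻¹ • a) (g⁻¹ • c)
      rw [smul_inv_smul, smul_inv_smul, ← mul_smul] at h1
      exact h1.symm
    have e2 : AL.fP S o (g⁻¹ • a, g⁻¹ • c) = AL.fP S (g • o) (a, c) := by
      have h1 := hfPequi g o (g⁻¹ • a) (g⁻¹ • c)
      rw [smul_inv_smul, smul_inv_smul] at h1
      exact h1.symm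
    rw [e1, e2]
    ring
  · -- properness
    intro M hM
    have hNR : (1:ℝ) ≤ (AL.N S : ℝ) := by exact_mod_cast AL.N_pos S
    set Cr : ℝ := M ^ p * (AL.N S : ℝ) ^ p + (10 * (δn:ℝ) + 1) with hCr
    refine Set.Finite.subset (hproper o Cr) ?_
    intro g hg
    rw [Set.mem_setOf_eq] at hg ⊢
    set n : ℕ := S.d (g • o) o with hn
    have hdist : dist o (g • o) = (n : ℝ) := by
      rw [dist_comm, hdN]
    have hMN : (0:ℝ) ≤ M ^ p * (AL.N S : ℝ) ^ p := by positivity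
    rcases le_or_gt (n : ℝ) (10 * (δn:ℝ) + 1) with hsmall | hbig
    · rw [hdist]
      linarith
    · have hnN : 10 * δn + 1 < n := by exact_mod_cast hbig
      set I := Finset.Icc (5 * δn) (n - 5 * δn) with hI
      have hpair : ∀ k ∈ I,
          ∃ qk : {q : X × X // dist q.1 q.2 ≤ 4 * (δ : ℝ)},
            S.d (g • o) qk.val.1 = k ∧ (AL.N S : ℝ)⁻¹ ≤ |bfun g qk| := by
        intro k hk
        rw [Finset.mem_Icc] at hk
        have hk1 : 5 * S.δ ≤ k := by rw [hSδ]; exact hk.1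
        have hk2 : k + 5 * S.δ ≤ S.d (g • o) o := by rw [hSδ]; omega
        obtain ⟨a, w, ha1, ha2, hw1, hbd⟩ :=
          AL.exists_separated_pair S (x := g • o) (y := o) hk1 hk2
        have hwa : dist a w ≤ 4 * (δ : ℝ) := by
          rw [hdN]
          have e : dN a w = 3 * δn := by
            rw [hdsymm]
            exact hw1
          rw [e]
          have e2 : ((3 * δn : ℕ) : ℝ) = 3 * (δ : ℝ) := by push_cast; rw [hδcast]
          rw [e2]
          have : (1:ℝ) ≤ (δ : ℝ) := by exact_mod_cast hδ
          linarith
        refine ⟨⟨(a, w), hwa⟩, ha1, ?_⟩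
        have hoa : 5 * S.δ ≤ S.d o a := by omega
        have hfx : AL.fP S (g • o) (a, w) = AL.F S a (g • o) w := by
          unfold AL.fP
          rw [if_pos (show 5 * S.δ ≤ S.d (g • o) (a, w).1 from by
            show 5 * S.δ ≤ S.d (g • o) a
            omega)]
        have hfy : AL.fP S o (a, w) = AL.F S a o w := by
          unfold AL.fP
          rw [if_pos (show 5 * S.δ ≤ S.d o (a, w).1 from hoa)]
        rw [hbfun]
        simp only
        rw [hfx, hfy]
        exact hbd
      choose κ hκ1 hκ2 using hpair
      have hinj : ∀ u ∈ I.attach, ∀ v ∈ I.attach,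
          κ u.val u.property = κ v.val v.property → u = v := by
        intro u _ v _ huv
        have h1 := hκ1 u.val u.property
        have h2 := hκ1 v.val v.property
        rw [huv] at h1
        exact Subtype.ext (h1.symm.trans h2)
      set s' := I.attach.image (fun k => κ k.val k.property) with hs'
      haveI : Fact (1 ≤ P) := ⟨by rw [hP]; exact ENNReal.one_le_ofReal.mpr hp1⟩
      have hsummable : Summable fun q => ‖bfun g q‖ ^ P.toReal :=
        (hmem g).summable (by rw [hPto]; exact hp0)
      have hsum2 : ∑ q ∈ s', ‖bfun g q‖ ^ P.toReal ≤ ‖b g‖ ^ P.toReal := by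
        rw [lp.norm_rpow_eq_tsum (by rw [hPto]; exact hp0) (b g)]
        exact Summable.sum_le_tsum s' (fun q _ => Real.rpow_nonneg (norm_nonneg _) _) hsummable
      have hsum1 : (I.card : ℝ) * ((AL.N S : ℝ)⁻¹) ^ p ≤ ∑ q ∈ s', ‖bfun g q‖ ^ P.toReal := by
        rw [hs', Finset.sum_image hinj]
        have hterm : ∀ u ∈ I.attach,
            ((AL.N S : ℝ)⁻¹) ^ p ≤ ‖bfun g (κ u.val u.property)‖ ^ P.toReal := by
          intro u _
          rw [hPto, Real.norm_eq_abs]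
          exact Real.rpow_le_rpow (by positivity) (hκ2 u.val u.property) (le_of_lt hp0)
        calc (I.card : ℝ) * ((AL.N S : ℝ)⁻¹) ^ p
            = ∑ _u ∈ I.attach, ((AL.N S : ℝ)⁻¹) ^ p := by
              rw [Finset.sum_const, Finset.card_attach, nsmul_eq_mul]
          _ ≤ ∑ u ∈ I.attach, ‖bfun g (κ u.val u.property)‖ ^ P.toReal :=
              Finset.sum_le_sum hterm
      have hnormp : ‖b g‖ ^ P.toReal ≤ M ^ p := by
        rw [hPto]
        exact Real.rpow_le_rpow (norm_nonneg _) hg hp0.le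
      have hNp : (0:ℝ) < (AL.N S : ℝ) ^ p := Real.rpow_pos_of_pos (by linarith) p
      have hchain : (I.card : ℝ) * ((AL.N S : ℝ)⁻¹) ^ p ≤ M ^ p := by
        calc (I.card : ℝ) * ((AL.N S : ℝ)⁻¹) ^ p ≤ ∑ q ∈ s', ‖bfun g q‖ ^ P.toReal := hsum1
          _ ≤ ‖b g‖ ^ P.toReal := hsum2
          _ ≤ M ^ p := hnormp
      have hinv : ((AL.N S : ℝ)⁻¹) ^ p = ((AL.N S : ℝ) ^ p)⁻¹ :=
        Real.inv_rpow (by linarith) p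
      have hcard : (I.card : ℝ) ≤ M ^ p * (AL.N S : ℝ) ^ p := by
        rw [hinv] at hchain
        have := mul_le_mul_of_nonneg_right hchain (le_of_lt hNp)
        rw [mul_assoc, inv_mul_cancel₀ (ne_of_gt hNp), mul_one] at this
        exact this
      have hcardn : n ≤ I.card + 10 * δn := by
        rw [hI, Nat.card_Icc]
        omega
      rw [hdist]
      have : (n:ℝ) ≤ (I.card : ℝ) + 10 * (δn:ℝ) := by exact_mod_cast hcardn
      linarith
end
end

section
/- Let (X,d) be a metric space which is δ-hyperbolic for some real δ ≥ 0, weakly δ₀-geodesic for some real δ₀ ≥ 0, and uniformly locally finite, equipped with an isometric action of a group G. Then there exists a G-equivariant map assigning to each pair (x,a) ∈ X × X a finitely supported probability measure μ_x(a) on X (G-equivariance means μ_{g·x}(g·a)(g·y) = μ_x(a)(y)) such that: (i) there exists R ∈ ℕ with supp μ_x(a) contained in the closed ball B(a,R) for all x,a ∈ X; (ii) there exists a real ε > 0 such that for every k ∈ ℕ there is C > 0 with: for all x, x', a ∈ X, if d(x,x') ≤ k then ‖μ_x(a) − μ_{x'}(a)‖₁ ≤ C·exp(−ε·d(x,a));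 (iii) there exist a real η > 0 and N ∈ ℕ such that for all x,x' ∈ X with d(x,x') ≥ N, the set of a ∈ X for which supp μ_x(a) and supp μ_{x'}(a) are disjoint is finite of cardinality at least η·d(x,x'). -/
namespace ALaux

open Classical in
noncomputable def dirac {X : Type*} (x : X) : X → ℝ := fun y => if y = x then 1 else 0

variable {X : Type*} [MetricSpace X]

/-- target level: largest multiple of `r` strictly below `dist x a` (when `r > 0`). -/
noncomputable def lev (r : ℝ) (x a : X) : ℝ := r * ((⌈dist x a / r⌉ : ℤ) - 1)

/-- step set from `x` toward `a`. -/
def SS (r δ₂ : ℝ) (x a : X) : Set X :=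
  {z | dist z a ≤ lev r x a ∧ dist x z ≤ dist x a - lev r x a + δ₂}

noncomputable def F (r δ₂ : ℝ) : ℕ → X → X → X → ℝ
  | 0 => fun x _ y => dirac x y
  | n+1 => fun x a y =>
      if dist x a ≤ 2*r then dirac x y
      else (Nat.card (SS r δ₂ x a) : ℝ)⁻¹ * ∑ᶠ z ∈ SS r δ₂ x a, F r δ₂ n z a y

noncomputable def mval (r : ℝ) (x a : X) : ℕ := (⌈dist x a / r⌉).toNat

noncomputable def muAL (r δ₂ : ℝ) (x a : X) : X → ℝ := F r δ₂ (mval r x a) x a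

section basic
variable {r δ₂ : ℝ}

lemma ceil_nonneg' (x a : X) (hr : 0 < r) : (0:ℤ) ≤ ⌈dist x a / r⌉ :=
  Int.ceil_nonneg (div_nonneg dist_nonneg hr.le)

lemma lev_lt (hr : 0 < r) (x a : X) : lev r x a < dist x a := by
  have h2 : ((⌈dist x a / r⌉ : ℤ) : ℝ) - 1 < dist x a / r := by
    have := Int.ceil_lt_add_one (dist x a / r); linarith
  have h3 : r * (((⌈dist x a / r⌉ : ℤ) : ℝ) - 1) < r * (dist x a / r) :=
    (mul_lt_mul_iff_right₀ hr).mpr h2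
  have h4 : r * (dist x a / r) = dist x a := by field_simp
  unfold lev; linarith
lemma le_lev_add (hr : 0 < r) (x a : X) : dist x a ≤ lev r x a + r := by
  have h2 : dist x a / r ≤ ((⌈dist x a / r⌉ : ℤ) : ℝ) := Int.le_ceil _
  have h3 : r * (dist x a / r) ≤ r * ((⌈dist x a / r⌉ : ℤ) : ℝ) := (mul_le_mul_iff_right₀ hr).mpr h2
  have h4 : r * (dist x a / r) = dist x a := by field_simp
  unfold lev; nlinarith

lemma mval_eq (hr : 0 < r) (x a : X) (j : ℕ) (h1 : r * j < dist x a) (h2 : dist x a ≤ r * (j+1)) :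
    mval r x a = j + 1 := by
  unfold mval
  have hc : ⌈dist x a / r⌉ = (j : ℤ) + 1 := by
    rw [Int.ceil_eq_iff]
    constructor
    · push_cast; rw [lt_div_iff₀ hr]; linarith
    · push_cast; rw [div_le_iff₀ hr]; linarith
  omega

lemma lev_eq_of_mval (hr : 0 < r) (x a : X) (j : ℕ) (h : mval r x a = j + 1) :
    lev r x a = r * j := by
  have h0 := ceil_nonneg' (r := r) x a hr
  unfold mval at h
  have : ⌈dist x a / r⌉ = (j : ℤ) + 1 := by omega
  unfold lev; rw [this]; push_cast; ring

lemma two_r_lt_iff (hr : 0 < r) (x a : X) : (2*r < dist x a) ↔ 3 ≤ mval r x a := by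
  have h0 := ceil_nonneg' (r := r) x a hr
  constructor
  · intro h
    have : (2:ℝ) < dist x a / r := by rw [lt_div_iff₀ hr]; linarith
    have h3 : (2:ℤ) < ⌈dist x a / r⌉ := Int.lt_ceil.mpr (by exact_mod_cast this)
    unfold mval; omega
  · intro h
    unfold mval at h
    have h3 : (2:ℤ) < ⌈dist x a / r⌉ := by omega
    have : ((2:ℤ):ℝ) < dist x a / r := Int.lt_ceil.mp h3
    have : (2:ℝ) < dist x a / r := by exact_mod_cast this
    rw [lt_div_iff₀ hr] at this; linarith

/-- elements of the step set: slab bounds, proximity, and mval decrement. -/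
lemma SS_mem {x a z : X} (hz : z ∈ SS r δ₂ x a) :
    dist z a ≤ lev r x a ∧ dist x z ≤ dist x a - lev r x a + δ₂ := hz

lemma SS_lower {x a z : X} (hz : z ∈ SS r δ₂ x a) : lev r x a - δ₂ ≤ dist z a := by
  have h := dist_triangle x z a
  have := hz.2
  have : dist x a ≤ dist x z + dist z a := dist_triangle x z a
  linarith [hz.2]

lemma lev_ge_two_r (hr : 0 < r) {x a : X} (h : 2*r < dist x a) : 2*r ≤ lev r x a := by
  obtain ⟨m3, hm3⟩ : ∃ m3, mval r x a = m3 + 3 := by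
    have := (two_r_lt_iff hr x a).mp h
    exact ⟨mval r x a - 3, by omega⟩
  have := lev_eq_of_mval hr x a (m3 + 2) (by omega)
  rw [this]; push_cast; nlinarith

lemma SS_mval (hr : 0 < r) (hδ₂ : 0 ≤ δ₂) (hδ₂r : δ₂ < r) {x a z : X}
    (h2r : 2*r < dist x a) (hz : z ∈ SS r δ₂ x a) :
    mval r z a + 1 = mval r x a := by
  obtain ⟨m1, hm1⟩ : ∃ m1, mval r x a = m1 + 1 := by
    have := (two_r_lt_iff hr x a).mp h2r
    exact ⟨mval r x a - 1, by omega⟩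
  have hlev : lev r x a = r * m1 := lev_eq_of_mval hr x a m1 hm1
  have hm1pos : 1 ≤ m1 := by
    have h3 := (two_r_lt_iff hr x a).mp h2r; omega
  obtain ⟨m2, hm2⟩ : ∃ m2, m1 = m2 + 1 := ⟨m1 - 1, by omega⟩
  have hzu : dist z a ≤ r * m1 := hlev ▸ hz.1
  have hzl : r * m1 - δ₂ ≤ dist z a := hlev ▸ SS_lower hz
  have : mval r z a = m2 + 1 := by
    apply mval_eq hr
    · push_cast [hm2] at hzl ⊢; nlinarith
    · push_cast [hm2] at hzu ⊢; nlinarith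
  omega

end basic

section stab
variable {r δ₂ : ℝ}

lemma F_dirac_of_le {x a : X} (h : dist x a ≤ 2*r) : ∀ n, F r δ₂ n x a = dirac x
  | 0 => rfl
  | (n+1) => by funext y; simp [F, h]

lemma F_stab (hr : 0 < r) (hδ₂ : 0 ≤ δ₂) (hδ₂r : δ₂ < r) :
    ∀ c : ℕ, ∀ x a : X, mval r x a = c → ∀ n m : ℕ, c ≤ n → c ≤ m →
      F r δ₂ n x a = F r δ₂ m x a := by
  intro c
  induction c using Nat.strong_induction_on with
  | _ c IH =>
    intro x a hc n m hn hm
    by_cases h2r : dist x a ≤ 2*r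
    · rw [F_dirac_of_le h2r, F_dirac_of_le h2r]
    · push_neg at h2r
      have h3 : 3 ≤ c := hc ▸ (two_r_lt_iff hr x a).mp h2r
      obtain ⟨n', rfl⟩ : ∃ n', n = n' + 1 := ⟨n - 1, by omega⟩
      obtain ⟨m', rfl⟩ : ∃ m', m = m' + 1 := ⟨m - 1, by omega⟩
      show F r δ₂ (n'+1) x a = F r δ₂ (m'+1) x a
      funext y
      simp only [F, if_neg (not_le.mpr h2r)]
      congr 1
      apply finsum_congr
      intro z
      apply finsum_congr_Prop rfl
      intro hz
      have hmz : mval r z a + 1 = c := hc ▸ SS_mval hr hδ₂ hδ₂r h2r hz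
      have := IH (mval r z a) (by omega) z a rfl n' m' (by omega) (by omega)
      rw [this]

lemma mu_dirac {x a : X} (h : dist x a ≤ 2*r) : muAL r δ₂ x a = dirac x :=
  F_dirac_of_le h _

lemma mu_unfold (hr : 0 < r) (hδ₂ : 0 ≤ δ₂) (hδ₂r : δ₂ < r) {x a : X} (h : 2*r < dist x a) :
    muAL r δ₂ x a = fun y => (Nat.card (SS r δ₂ x a) : ℝ)⁻¹ * ∑ᶠ z ∈ SS r δ₂ x a, muAL r δ₂ z a y := by
  have h3 : 3 ≤ mval r x a := (two_r_lt_iff hr x a).mp h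
  obtain ⟨c', hc'⟩ : ∃ c', mval r x a = c' + 1 := ⟨mval r x a - 1, by omega⟩
  unfold muAL
  rw [hc']
  funext y
  show F r δ₂ (c'+1) x a y = _
  simp only [F, if_neg (not_le.mpr h)]
  congr 1
  apply finsum_congr
  intro z
  apply finsum_congr_Prop rfl
  intro hz
  have hmz : mval r z a + 1 = mval r x a := SS_mval hr hδ₂ hδ₂r h hz
  exact congrFun (F_stab hr hδ₂ hδ₂r (mval r z a) z a rfl c' (mval r z a) (by omega) le_rfl) y

end stab

section meas
variable {r δ₂ δ₀ : ℝ}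

lemma SS_sub_ball_x (hr : 0 < r) (x a : X) : SS r δ₂ x a ⊆ Metric.closedBall x (r + δ₂) := by
  intro z hz
  have h1 := le_lev_add hr x a
  have := hz.2
  simp only [Metric.mem_closedBall, dist_comm z x]
  linarith

lemma SS_finite (hfin : ∀ (c : X) (ρ : ℝ), (Metric.closedBall c ρ).Finite) (hr : 0 < r)
    (x a : X) : (SS r δ₂ x a).Finite :=
  (hfin x (r + δ₂)).subset (SS_sub_ball_x hr x a)

lemma SS_nonempty (hδ₀ : 0 ≤ δ₀) (hδ₀₂ : δ₀ ≤ δ₂)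
    (hwgeo : ∀ x y : X, ∀ s : ℝ, 0 ≤ s → s ≤ dist x y + δ₀ →
      ∃ z : X, dist x z ≤ s ∧ dist z y ≤ dist x y - s + δ₀)
    (hr : 0 < r) {x a : X} (h2r : 2*r < dist x a) : (SS r δ₂ x a).Nonempty := by
  have hlev0 : 0 ≤ lev r x a := le_trans (by positivity) (lev_ge_two_r hr h2r)
  have hlevlt : lev r x a < dist x a := lev_lt hr x a
  obtain ⟨z, hz1, hz2⟩ := hwgeo a x (lev r x a) hlev0
    (by rw [dist_comm]; linarith)
  refine ⟨z, ?_, ?_⟩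
  · rw [dist_comm]; exact hz1
  · rw [dist_comm] at hz2; rw [dist_comm a x] at hz2; linarith

lemma F_nonneg : ∀ (n : ℕ) (x a y : X), 0 ≤ F r δ₂ n x a y := by
  intro n
  induction n with
  | zero => intro x a y; unfold F dirac; positivity
  | succ n IH =>
    intro x a y
    show 0 ≤ (if dist x a ≤ 2*r then dirac x y else _)
    split
    · unfold dirac; positivity
    · refine mul_nonneg (by positivity) ?_
      refine finsum_nonneg fun z => finsum_nonneg fun _ => IH z a y

lemma mu_nonneg (x a y : X) : 0 ≤ muAL r δ₂ x a y := F_nonneg _ x a y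

lemma finsum_mem_fin {α : Type*} (S : Set α) (hS : S.Finite) (g : α → ℝ) :
    ∑ᶠ z ∈ S, g z = ∑ z ∈ hS.toFinset, g z := by
  rw [← finsum_mem_coe_finset]; simp

lemma card_SS_eq (hfin : ∀ (c : X) (ρ : ℝ), (Metric.closedBall c ρ).Finite) (hr : 0 < r)
    (x a : X) : (Nat.card (SS r δ₂ x a) : ℝ) = ((SS_finite (δ₂ := δ₂) hfin hr x a).toFinset.card : ℝ) := by
  rw [Nat.card_coe_set_eq, Set.ncard_eq_toFinset_card _ (SS_finite hfin hr x a)]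

lemma mu_supp (hfin : ∀ (c : X) (ρ : ℝ), (Metric.closedBall c ρ).Finite)
    (hr : 0 < r) (hδ₂ : 0 ≤ δ₂) (hδ₂r : δ₂ < r) :
    ∀ (c : ℕ) (x a y : X), mval r x a = c → muAL r δ₂ x a y ≠ 0 → dist y a ≤ 2*r := by
  intro c
  induction c using Nat.strong_induction_on with
  | _ c IH =>
    intro x a y hc hne
    by_cases h2r : dist x a ≤ 2*r
    · rw [mu_dirac h2r] at hne
      unfold dirac at hne
      by_cases hyx : y = x
      · subst hyx; linarith [h2r]
      · simp [hyx] at hne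
    · push_neg at h2r
      rw [congrFun (mu_unfold hr hδ₂ hδ₂r h2r) y] at hne
      have hS : (∑ᶠ z ∈ SS r δ₂ x a, muAL r δ₂ z a y) ≠ 0 := right_ne_zero_of_mul hne
      obtain ⟨z, hzS, hzne⟩ := exists_ne_zero_of_finsum_mem_ne_zero hS
      have hmz : mval r z a + 1 = mval r x a := SS_mval hr hδ₂ hδ₂r h2r hzS
      exact IH (mval r z a) (by omega) z a y rfl hzne

lemma mu_supp_sub (hfin : ∀ (c : X) (ρ : ℝ), (Metric.closedBall c ρ).Finite)
    (hr : 0 < r) (hδ₂ : 0 ≤ δ₂) (hδ₂r : δ₂ < r) (x a : X) :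
    Function.support (muAL r δ₂ x a) ⊆ Metric.closedBall a (2*r) := by
  intro y hy
  simp only [Metric.mem_closedBall]
  exact mu_supp hfin hr hδ₂ hδ₂r (mval r x a) x a y rfl hy

lemma mu_sum_YF (hfin : ∀ (c : X) (ρ : ℝ), (Metric.closedBall c ρ).Finite)
    (hδ₀ : 0 ≤ δ₀) (hδ₀₂ : δ₀ ≤ δ₂)
    (hwgeo : ∀ x y : X, ∀ s : ℝ, 0 ≤ s → s ≤ dist x y + δ₀ →
      ∃ z : X, dist x z ≤ s ∧ dist z y ≤ dist x y - s + δ₀)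
    (hr : 0 < r) (hδ₂r : δ₂ < r) :
    ∀ (c : ℕ) (x a : X), mval r x a = c →
      ∑ y ∈ (hfin a (2*r)).toFinset, muAL r δ₂ x a y = 1 := by
  have hδ₂ : 0 ≤ δ₂ := le_trans hδ₀ hδ₀₂
  intro c
  induction c using Nat.strong_induction_on with
  | _ c IH =>
    intro x a hc
    by_cases h2r : dist x a ≤ 2*r
    · rw [mu_dirac h2r]
      unfold dirac
      have hx : x ∈ (hfin a (2*r)).toFinset := by
        rw [Set.Finite.mem_toFinset]; simpa [Metric.mem_closedBall] using h2r
      rw [Finset.sum_eq_single_of_mem x hx (fun b _ hb => if_neg hb), if_pos rfl]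
    · push_neg at h2r
      have hSfin := SS_finite (δ₂ := δ₂) hfin hr x a
      have hSne := SS_nonempty hδ₀ hδ₀₂ hwgeo hr (δ₂ := δ₂) h2r
      calc ∑ y ∈ (hfin a (2*r)).toFinset, muAL r δ₂ x a y
          = ∑ y ∈ (hfin a (2*r)).toFinset, (Nat.card (SS r δ₂ x a) : ℝ)⁻¹ *
              ∑ z ∈ hSfin.toFinset, muAL r δ₂ z a y := by
            refine Finset.sum_congr rfl fun y _ => ?_
            rw [congrFun (mu_unfold hr hδ₂ hδ₂r h2r) y, finsum_mem_fin _ hSfin]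
        _ = (Nat.card (SS r δ₂ x a) : ℝ)⁻¹ *
              ∑ z ∈ hSfin.toFinset, ∑ y ∈ (hfin a (2*r)).toFinset, muAL r δ₂ z a y := by
            rw [← Finset.mul_sum, Finset.sum_comm]
        _ = (Nat.card (SS r δ₂ x a) : ℝ)⁻¹ * ∑ z ∈ hSfin.toFinset, (1:ℝ) := by
            congr 1
            refine Finset.sum_congr rfl fun z hz => ?_
            rw [Set.Finite.mem_toFinset] at hz
            have hmz : mval r z a + 1 = mval r x a := SS_mval hr hδ₂ hδ₂r h2r hz
            exact IH (mval r z a) (by omega) z a rfl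
        _ = 1 := by
            rw [Finset.sum_const, nsmul_eq_mul, mul_one]
            rw [card_SS_eq hfin hr x a] at *
            have hpos : 0 < (hSfin.toFinset.card : ℝ) := by
              have : hSfin.toFinset.Nonempty := by
                obtain ⟨z, hz⟩ := hSne; exact ⟨z, hSfin.mem_toFinset.mpr hz⟩
              exact_mod_cast Finset.card_pos.mpr this
            field_simp

lemma mu_sum (hfin : ∀ (c : X) (ρ : ℝ), (Metric.closedBall c ρ).Finite)
    (hδ₀ : 0 ≤ δ₀) (hδ₀₂ : δ₀ ≤ δ₂)
    (hwgeo : ∀ x y : X, ∀ s : ℝ, 0 ≤ s → s ≤ dist x y + δ₀ →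
      ∃ z : X, dist x z ≤ s ∧ dist z y ≤ dist x y - s + δ₀)
    (hr : 0 < r) (hδ₂r : δ₂ < r) (x a : X) :
    ∑ᶠ y, muAL r δ₂ x a y = 1 := by
  have hδ₂ : 0 ≤ δ₂ := le_trans hδ₀ hδ₀₂
  rw [finsum_eq_sum_of_support_subset (muAL r δ₂ x a) (s := (hfin a (2*r)).toFinset)
    (by rw [Set.Finite.coe_toFinset]; exact mu_supp_sub hfin hr hδ₂ hδ₂r x a)]
  exact mu_sum_YF hfin hδ₀ hδ₀₂ hwgeo hr hδ₂r (mval r x a) x a rfl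

end meas
section equivar
variable {r δ₂ : ℝ} {G : Type*} [Group G] [MulAction G X]
variable (hiso : ∀ (g : G) (x y : X), dist (g • x) (g • y) = dist x y)
include hiso

lemma dist_smul_inv (g : G) (z w : X) : dist z (g • w) = dist (g⁻¹ • z) w := by
  calc dist z (g • w) = dist (g • g⁻¹ • z) (g • w) := by rw [smul_inv_smul]
    _ = dist (g⁻¹ • z) w := hiso g _ w

lemma lev_smul (g : G) (x a : X) : lev r (g • x) (g • a) = lev r x a := by
  unfold lev; rw [hiso]

lemma SS_smul (g : G) (x a : X) :
    SS r δ₂ (g • x) (g • a) = (fun z => g • z) '' SS r δ₂ x a := by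
  ext z
  constructor
  · rintro ⟨h1, h2⟩
    refine ⟨g⁻¹ • z, ⟨?_, ?_⟩, by simp⟩
    · rw [← dist_smul_inv hiso g z a, lev_smul hiso g x a] at *
      exact h1
    · rw [show dist x (g⁻¹ • z) = dist (g • x) z by
            rw [← hiso g x (g⁻¹ • z), smul_inv_smul]]
      rw [hiso g x a, lev_smul hiso g x a] at h2
      exact h2
  · rintro ⟨w, ⟨h1, h2⟩, rfl⟩
    constructor
    · rw [hiso g w a, lev_smul hiso g x a]; exact h1
    · rw [hiso g x w, hiso g x a, lev_smul hiso g x a]; exact h2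

lemma F_smul (g : G) : ∀ (n : ℕ) (x a y : X),
    F r δ₂ n (g • x) (g • a) (g • y) = F r δ₂ n x a y := by
  intro n
  induction n with
  | zero =>
    intro x a y
    show dirac (g • x) (g • y) = dirac x y
    unfold dirac
    by_cases h : y = x
    · subst h; simp
    · rw [if_neg h, if_neg (fun hc => h (smul_left_cancel g hc))]
  | succ n IH =>
    intro x a y
    show (if dist (g • x) (g • a) ≤ 2*r then _ else _) = (if dist x a ≤ 2*r then _ else _)
    rw [hiso g x a]
    by_cases h : dist x a ≤ 2*r
    · rw [if_pos h, if_pos h]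
      show dirac (g • x) (g • y) = dirac x y
      unfold dirac
      by_cases hyx : y = x
      · subst hyx; simp
      · rw [if_neg hyx, if_neg (fun hc => hyx (smul_left_cancel g hc))]
    · rw [if_neg h, if_neg h]
      have hcard : Nat.card (SS r δ₂ (g • x) (g • a)) = Nat.card (SS r δ₂ x a) := by
        rw [SS_smul hiso g x a]
        exact Nat.card_image_of_injective (MulAction.injective g) _
      rw [hcard]
      congr 1
      rw [SS_smul hiso g x a]
      rw [finsum_mem_image (fun z _ w _ h => MulAction.injective g h)]
      exact finsum_congr fun z => finsum_congr_Prop rfl fun hz => IH z a y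

lemma mu_smul (g : G) (x a y : X) :
    muAL r δ₂ (g • x) (g • a) (g • y) = muAL r δ₂ x a y := by
  unfold muAL mval
  rw [hiso g x a]
  exact F_smul hiso g _ x a y

end equivar

section geom
variable {δ r δ₂ δ₀ : ℝ}
variable (hδ : 0 ≤ δ)
variable (hhyp : ∀ x₁ x₂ x₃ x₄ : X, dist x₁ x₄ + dist x₂ x₃ ≤
      max (dist x₁ x₂ + dist x₃ x₄) (dist x₁ x₃ + dist x₂ x₄) + δ)
include hδ hhyp

/-- General pair estimate for points one step down toward `a`. -/
lemma GP {x x' a z z' : X} {L κ c₁ c₂ : ℝ}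
    (h1 : dist z a ≤ L) (h2 : dist x z ≤ dist x a - L + c₁)
    (h3 : dist z' a ≤ L) (h4 : dist x' z' ≤ dist x' a - L + c₂)
    (h5 : dist x x' ≤ κ) :
    dist z z' ≤ max (max (c₁ + δ) (c₂ + δ))
      (max ((c₁ + c₂ + 3*δ)/2) (κ + 3*δ - (dist x a - L) - (dist x' a - L))) := by
  have A := hhyp z a x' z'
  have B := hhyp z' a x z
  have C := hhyp z z' x x'
  have e1 : dist a x' = dist x' a := dist_comm _ _
  have e2 : dist a x = dist x a := dist_comm _ _
  have e3 : dist a z' = dist z' a := dist_comm _ _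
  have e4 : dist a z = dist z a := dist_comm _ _
  have e5 : dist z' z = dist z z' := dist_comm _ _
  have e6 : dist x' z = dist z x' := dist_comm _ _
  have e7 : dist x z' = dist z' x := dist_comm _ _
  have e8 : dist z x = dist x z := dist_comm _ _
  have e9 : dist z' x' = dist x' z' := dist_comm _ _
  rcases max_cases (dist z a + dist x' z') (dist z x' + dist a z') with ⟨hA, _⟩ | ⟨hA, _⟩
  · -- A first case : d(z,z') ≤ c₂ + δ
    refine le_trans ?_ (le_max_of_le_left (le_max_right _ _))
    rw [hA] at A; linarith
  · rcases max_cases (dist z' a + dist x z) (dist z' x + dist a z) with ⟨hB, _⟩ | ⟨hB, _⟩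
    · refine le_trans ?_ (le_max_of_le_left (le_max_left _ _))
      rw [hB] at B; linarith
    · rw [hA] at A; rw [hB] at B
      rcases max_cases (dist z z' + dist x x') (dist z x + dist z' x') with ⟨hC, _⟩ | ⟨hC, _⟩
      · refine le_trans ?_ (le_max_of_le_right (le_max_right _ _))
        rw [hC] at C; linarith
      · refine le_trans ?_ (le_max_of_le_right (le_max_left _ _))
        rw [hC] at C; linarith

/-- Common point lemma: for nearby points in a common slab there is a common step point. -/
lemma CP (hδ₀ : 0 ≤ δ₀) (hδ₂ : δ₀ + δ ≤ δ₂)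
    (hwgeo : ∀ x y : X, ∀ s : ℝ, 0 ≤ s → s ≤ dist x y + δ₀ →
      ∃ z : X, dist x z ≤ s ∧ dist z y ≤ dist x y - s + δ₀)
    {u u' a : X} {L Kst : ℝ} (hL : 0 ≤ L)
    (hu : L + r - δ₂ ≤ dist u a) (hu' : L + r - δ₂ ≤ dist u' a)
    (hK : dist u u' ≤ Kst) (hrK : 2*Kst + δ₂ + δ ≤ 2*r) (hrδ₂ : δ₂ ≤ r) :
    ∃ w : X, dist w a ≤ L ∧ dist u w ≤ dist u a - L + δ₂ ∧ dist u' w ≤ dist u' a - L + δ₂ := by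
  obtain ⟨w, hw1, hw2⟩ := hwgeo a u L hL (by
    rw [dist_comm]; linarith)
  rw [dist_comm a w] at hw1
  rw [dist_comm w u, dist_comm a u] at hw2
  refine ⟨w, hw1, by linarith, ?_⟩
  have A := hhyp u' u a w
  have e1 : dist a w = dist w a := dist_comm _ _
  have e2 : dist u' u = dist u u' := dist_comm _ _
  have e3 : dist u' a = dist u' a := rfl
  rcases max_cases (dist u' u + dist a w) (dist u' a + dist u w) with ⟨hA, _⟩ | ⟨hA, _⟩
  · rw [hA] at A; linarith
  · rw [hA] at A; linarith

/-- Excess propagation along one recursion step. -/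
lemma EXstep {x w u a : X} {E : ℝ}
    (hexc : dist x w ≤ dist x a - dist w a + E)
    (hstep : dist w u ≤ dist w a - dist u a + δ₂)
    (hgap : δ/2 ≤ dist w a - dist u a) :
    dist x u ≤ dist x a - dist u a + max E (δ₂ + δ) := by
  have A := hhyp x w a u
  have e1 : dist a u = dist u a := dist_comm _ _
  rcases max_cases (dist x w + dist a u) (dist x a + dist w u) with ⟨hA, _⟩ | ⟨hA, _⟩
  · rw [hA] at A
    refine le_trans ?_ (add_le_add le_rfl (le_max_left E (δ₂ + δ)))
    linarith
  · rw [hA] at A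
    refine le_trans ?_ (add_le_add le_rfl (le_max_right E (δ₂ + δ)))
    linarith

end geom

section exc
variable {δ r δ₂ δ₀ : ℝ}
variable (hδ : 0 ≤ δ)
variable (hhyp : ∀ x₁ x₂ x₃ x₄ : X, dist x₁ x₄ + dist x₂ x₃ ≤
      max (dist x₁ x₂ + dist x₃ x₄) (dist x₁ x₃ + dist x₂ x₄) + δ)
variable (hfin : ∀ (c : X) (ρ : ℝ), (Metric.closedBall c ρ).Finite)
variable (hr : 0 < r) (hδ₂ : 0 ≤ δ₂) (hδ₂r : δ₂ < r) (hrδ : δ ≤ 2*(r - δ₂))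
include hδ hhyp hfin hr hδ₂ hδ₂r hrδ

lemma EXmain :
    ∀ (c : ℕ) (w x a : X), mval r w a = c → 2*r < dist w a →
      lev r w a + r - δ₂ ≤ dist w a →
      dist x w ≤ dist x a - dist w a + (δ₂ + δ) →
      ∀ y, muAL r δ₂ w a y ≠ 0 →
        2*r - δ₂ ≤ dist y a ∧ dist y a ≤ 2*r ∧ dist x y ≤ dist x a - dist y a + (δ₂ + δ) := by
  intro c
  induction c using Nat.strong_induction_on with
  | _ c IH =>
    intro w x a hc h2r hslab hexc y hy
    rw [congrFun (mu_unfold hr hδ₂ hδ₂r h2r) y] at hy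
    have hS : (∑ᶠ z ∈ SS r δ₂ w a, muAL r δ₂ z a y) ≠ 0 := right_ne_zero_of_mul hy
    obtain ⟨z, hzS, hzne⟩ := exists_ne_zero_of_finsum_mem_ne_zero hS
    have hz1 : dist z a ≤ lev r w a := hzS.1
    have hz2 : dist w z ≤ dist w a - lev r w a + δ₂ := hzS.2
    have hz1' : lev r w a - δ₂ ≤ dist z a := SS_lower hzS
    have hgap : δ/2 ≤ dist w a - dist z a := by linarith
    have hexcz : dist x z ≤ dist x a - dist z a + (δ₂ + δ) := by
      have := EXstep (δ := δ) (δ₂ := δ₂) hδ hhyp (E := δ₂ + δ)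
        hexc (by linarith) hgap
      simpa [max_self] using this
    have hmz : mval r z a + 1 = mval r w a := SS_mval hr hδ₂ hδ₂r h2r hzS
    by_cases hz2r : dist z a ≤ 2*r
    · -- base: μ z a = dirac z, y = z
      rw [mu_dirac hz2r] at hzne
      have hyz : y = z := by
        by_contra hne; exact hzne (by unfold dirac; rw [if_neg hne])
      subst hyz
      have hlev2 : 2*r ≤ lev r w a := lev_ge_two_r hr h2r
      exact ⟨by linarith, by linarith, hexcz⟩
    · push_neg at hz2r
      have hzslab : lev r z a + r - δ₂ ≤ dist z a := by
        -- lev z a = lev w a - r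
        have h3w : 3 ≤ mval r w a := (two_r_lt_iff hr w a).mp h2r
        obtain ⟨m1, hm1⟩ : ∃ m1, mval r w a = m1 + 1 := ⟨mval r w a - 1, by omega⟩
        obtain ⟨m2, hm2⟩ : ∃ m2, m1 = m2 + 1 := by
          have h3z : 3 ≤ mval r z a := (two_r_lt_iff hr z a).mp hz2r
          exact ⟨m1 - 1, by omega⟩
        have hlw : lev r w a = r * m1 := lev_eq_of_mval hr w a m1 hm1
        have hlz : lev r z a = r * m2 := lev_eq_of_mval hr z a m2 (by omega)
        rw [hlz]
        rw [hlw, hm2] at hz1'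
        push_cast at hz1' ⊢
        nlinarith
      exact IH (mval r z a) (by omega) z x a rfl hz2r hzslab hexcz y hzne

lemma supp_struct {x a : X} (h2r : 2*r < dist x a) :
    ∀ y, muAL r δ₂ x a y ≠ 0 →
      2*r - δ₂ ≤ dist y a ∧ dist y a ≤ 2*r ∧ dist x y ≤ dist x a - dist y a + (δ₂ + δ) := by
  intro y hy
  rw [congrFun (mu_unfold hr hδ₂ hδ₂r h2r) y] at hy
  have hS : (∑ᶠ z ∈ SS r δ₂ x a, muAL r δ₂ z a y) ≠ 0 := right_ne_zero_of_mul hy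
  obtain ⟨z, hzS, hzne⟩ := exists_ne_zero_of_finsum_mem_ne_zero hS
  have hz1 : dist z a ≤ lev r x a := hzS.1
  have hz1' : lev r x a - δ₂ ≤ dist z a := SS_lower hzS
  have hz2 : dist x z ≤ dist x a - lev r x a + δ₂ := hzS.2
  have hexcz : dist x z ≤ dist x a - dist z a + (δ₂ + δ) := by linarith
  have hlev2 : 2*r ≤ lev r x a := lev_ge_two_r hr h2r
  by_cases hz2r : dist z a ≤ 2*r
  · rw [mu_dirac hz2r] at hzne
    have hyz : y = z := by
      by_contra hne; exact hzne (by unfold dirac; rw [if_neg hne])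
    subst hyz
    have h3w : 3 ≤ mval r x a := (two_r_lt_iff hr x a).mp h2r
    obtain ⟨m1, hm1⟩ : ∃ m1, mval r x a = m1 + 1 := ⟨mval r x a - 1, by omega⟩
    have hm12 : 2 ≤ m1 := by omega
    have hlw : lev r x a = r * m1 := lev_eq_of_mval hr x a m1 hm1
    rcases Nat.eq_or_lt_of_le hm12 with h2 | h3
    · have : lev r x a = 2*r := by rw [hlw, ← h2]; push_cast; ring
      exact ⟨by linarith, by linarith, hexcz⟩
    · exfalso
      have : (3:ℝ) ≤ (m1:ℝ) := by exact_mod_cast h3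
      rw [hlw] at hz1'
      nlinarith
  · push_neg at hz2r
    have hzslab : lev r z a + r - δ₂ ≤ dist z a := by
      have h3w : 3 ≤ mval r x a := (two_r_lt_iff hr x a).mp h2r
      have hmz : mval r z a + 1 = mval r x a := SS_mval hr hδ₂ hδ₂r h2r hzS
      obtain ⟨m1, hm1⟩ : ∃ m1, mval r x a = m1 + 1 := ⟨mval r x a - 1, by omega⟩
      obtain ⟨m2, hm2⟩ : ∃ m2, m1 = m2 + 1 := by
        have h3z : 3 ≤ mval r z a := (two_r_lt_iff hr z a).mp hz2r
        exact ⟨m1 - 1, by omega⟩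
      have hlw : lev r x a = r * m1 := lev_eq_of_mval hr x a m1 hm1
      have hlz : lev r z a = r * m2 := lev_eq_of_mval hr z a m2 (by omega)
      rw [hlz]
      rw [hlw, hm2] at hz1'
      push_cast at hz1' ⊢
      nlinarith
    exact EXmain hδ hhyp hfin hr hδ₂ hδ₂r hrδ (mval r z a) z x a rfl hz2r hzslab hexcz y hzne

end exc

section avg
variable {α : Type*}

lemma avg_pair_eq {S S' : Finset α} (hS : S.Nonempty) (hS' : S'.Nonempty)
    (A : α → α → ℝ) (y : α) :
    (S.card:ℝ)⁻¹ * ∑ z ∈ S, A z y - (S'.card:ℝ)⁻¹ * ∑ z' ∈ S', A z' y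
      = ∑ p ∈ S ×ˢ S', ((S.card:ℝ) * (S'.card:ℝ))⁻¹ * (A p.1 y - A p.2 y) := by
  have hc : (S.card:ℝ) ≠ 0 := by exact_mod_cast Finset.card_pos.mpr hS |>.ne'
  have hc' : (S'.card:ℝ) ≠ 0 := by exact_mod_cast Finset.card_pos.mpr hS' |>.ne'
  rw [Finset.sum_product]
  have : ∀ z, ∑ z' ∈ S', ((S.card:ℝ) * (S'.card:ℝ))⁻¹ * (A z y - A z' y)
      = ((S.card:ℝ) * (S'.card:ℝ))⁻¹ * ((S'.card:ℝ) * A z y - ∑ z' ∈ S', A z' y) := by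
    intro z
    rw [← Finset.mul_sum, Finset.sum_sub_distrib, Finset.sum_const, nsmul_eq_mul]
  rw [Finset.sum_congr rfl fun z _ => this z]
  rw [← Finset.mul_sum, Finset.sum_sub_distrib, ← Finset.mul_sum, Finset.sum_const, nsmul_eq_mul]
  field_simp

lemma avg_pair_bound {Y S S' : Finset α} (hS : S.Nonempty) (hS' : S'.Nonempty)
    (A : α → α → ℝ) {M : ℝ}
    (hpair : ∀ z ∈ S, ∀ z' ∈ S', ∑ y ∈ Y, |A z y - A z' y| ≤ M) :
    ∑ y ∈ Y, |(S.card:ℝ)⁻¹ * ∑ z ∈ S, A z y - (S'.card:ℝ)⁻¹ * ∑ z' ∈ S', A z' y| ≤ M := by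
  classical
  have hM : 0 ≤ M := by
    obtain ⟨z, hz⟩ := hS; obtain ⟨z', hz'⟩ := hS'
    exact le_trans (Finset.sum_nonneg fun y _ => abs_nonneg _) (hpair z hz z' hz')
  have hcc : (0:ℝ) < (S.card:ℝ) * (S'.card:ℝ) := by
    have := Finset.card_pos.mpr hS; have := Finset.card_pos.mpr hS'
    positivity
  calc ∑ y ∈ Y, |(S.card:ℝ)⁻¹ * ∑ z ∈ S, A z y - (S'.card:ℝ)⁻¹ * ∑ z' ∈ S', A z' y|
      = ∑ y ∈ Y, |∑ p ∈ S ×ˢ S', ((S.card:ℝ) * (S'.card:ℝ))⁻¹ * (A p.1 y - A p.2 y)| := by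
        refine Finset.sum_congr rfl fun y _ => ?_
        rw [avg_pair_eq hS hS' A y]
    _ ≤ ∑ y ∈ Y, ∑ p ∈ S ×ˢ S', ((S.card:ℝ) * (S'.card:ℝ))⁻¹ * |A p.1 y - A p.2 y| := by
        refine Finset.sum_le_sum fun y _ => ?_
        refine le_trans (Finset.abs_sum_le_sum_abs _ _) ?_
        refine Finset.sum_le_sum fun p _ => ?_
        rw [abs_mul, abs_of_nonneg (by positivity)]
    _ = ∑ p ∈ S ×ˢ S', ((S.card:ℝ) * (S'.card:ℝ))⁻¹ * ∑ y ∈ Y, |A p.1 y - A p.2 y| := by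
        rw [Finset.sum_comm]
        exact Finset.sum_congr rfl fun p _ => (Finset.mul_sum _ _ _).symm
    _ ≤ ∑ p ∈ S ×ˢ S', ((S.card:ℝ) * (S'.card:ℝ))⁻¹ * M := by
        refine Finset.sum_le_sum fun p hp => ?_
        rw [Finset.mem_product] at hp
        exact mul_le_mul_of_nonneg_left (hpair p.1 hp.1 p.2 hp.2) (by positivity)
    _ = M := by
        rw [Finset.sum_const, nsmul_eq_mul, Finset.card_product]
        push_cast
        field_simp

lemma avg_pair_bound_common {Y S S' : Finset α} (hS : S.Nonempty) (hS' : S'.Nonempty)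
    (A : α → α → ℝ) {M : ℝ} (z₀ : α) (h0 : z₀ ∈ S) (h0' : z₀ ∈ S')
    (hdiag : ∑ y ∈ Y, |A z₀ y - A z₀ y| = 0)
    (hpair : ∀ z ∈ S, ∀ z' ∈ S', ∑ y ∈ Y, |A z y - A z' y| ≤ M) :
    ∑ y ∈ Y, |(S.card:ℝ)⁻¹ * ∑ z ∈ S, A z y - (S'.card:ℝ)⁻¹ * ∑ z' ∈ S', A z' y|
      ≤ (1 - ((S.card:ℝ) * (S'.card:ℝ))⁻¹) * M := by
  classical
  have hM : 0 ≤ M := by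
    obtain ⟨z, hz⟩ := hS; obtain ⟨z', hz'⟩ := hS'
    exact le_trans (Finset.sum_nonneg fun y _ => abs_nonneg _) (hpair z hz z' hz')
  have hcard : 0 < S.card := Finset.card_pos.mpr hS
  have hcard' : 0 < S'.card := Finset.card_pos.mpr hS'
  have hcc : (0:ℝ) < (S.card:ℝ) * (S'.card:ℝ) := by positivity
  have hmem : (z₀, z₀) ∈ S ×ˢ S' := Finset.mem_product.mpr ⟨h0, h0'⟩
  calc ∑ y ∈ Y, |(S.card:ℝ)⁻¹ * ∑ z ∈ S, A z y - (S'.card:ℝ)⁻¹ * ∑ z' ∈ S', A z' y|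
      ≤ ∑ p ∈ S ×ˢ S', ((S.card:ℝ) * (S'.card:ℝ))⁻¹ * ∑ y ∈ Y, |A p.1 y - A p.2 y| := by
        rw [show ∑ y ∈ Y, |(S.card:ℝ)⁻¹ * ∑ z ∈ S, A z y - (S'.card:ℝ)⁻¹ * ∑ z' ∈ S', A z' y|
          = ∑ y ∈ Y, |∑ p ∈ S ×ˢ S', ((S.card:ℝ) * (S'.card:ℝ))⁻¹ * (A p.1 y - A p.2 y)| from
          Finset.sum_congr rfl fun y _ => by rw [avg_pair_eq hS hS' A y]]
        calc ∑ y ∈ Y, |∑ p ∈ S ×ˢ S', ((S.card:ℝ) * (S'.card:ℝ))⁻¹ * (A p.1 y - A p.2 y)|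
            ≤ ∑ y ∈ Y, ∑ p ∈ S ×ˢ S', ((S.card:ℝ) * (S'.card:ℝ))⁻¹ * |A p.1 y - A p.2 y| := by
              refine Finset.sum_le_sum fun y _ => ?_
              refine le_trans (Finset.abs_sum_le_sum_abs _ _) ?_
              refine Finset.sum_le_sum fun p _ => ?_
              rw [abs_mul, abs_of_nonneg (by positivity)]
          _ = _ := by
              rw [Finset.sum_comm]
              exact Finset.sum_congr rfl fun p _ => (Finset.mul_sum _ _ _).symm
    _ = ∑ p ∈ (S ×ˢ S').erase (z₀, z₀), ((S.card:ℝ) * (S'.card:ℝ))⁻¹ * ∑ y ∈ Y, |A p.1 y - A p.2 y| := by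
        rw [← Finset.add_sum_erase _ _ hmem]
        simp [hdiag]
    _ ≤ ∑ p ∈ (S ×ˢ S').erase (z₀, z₀), ((S.card:ℝ) * (S'.card:ℝ))⁻¹ * M := by
        refine Finset.sum_le_sum fun p hp => ?_
        have hp' := Finset.mem_of_mem_erase hp
        rw [Finset.mem_product] at hp'
        exact mul_le_mul_of_nonneg_left (hpair p.1 hp'.1 p.2 hp'.2) (by positivity)
    _ = ((S ×ˢ S').card - 1 : ℝ) * (((S.card:ℝ) * (S'.card:ℝ))⁻¹ * M) := by
        rw [Finset.sum_const, nsmul_eq_mul, Finset.card_erase_of_mem hmem]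
        have : 0 < (S ×ˢ S').card := Finset.card_pos.mpr ⟨_, hmem⟩
        push_cast [Nat.cast_sub (by omega : 1 ≤ (S ×ˢ S').card)]
        ring
    _ = (1 - ((S.card:ℝ) * (S'.card:ℝ))⁻¹) * M := by
        rw [Finset.card_product]
        push_cast
        field_simp

lemma avg_right_bound {Y S' : Finset α} (hS' : S'.Nonempty)
    (B : α → ℝ) (A : α → α → ℝ) {M : ℝ}
    (h : ∀ z' ∈ S', ∑ y ∈ Y, |B y - A z' y| ≤ M) :
    ∑ y ∈ Y, |B y - (S'.card:ℝ)⁻¹ * ∑ z' ∈ S', A z' y| ≤ M := by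
  classical
  have hc' : (0:ℝ) < (S'.card:ℝ) := by exact_mod_cast Finset.card_pos.mpr hS'
  have hid : ∀ y, B y - (S'.card:ℝ)⁻¹ * ∑ z' ∈ S', A z' y
      = ∑ z' ∈ S', (S'.card:ℝ)⁻¹ * (B y - A z' y) := by
    intro y
    rw [← Finset.mul_sum, Finset.sum_sub_distrib, Finset.sum_const, nsmul_eq_mul]
    field_simp
  calc ∑ y ∈ Y, |B y - (S'.card:ℝ)⁻¹ * ∑ z' ∈ S', A z' y|
      = ∑ y ∈ Y, |∑ z' ∈ S', (S'.card:ℝ)⁻¹ * (B y - A z' y)| := by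
        exact Finset.sum_congr rfl fun y _ => by rw [hid y]
    _ ≤ ∑ y ∈ Y, ∑ z' ∈ S', (S'.card:ℝ)⁻¹ * |B y - A z' y| := by
        refine Finset.sum_le_sum fun y _ => ?_
        refine le_trans (Finset.abs_sum_le_sum_abs _ _) ?_
        refine Finset.sum_le_sum fun z' _ => ?_
        rw [abs_mul, abs_of_nonneg (by positivity)]
    _ = ∑ z' ∈ S', (S'.card:ℝ)⁻¹ * ∑ y ∈ Y, |B y - A z' y| := by
        rw [Finset.sum_comm]
        exact Finset.sum_congr rfl fun z' _ => (Finset.mul_sum _ _ _).symm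
    _ ≤ ∑ z' ∈ S', (S'.card:ℝ)⁻¹ * M := by
        refine Finset.sum_le_sum fun z' hz' => ?_
        exact mul_le_mul_of_nonneg_left (h z' hz') (by positivity)
    _ = M := by
        rw [Finset.sum_const, nsmul_eq_mul]
        field_simp

end avg

section dec
variable {δ r δ₂ δ₀ Kst β : ℝ} {Kb : ℕ}
variable (hδ : 0 ≤ δ) (hδ₀ : 0 ≤ δ₀)
variable (hhyp : ∀ x₁ x₂ x₃ x₄ : X, dist x₁ x₄ + dist x₂ x₃ ≤
      max (dist x₁ x₂ + dist x₃ x₄) (dist x₁ x₃ + dist x₂ x₄) + δ)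
variable (hwgeo : ∀ x y : X, ∀ s : ℝ, 0 ≤ s → s ≤ dist x y + δ₀ →
      ∃ z : X, dist x z ≤ s ∧ dist z y ≤ dist x y - s + δ₀)
variable (hfin : ∀ (c : X) (ρ : ℝ), (Metric.closedBall c ρ).Finite)
variable (hr : 0 < r) (hδ₀₂ : δ₀ + δ ≤ δ₂) (hδ₂r : δ₂ < r)

include hfin hr hδ₂r in
lemma mu_avg (hδ₂' : 0 ≤ δ₂) {u a : X} (h2r : 2*r < dist u a) (y : X) :
    muAL r δ₂ u a y = (((SS_finite (δ₂ := δ₂) hfin hr u a).toFinset.card : ℕ) : ℝ)⁻¹ *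
      ∑ z ∈ (SS_finite (δ₂ := δ₂) hfin hr u a).toFinset, muAL r δ₂ z a y := by
  rw [congrFun (mu_unfold hr hδ₂' hδ₂r h2r) y,
    finsum_mem_fin _ (SS_finite (δ₂ := δ₂) hfin hr u a), card_SS_eq hfin hr u a]

lemma cardSf_le (hKb : ∀ u : X, Nat.card (Metric.closedBall u (r + δ₂)) ≤ Kb) (u a : X) :
    (SS_finite (δ₂ := δ₂) hfin hr u a).toFinset.card ≤ Kb := by
  have h1 : (SS_finite (δ₂ := δ₂) hfin hr u a).toFinset.card = (SS r δ₂ u a).ncard := by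
    rw [Set.ncard_eq_toFinset_card _ (SS_finite (δ₂ := δ₂) hfin hr u a)]
  rw [h1]
  refine le_trans (Set.ncard_le_ncard (SS_sub_ball_x hr u a) (hfin u (r + δ₂))) ?_
  rw [← Nat.card_coe_set_eq]
  exact hKb u

lemma sum_dirac_le (Y : Finset X) (u : X) : ∑ y ∈ Y, dirac u y ≤ 1 := by
  classical
  unfold dirac
  by_cases hu : u ∈ Y
  · rw [Finset.sum_eq_single_of_mem u hu (fun b _ hb => by
      simp only [if_neg hb])]
    simp
  · rw [Finset.sum_eq_zero (fun b hb => by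
      have : b ≠ u := fun h => hu (h ▸ hb)
      simp only [if_neg this])]
    norm_num

lemma L1_le_two {Y : Finset X} {f g : X → ℝ} (hf : ∀ y, 0 ≤ f y) (hg : ∀ y, 0 ≤ g y)
    (hf1 : ∑ y ∈ Y, f y ≤ 1) (hg1 : ∑ y ∈ Y, g y ≤ 1) :
    ∑ y ∈ Y, |f y - g y| ≤ 2 := by
  calc ∑ y ∈ Y, |f y - g y| ≤ ∑ y ∈ Y, (f y + g y) := by
        refine Finset.sum_le_sum fun y _ => ?_
        rw [abs_sub_le_iff]
        constructor <;> [linarith [hg y]; linarith [hf y]]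
    _ = ∑ y ∈ Y, f y + ∑ y ∈ Y, g y := Finset.sum_add_distrib
    _ ≤ 2 := by linarith

include hδ hδ₀ hhyp hwgeo hfin hr hδ₀₂ hδ₂r

set_option maxHeartbeats 1000000 in
lemma DEC (hKb : ∀ u : X, Nat.card (Metric.closedBall u (r + δ₂)) ≤ Kb) (hKb1 : 1 ≤ Kb)
    (hβ : β = 1 - ((Kb:ℝ) * (Kb:ℝ))⁻¹)
    (hc1 : δ₂ + δ ≤ Kst) (hc2 : δ₂ + δ₂ + 3*δ ≤ 2*Kst) (hrδ : 3*δ ≤ 2*(r - δ₂))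
    (hCP : 2*Kst + δ₂ + δ ≤ 2*r) :
    ∀ j : ℕ, 2 ≤ j → ∀ u u' a : X,
      r*j - δ₂ ≤ dist u a → dist u a ≤ r*j →
      r*j - δ₂ ≤ dist u' a → dist u' a ≤ r*j →
      dist u u' ≤ Kst →
      ∑ y ∈ (hfin a (2*r)).toFinset, |muAL r δ₂ u a y - muAL r δ₂ u' a y| ≤ 2 * β ^ (j - 2) := by
  have hδ₂' : 0 ≤ δ₂ := by linarith
  have hδ₀₂' : δ₀ ≤ δ₂ := by linarith
  have hβ0 : 0 ≤ β := by
    rw [hβ]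
    have h1 : (1:ℝ) ≤ (Kb:ℝ) * (Kb:ℝ) := by
      have : (1:ℝ) ≤ (Kb:ℝ) := by exact_mod_cast hKb1
      nlinarith
    have : ((Kb:ℝ) * (Kb:ℝ))⁻¹ ≤ 1 := by
      rw [inv_le_one_iff₀]; right; exact h1
    linarith
  intro j hj
  induction j, hj using Nat.le_induction with
  | base =>
    intro u u' a hu1 hu2 hu1' hu2' hK
    have h2 : dist u a ≤ 2*r := by push_cast at hu2; linarith
    have h2' : dist u' a ≤ 2*r := by push_cast at hu2'; linarith
    rw [mu_dirac h2, mu_dirac h2']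
    have h22 : (2:ℕ) - 2 = 0 := rfl
    rw [h22, pow_zero, mul_one]
    exact L1_le_two (fun y => by unfold dirac; positivity) (fun y => by unfold dirac; positivity)
      (sum_dirac_le _ u) (sum_dirac_le _ u')
  | succ j hj IH =>
    intro u u' a hu1 hu2 hu1' hu2' hK
    push_cast at hu1 hu2 hu1' hu2'
    have hrj : (2:ℝ) ≤ (j:ℝ) := by exact_mod_cast hj
    have hexp : r*((j:ℝ)+1) = r*(j:ℝ) + r := by ring
    rw [hexp] at hu1 hu2 hu1' hu2'
    have h2rj : 2*r ≤ r*(j:ℝ) := by nlinarith [hr.le, hrj]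
    have h2r : 2*r < dist u a := by linarith
    have h2r' : 2*r < dist u' a := by linarith
    have hmu : mval r u a = j + 1 := mval_eq hr u a j (by push_cast; linarith) (by push_cast; linarith)
    have hmu' : mval r u' a = j + 1 := mval_eq hr u' a j (by push_cast; linarith) (by push_cast; linarith)
    have hlev : lev r u a = r * j := lev_eq_of_mval hr u a j hmu
    have hlev' : lev r u' a = r * j := lev_eq_of_mval hr u' a j hmu'
    -- common point
    obtain ⟨w, hw1, hw2, hw3⟩ := CP hδ hhyp hδ₀ hδ₀₂ hwgeo (u := u) (u' := u') (a := a)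
      (L := r*j) (Kst := Kst) (by positivity) (by linarith) (by linarith) hK hCP (le_of_lt hδ₂r)
    have hwS : w ∈ SS r δ₂ u a := ⟨by rw [hlev]; exact hw1, by rw [hlev]; exact hw2⟩
    have hwS' : w ∈ SS r δ₂ u' a := ⟨by rw [hlev']; exact hw1, by rw [hlev']; exact hw3⟩
    have hSfin := SS_finite (δ₂ := δ₂) hfin hr u a
    have hSfin' := SS_finite (δ₂ := δ₂) hfin hr u' a
    have hSne : hSfin.toFinset.Nonempty := ⟨w, hSfin.mem_toFinset.mpr hwS⟩
    have hSne' : hSfin'.toFinset.Nonempty := ⟨w, hSfin'.mem_toFinset.mpr hwS'⟩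
    -- rewrite both μ's as averages
    have hrew : ∀ y ∈ (hfin a (2*r)).toFinset,
        |muAL r δ₂ u a y - muAL r δ₂ u' a y| =
        |(hSfin.toFinset.card : ℝ)⁻¹ * ∑ z ∈ hSfin.toFinset, muAL r δ₂ z a y
          - (hSfin'.toFinset.card : ℝ)⁻¹ * ∑ z' ∈ hSfin'.toFinset, muAL r δ₂ z' a y| := by
      intro y _
      rw [mu_avg hfin hr hδ₂r hδ₂' h2r y, mu_avg hfin hr hδ₂r hδ₂' h2r' y]
    rw [Finset.sum_congr rfl hrew]
    -- pair bound
    have hpair : ∀ z ∈ hSfin.toFinset, ∀ z' ∈ hSfin'.toFinset,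
        ∑ y ∈ (hfin a (2*r)).toFinset, |muAL r δ₂ z a y - muAL r δ₂ z' a y| ≤ 2 * β ^ (j - 2) := by
      intro z hz z' hz'
      rw [hSfin.mem_toFinset] at hz
      rw [hSfin'.mem_toFinset] at hz'
      have hz1 : dist z a ≤ r*(j:ℝ) := by rw [← hlev]; exact hz.1
      have hz2 : dist u z ≤ dist u a - r*(j:ℝ) + δ₂ := by rw [← hlev]; exact hz.2
      have hz1L : r*(j:ℝ) - δ₂ ≤ dist z a := by
        have := SS_lower hz; rw [hlev] at this; exact this
      have hz1' : dist z' a ≤ r*(j:ℝ) := by rw [← hlev']; exact hz'.1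
      have hz2' : dist u' z' ≤ dist u' a - r*(j:ℝ) + δ₂ := by rw [← hlev']; exact hz'.2
      have hz1L' : r*(j:ℝ) - δ₂ ≤ dist z' a := by
        have := SS_lower hz'; rw [hlev'] at this; exact this
      have hzz' : dist z z' ≤ Kst := by
        have hgp := GP hδ hhyp (x := u) (x' := u') (a := a) (z := z) (z' := z')
          (L := r*(j:ℝ)) (κ := Kst) (c₁ := δ₂) (c₂ := δ₂) hz1 hz2 hz1' hz2' hK
        refine le_trans hgp ?_
        apply max_le
        · apply max_le <;> linarith
        · apply max_le
          · linarith
          · linarith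
      exact IH z z' a (by push_cast; linarith) (by push_cast; linarith)
        (by push_cast; linarith) (by push_cast; linarith) hzz'
    have hcommon := avg_pair_bound_common (Y := (hfin a (2*r)).toFinset)
      hSne hSne' (fun z y => muAL r δ₂ z a y) w
      (hSfin.mem_toFinset.mpr hwS) (hSfin'.mem_toFinset.mpr hwS')
      (by simp) hpair
    refine le_trans hcommon ?_
    -- (1 - (cS cS')⁻¹) ≤ β
    have hM0 : (0:ℝ) ≤ 2 * β ^ (j - 2) := by positivity
    have hcS : (1:ℝ) ≤ (hSfin.toFinset.card : ℝ) := by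
      exact_mod_cast Finset.card_pos.mpr hSne
    have hcS' : (1:ℝ) ≤ (hSfin'.toFinset.card : ℝ) := by
      exact_mod_cast Finset.card_pos.mpr hSne'
    have hle : (hSfin.toFinset.card : ℝ) * (hSfin'.toFinset.card : ℝ) ≤ (Kb:ℝ) * (Kb:ℝ) := by
      have b1 := cardSf_le hfin hr hKb u a
      have b2 := cardSf_le hfin hr hKb u' a
      have b1' : (hSfin.toFinset.card : ℝ) ≤ (Kb:ℝ) := by exact_mod_cast b1
      have b2' : (hSfin'.toFinset.card : ℝ) ≤ (Kb:ℝ) := by exact_mod_cast b2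
      nlinarith
    have hfac : 1 - ((hSfin.toFinset.card : ℝ) * (hSfin'.toFinset.card : ℝ))⁻¹ ≤ β := by
      rw [hβ]
      have h1 : (0:ℝ) < (hSfin.toFinset.card : ℝ) * (hSfin'.toFinset.card : ℝ) := by nlinarith
      have := inv_anti₀ h1 hle
      linarith
    calc (1 - ((hSfin.toFinset.card : ℝ) * (hSfin'.toFinset.card : ℝ))⁻¹) * (2 * β ^ (j - 2))
        ≤ β * (2 * β ^ (j - 2)) := mul_le_mul_of_nonneg_right hfac hM0
      _ = 2 * β ^ (j + 1 - 2) := by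
          have : j + 1 - 2 = (j - 2) + 1 := by omega
          rw [this, pow_succ]; ring

end dec

section top
variable {δ r δ₂ δ₀ Kst β : ℝ} {Kb : ℕ}
variable (hδ : 0 ≤ δ) (hδ₀ : 0 ≤ δ₀)
variable (hhyp : ∀ x₁ x₂ x₃ x₄ : X, dist x₁ x₄ + dist x₂ x₃ ≤
      max (dist x₁ x₂ + dist x₃ x₄) (dist x₁ x₃ + dist x₂ x₄) + δ)
variable (hwgeo : ∀ x y : X, ∀ s : ℝ, 0 ≤ s → s ≤ dist x y + δ₀ →
      ∃ z : X, dist x z ≤ s ∧ dist z y ≤ dist x y - s + δ₀)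
variable (hfin : ∀ (c : X) (ρ : ℝ), (Metric.closedBall c ρ).Finite)
variable (hr : 0 < r) (hδ₀₂ : δ₀ + δ ≤ δ₂) (hδ₂r : δ₂ < r)

include hr in
lemma mval_le {x a : X} {k : ℕ} (h : dist x a ≤ r * k) : mval r x a ≤ k := by
  unfold mval
  have : ⌈dist x a / r⌉ ≤ (k:ℤ) := Int.ceil_le.mpr (by
    rw [div_le_iff₀ hr]; push_cast; linarith)
  omega

include hr in
lemma dist_le_mval (x a : X) : dist x a ≤ r * mval r x a := by
  have h0 := ceil_nonneg' (r := r) x a hr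
  have h2 : dist x a / r ≤ ((⌈dist x a / r⌉ : ℤ) : ℝ) := Int.le_ceil _
  have h3 : dist x a ≤ r * ((⌈dist x a / r⌉ : ℤ) : ℝ) := by
    rw [← div_le_iff₀' hr]; exact h2
  have h4 : ((⌈dist x a / r⌉.toNat : ℕ) : ℝ) = ((⌈dist x a / r⌉ : ℤ) : ℝ) := by
    exact_mod_cast congrArg (fun z : ℤ => (z : ℝ)) (Int.toNat_of_nonneg h0)
  unfold mval
  rw [h4]
  exact h3

include hr in
lemma mval_lower {x a : X} {m : ℕ} (h : mval r x a = m + 1) : r * m < dist x a := by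
  have := lev_lt hr x a
  rw [lev_eq_of_mval hr x a m h] at this
  exact this

include hδ hδ₀ hhyp hwgeo hfin hr hδ₀₂ hδ₂r

set_option maxHeartbeats 1000000 in
lemma TOP0 (hKb : ∀ u : X, Nat.card (Metric.closedBall u (r + δ₂)) ≤ Kb) (hKb1 : 1 ≤ Kb)
    (hβ : β = 1 - ((Kb:ℝ) * (Kb:ℝ))⁻¹)
    (hc1 : δ₂ + δ ≤ Kst) (hc2 : δ₂ + δ₂ + 3*δ ≤ 2*Kst) (hrδ : 3*δ ≤ 2*(r - δ₂))
    (hCP : 2*Kst + δ₂ + δ ≤ 2*r) (hKst3 : δ₀ + 1 + 2*δ₂ + 3*δ ≤ Kst) (hδ₀r : δ₀ + 1 ≤ r)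
    {x x' a : X} (hxx' : dist x x' ≤ δ₀ + 1)
    (h4 : 4 ≤ mval r x a) (hle : mval r x a ≤ mval r x' a) :
    ∑ y ∈ (hfin a (2*r)).toFinset, |muAL r δ₂ x a y - muAL r δ₂ x' a y|
      ≤ 2 * β ^ (mval r x a - 3) := by
  have hδ₂' : 0 ≤ δ₂ := by linarith
  obtain ⟨m, hm⟩ : ∃ m, mval r x a = m + 1 := ⟨mval r x a - 1, by omega⟩
  have hm3 : 3 ≤ m := by omega
  have hD : dist x a ≤ r * (m+1) := by
    have := dist_le_mval hr x a; rw [hm] at this; exact_mod_cast this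
  have hDl : r * m < dist x a := mval_lower hr hm
  have hlevx : lev r x a = r * m := lev_eq_of_mval hr x a m hm
  have h2rx : 2*r < dist x a := by
    have : (3:ℝ) ≤ (m:ℝ) := by exact_mod_cast hm3
    nlinarith
  have hm'le : mval r x' a ≤ m + 2 := by
    apply mval_le hr
    have : dist x' a ≤ dist x a + (δ₀ + 1) := by
      have := dist_triangle x' x a
      rw [dist_comm x' x] at this
      linarith
    push_cast
    nlinarith
  have hSfinx := SS_finite (δ₂ := δ₂) hfin hr x a
  have hSnex : hSfinx.toFinset.Nonempty := by
    obtain ⟨z, hz⟩ := SS_nonempty (δ₀ := δ₀) (δ₂ := δ₂) hδ₀ (by linarith) hwgeo hr h2rx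
    exact ⟨z, hSfinx.mem_toFinset.mpr hz⟩
  -- facts about elements of SS x a
  have hzfacts : ∀ z ∈ SS r δ₂ x a, dist z a ≤ r*m ∧ r*m - δ₂ ≤ dist z a ∧
      dist x z ≤ dist x a - r*m + δ₂ := by
    intro z hz
    refine ⟨by rw [← hlevx]; exact hz.1, ?_, by rw [← hlevx]; exact hz.2⟩
    have := SS_lower hz; rw [hlevx] at this; exact this
  rcases Nat.eq_or_lt_of_le hle with heq | hlt
  · -- same level : unroll both once
    have hm' : mval r x' a = m + 1 := by omega
    have hD' : dist x' a ≤ r * (m+1) := by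
      have := dist_le_mval hr x' a; rw [hm'] at this; exact_mod_cast this
    have hDl' : r * m < dist x' a := mval_lower hr hm'
    have hlevx' : lev r x' a = r * m := lev_eq_of_mval hr x' a m hm'
    have h2rx' : 2*r < dist x' a := by
      have : (3:ℝ) ≤ (m:ℝ) := by exact_mod_cast hm3
      nlinarith
    have hSfinx' := SS_finite (δ₂ := δ₂) hfin hr x' a
    have hSnex' : hSfinx'.toFinset.Nonempty := by
      obtain ⟨z, hz⟩ := SS_nonempty (δ₀ := δ₀) (δ₂ := δ₂) hδ₀ (by linarith) hwgeo hr h2rx'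
      exact ⟨z, hSfinx'.mem_toFinset.mpr hz⟩
    have hz'facts : ∀ z ∈ SS r δ₂ x' a, dist z a ≤ r*m ∧ r*m - δ₂ ≤ dist z a ∧
        dist x' z ≤ dist x' a - r*m + δ₂ := by
      intro z hz
      refine ⟨by rw [← hlevx']; exact hz.1, ?_, by rw [← hlevx']; exact hz.2⟩
      have := SS_lower hz; rw [hlevx'] at this; exact this
    have hrew : ∀ y ∈ (hfin a (2*r)).toFinset,
        |muAL r δ₂ x a y - muAL r δ₂ x' a y| =
        |(hSfinx.toFinset.card : ℝ)⁻¹ * ∑ z ∈ hSfinx.toFinset, muAL r δ₂ z a y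
          - (hSfinx'.toFinset.card : ℝ)⁻¹ * ∑ z' ∈ hSfinx'.toFinset, muAL r δ₂ z' a y| := by
      intro y _
      rw [mu_avg hfin hr hδ₂r hδ₂' h2rx y, mu_avg hfin hr hδ₂r hδ₂' h2rx' y]
    rw [Finset.sum_congr rfl hrew]
    refine avg_pair_bound hSnex hSnex' (fun z y => muAL r δ₂ z a y) ?_
    intro z hz z' hz'
    rw [hSfinx.mem_toFinset] at hz
    rw [hSfinx'.mem_toFinset] at hz'
    obtain ⟨hza, hzl, hzx⟩ := hzfacts z hz
    obtain ⟨hza', hzl', hzx'⟩ := hz'facts z' hz'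
    have hzz' : dist z z' ≤ Kst := by
      have hgp := GP hδ hhyp (x := x) (x' := x') (a := a) (z := z) (z' := z')
        (L := r*(m:ℝ)) (κ := δ₀ + 1) (c₁ := δ₂) (c₂ := δ₂) hza hzx hza' hzx' hxx'
      refine le_trans hgp ?_
      apply max_le
      · apply max_le <;> linarith
      · apply max_le
        · linarith
        · linarith
    have hdec := DEC hδ hδ₀ hhyp hwgeo hfin hr hδ₀₂ hδ₂r hKb hKb1 hβ hc1 hc2 hrδ hCP
      m (by omega) z z' a
      (by push_cast; linarith) (by push_cast; linarith)
      (by push_cast; linarith) (by push_cast; linarith) hzz'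
    have : m - 2 = (m + 1) - 3 := by omega
    rw [this] at hdec
    rw [hm]
    exact hdec
  · -- level mismatch : mval x' a = m + 2
    have hm' : mval r x' a = (m+1) + 1 := by omega
    have hD' : dist x' a ≤ r * (m+2) := by
      have := dist_le_mval hr x' a; rw [hm'] at this; push_cast at this ⊢; linarith
    have hDl' : r * (m+1) < dist x' a := by
      have := mval_lower hr hm'; push_cast at this ⊢; linarith
    have hlevx' : lev r x' a = r * (m+1) := by
      have := lev_eq_of_mval hr x' a (m+1) hm'; push_cast at this ⊢; linarith [this]
    have h2rx' : 2*r < dist x' a := by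
      have : (3:ℝ) ≤ (m:ℝ) := by exact_mod_cast hm3
      nlinarith
    have hSfinx' := SS_finite (δ₂ := δ₂) hfin hr x' a
    have hSnex' : hSfinx'.toFinset.Nonempty := by
      obtain ⟨z, hz⟩ := SS_nonempty (δ₀ := δ₀) (δ₂ := δ₂) hδ₀ (by linarith) hwgeo hr h2rx'
      exact ⟨z, hSfinx'.mem_toFinset.mpr hz⟩
    -- rewrite μ x' as average over its step set
    have hrew : ∀ y ∈ (hfin a (2*r)).toFinset,
        |muAL r δ₂ x a y - muAL r δ₂ x' a y| =
        |muAL r δ₂ x a y - (hSfinx'.toFinset.card : ℝ)⁻¹ *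
            ∑ z' ∈ hSfinx'.toFinset, muAL r δ₂ z' a y| := by
      intro y _
      rw [mu_avg hfin hr hδ₂r hδ₂' h2rx' y]
    rw [Finset.sum_congr rfl hrew]
    refine avg_right_bound hSnex' (fun y => muAL r δ₂ x a y) (fun z y => muAL r δ₂ z a y) ?_
    intro z' hz'
    rw [hSfinx'.mem_toFinset] at hz'
    -- z' is in slab m+1
    have hz'a : dist z' a ≤ r*(m+1) := by rw [← hlevx']; exact hz'.1
    have hz'l : r*(m+1) - δ₂ ≤ dist z' a := by
      have := SS_lower hz'; rw [hlevx'] at this; exact this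
    have hz'x' : dist x' z' ≤ dist x' a - r*(m+1) + δ₂ := by rw [← hlevx']; exact hz'.2
    have h2rz' : 2*r < dist z' a := by
      have : (3:ℝ) ≤ (m:ℝ) := by exact_mod_cast hm3
      push_cast at hz'l
      nlinarith
    have hmz' : mval r z' a = m + 1 := by
      apply mval_eq hr
      · push_cast at hz'l ⊢; nlinarith
      · push_cast; linarith [hz'a]
    have hlevz' : lev r z' a = r * m := lev_eq_of_mval hr z' a m hmz'
    have hSfinz' := SS_finite (δ₂ := δ₂) hfin hr z' a
    have hSnez' : hSfinz'.toFinset.Nonempty := by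
      obtain ⟨w, hw⟩ := SS_nonempty (δ₀ := δ₀) (δ₂ := δ₂) hδ₀ (by linarith) hwgeo hr h2rz'
      exact ⟨w, hSfinz'.mem_toFinset.mpr hw⟩
    have hrew2 : ∀ y ∈ (hfin a (2*r)).toFinset,
        |muAL r δ₂ x a y - muAL r δ₂ z' a y| =
        |(hSfinx.toFinset.card : ℝ)⁻¹ * ∑ z ∈ hSfinx.toFinset, muAL r δ₂ z a y
          - (hSfinz'.toFinset.card : ℝ)⁻¹ * ∑ w ∈ hSfinz'.toFinset, muAL r δ₂ w a y| := by
      intro y _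
      rw [mu_avg hfin hr hδ₂r hδ₂' h2rx y, mu_avg hfin hr hδ₂r hδ₂' h2rz' y]
    rw [Finset.sum_congr rfl hrew2]
    refine avg_pair_bound hSnex hSnez' (fun z y => muAL r δ₂ z a y) ?_
    intro z hz w hw
    rw [hSfinx.mem_toFinset] at hz
    rw [hSfinz'.mem_toFinset] at hw
    obtain ⟨hza, hzl, hzx⟩ := hzfacts z hz
    have hwa : dist w a ≤ r*m := by rw [← hlevz']; exact hw.1
    have hwl : r*m - δ₂ ≤ dist w a := by
      have := SS_lower hw; rw [hlevz'] at this; exact this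
    have hwz' : dist z' w ≤ dist z' a - r*m + δ₂ := by rw [← hlevz']; exact hw.2
    -- κ := dist x z'
    have hκ : dist x z' ≤ δ₀ + 1 + r + δ₂ := by
      have h1 : dist x z' ≤ dist x x' + dist x' z' := dist_triangle x x' z'
      push_cast at hz'x' hD'
      nlinarith
    have hzw : dist z w ≤ Kst := by
      have hgp := GP hδ hhyp (x := x) (x' := z') (a := a) (z := z) (z' := w)
        (L := r*(m:ℝ)) (κ := δ₀ + 1 + r + δ₂) (c₁ := δ₂) (c₂ := δ₂) hza hzx hwa
        (by
          have h1 : dist z' w ≤ dist z' a - r*(m:ℝ) + δ₂ := hwz'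
          linarith) hκ
      refine le_trans hgp ?_
      apply max_le
      · apply max_le <;> linarith
      · apply max_le
        · linarith
        · -- δ₀+1+r+δ₂+3δ − (dist x a − rm) − (dist z' a − rm) ≤ Kst
          push_cast at hz'l
          nlinarith
    have hdec := DEC hδ hδ₀ hhyp hwgeo hfin hr hδ₀₂ hδ₂r hKb hKb1 hβ hc1 hc2 hrδ hCP
      m (by omega) z w a
      (by push_cast; linarith) (by push_cast; linarith)
      (by push_cast; linarith) (by push_cast; linarith) hzw
    have : m - 2 = (m + 1) - 3 := by omega
    rw [this] at hdec
    rw [hm]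
    exact hdec

lemma TOP (hKb : ∀ u : X, Nat.card (Metric.closedBall u (r + δ₂)) ≤ Kb) (hKb1 : 1 ≤ Kb)
    (hβ : β = 1 - ((Kb:ℝ) * (Kb:ℝ))⁻¹)
    (hc1 : δ₂ + δ ≤ Kst) (hc2 : δ₂ + δ₂ + 3*δ ≤ 2*Kst) (hrδ : 3*δ ≤ 2*(r - δ₂))
    (hCP : 2*Kst + δ₂ + δ ≤ 2*r) (hKst3 : δ₀ + 1 + 2*δ₂ + 3*δ ≤ Kst) (hδ₀r : δ₀ + 1 ≤ r)
    {x x' a : X} (hxx' : dist x x' ≤ δ₀ + 1)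
    (h4 : 4 ≤ mval r x a) (h4' : 4 ≤ mval r x' a) :
    ∑ y ∈ (hfin a (2*r)).toFinset, |muAL r δ₂ x a y - muAL r δ₂ x' a y|
      ≤ 2 * β ^ (min (mval r x a) (mval r x' a) - 3) := by
  rcases le_total (mval r x a) (mval r x' a) with hle | hle
  · rw [min_eq_left hle]
    exact TOP0 hδ hδ₀ hhyp hwgeo hfin hr hδ₀₂ hδ₂r hKb hKb1 hβ hc1 hc2 hrδ hCP hKst3 hδ₀r
      hxx' h4 hle
  · rw [min_eq_right hle]
    have := TOP0 hδ hδ₀ hhyp hwgeo hfin hr hδ₀₂ hδ₂r hKb hKb1 hβ hc1 hc2 hrδ hCP hKst3 hδ₀r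
      (x := x') (x' := x) (a := a) (by rw [dist_comm]; exact hxx') h4' hle
    refine le_trans (le_of_eq ?_) this
    exact Finset.sum_congr rfl fun y _ => abs_sub_comm _ _

end top

section chain
variable {δ r δ₂ δ₀ Kst β : ℝ} {Kb : ℕ}
variable (hδ : 0 ≤ δ) (hδ₀ : 0 ≤ δ₀)
variable (hhyp : ∀ x₁ x₂ x₃ x₄ : X, dist x₁ x₄ + dist x₂ x₃ ≤
      max (dist x₁ x₂ + dist x₃ x₄) (dist x₁ x₃ + dist x₂ x₄) + δ)
variable (hwgeo : ∀ x y : X, ∀ s : ℝ, 0 ≤ s → s ≤ dist x y + δ₀ →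
      ∃ z : X, dist x z ≤ s ∧ dist z y ≤ dist x y - s + δ₀)
variable (hfin : ∀ (c : X) (ρ : ℝ), (Metric.closedBall c ρ).Finite)
variable (hr : 0 < r) (hδ₀₂ : δ₀ + δ ≤ δ₂) (hδ₂r : δ₂ < r)

include hr in
lemma mval_ge {x a : X} {k : ℕ} (h : r * k < dist x a) : k + 1 ≤ mval r x a := by
  by_contra hc
  push_neg at hc
  have h1 : mval r x a ≤ k := by omega
  have h2 := dist_le_mval hr x a
  have h3 : r * (mval r x a : ℝ) ≤ r * (k:ℝ) := by
    have : ((mval r x a : ℕ) : ℝ) ≤ (k:ℝ) := by exact_mod_cast h1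
    exact mul_le_mul_of_nonneg_left this hr.le
  linarith

include hδ hδ₀ hhyp hwgeo hfin hr hδ₀₂ hδ₂r

lemma Qchain (hKb : ∀ u : X, Nat.card (Metric.closedBall u (r + δ₂)) ≤ Kb) (hKb1 : 1 ≤ Kb)
    (hβ : β = 1 - ((Kb:ℝ) * (Kb:ℝ))⁻¹)
    (hc1 : δ₂ + δ ≤ Kst) (hc2 : δ₂ + δ₂ + 3*δ ≤ 2*Kst) (hrδ : 3*δ ≤ 2*(r - δ₂))
    (hCP : 2*Kst + δ₂ + δ ≤ 2*r) (hKst3 : δ₀ + 1 + 2*δ₂ + 3*δ ≤ Kst) (hδ₀r : δ₀ + 1 ≤ r) :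
    ∀ (n : ℕ) (j : ℕ) (x x' a : X), dist x x' ≤ n →
      r*(j+4) + (δ₀+1)*n ≤ dist x a →
      ∑ y ∈ (hfin a (2*r)).toFinset, |muAL r δ₂ x a y - muAL r δ₂ x' a y|
        ≤ 2*(n+1) * β ^ j := by
  have hδ₂' : 0 ≤ δ₂ := by linarith
  have hβ0 : 0 ≤ β := by
    rw [hβ]
    have h1 : (1:ℝ) ≤ (Kb:ℝ) * (Kb:ℝ) := by
      have : (1:ℝ) ≤ (Kb:ℝ) := by exact_mod_cast hKb1
      nlinarith
    have : ((Kb:ℝ) * (Kb:ℝ))⁻¹ ≤ 1 := by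
      rw [inv_le_one_iff₀]; right; exact h1
    linarith
  have hβ1 : β ≤ 1 := by
    rw [hβ]
    have h1 : (0:ℝ) < (Kb:ℝ) * (Kb:ℝ) := by
      have : (0:ℝ) < (Kb:ℝ) := by exact_mod_cast hKb1
      positivity
    have : 0 ≤ ((Kb:ℝ) * (Kb:ℝ))⁻¹ := by positivity
    linarith
  intro n
  induction n with
  | zero =>
    intro j x x' a hxx' hD
    push_cast at hxx'
    have hxe : x = x' := by
      have := dist_nonneg (x := x) (y := x')
      have : dist x x' = 0 := le_antisymm hxx' this
      exact dist_eq_zero.mp this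
    subst hxe
    simp only [sub_self, abs_zero, Finset.sum_const_zero]
    positivity
  | succ n IH =>
    intro j x x' a hxx' hD
    push_cast at hxx' hD
    by_cases hn : dist x x' ≤ n
    · have hprod : (0:ℝ) ≤ (δ₀+1) := by linarith
      refine le_trans (IH j x x' a hn (by
        push_cast
        have hexpand : (δ₀+1)*((n:ℝ)+1) = (δ₀+1)*(n:ℝ) + (δ₀+1) := by ring
        linarith)) ?_
      have : (0:ℝ) ≤ β ^ j := by positivity
      push_cast
      nlinarith
    · push_neg at hn
      set s : ℝ := dist x x' - n + δ₀ with hs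
      obtain ⟨w, hw1, hw2⟩ := hwgeo x x' s (by
          have := dist_nonneg (x := x) (y := x'); simp only [hs]; linarith)
        (by simp only [hs]; linarith)
      have hw1' : dist x w ≤ δ₀ + 1 := by simp only [hs] at hw1; linarith
      have hw2' : dist w x' ≤ n := by simp only [hs] at hw2; linarith
      have hwa : dist x a - (δ₀ + 1) ≤ dist w a := by
        have := dist_triangle x w a
        have h2 := dist_triangle w x a
        rw [dist_comm w x] at h2
        linarith [abs_nonneg (dist x a)]
      -- mval bounds
      have hprod : (0:ℝ) ≤ (δ₀+1)*((n:ℝ)+1) :=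
        mul_nonneg (by linarith) (by positivity)
      have hprod2 : (0:ℝ) ≤ (δ₀+1)*(n:ℝ) :=
        mul_nonneg (by linarith) (by positivity)
      have hexpand : (δ₀+1)*((n:ℝ)+1) = (δ₀+1)*(n:ℝ) + (δ₀+1) := by ring
      have hmx : j + 4 ≤ mval r x a := by
        apply mval_ge hr
        push_cast
        linarith
      have hmw : j + 4 ≤ mval r w a := by
        apply mval_ge hr
        push_cast
        linarith
      have htop := TOP hδ hδ₀ hhyp hwgeo hfin hr hδ₀₂ hδ₂r hKb hKb1 hβ hc1 hc2 hrδ hCP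
        hKst3 hδ₀r (x := x) (x' := w) (a := a) hw1' (by omega) (by omega)
      have hIH := IH j w x' a hw2' (by push_cast; linarith)
      have htri : ∑ y ∈ (hfin a (2*r)).toFinset, |muAL r δ₂ x a y - muAL r δ₂ x' a y|
          ≤ ∑ y ∈ (hfin a (2*r)).toFinset, |muAL r δ₂ x a y - muAL r δ₂ w a y|
            + ∑ y ∈ (hfin a (2*r)).toFinset, |muAL r δ₂ w a y - muAL r δ₂ x' a y| := by
        rw [← Finset.sum_add_distrib]
        refine Finset.sum_le_sum fun y _ => ?_
        have := abs_sub_le (muAL r δ₂ x a y) (muAL r δ₂ w a y) (muAL r δ₂ x' a y)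
        linarith [abs_nonneg (muAL r δ₂ x a y - muAL r δ₂ w a y)]
      have hpow : β ^ (min (mval r x a) (mval r w a) - 3) ≤ β ^ j := by
        apply pow_le_pow_of_le_one hβ0 hβ1
        omega
      refine le_trans htri ?_
      have h1 : ∑ y ∈ (hfin a (2*r)).toFinset, |muAL r δ₂ x a y - muAL r δ₂ w a y|
          ≤ 2 * β ^ j := by
        refine le_trans htop ?_
        linarith [hpow]
      push_cast
      have hgoal : 2*((n:ℝ)+1+1)*β^j = 2*β^j + 2*((n:ℝ)+1)*β^j := by ring
      rw [hgoal]
      linarith [h1, hIH]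

end chain

section int
variable {δ r δ₂ δ₀ Kst : ℝ}
variable (hδ : 0 ≤ δ) (hδ₀ : 0 ≤ δ₀)
variable (hhyp : ∀ x₁ x₂ x₃ x₄ : X, dist x₁ x₄ + dist x₂ x₃ ≤
      max (dist x₁ x₂ + dist x₃ x₄) (dist x₁ x₃ + dist x₂ x₄) + δ)
variable (hwgeo : ∀ x y : X, ∀ s : ℝ, 0 ≤ s → s ≤ dist x y + δ₀ →
      ∃ z : X, dist x z ≤ s ∧ dist z y ≤ dist x y - s + δ₀)
variable (hfin : ∀ (c : X) (ρ : ℝ), (Metric.closedBall c ρ).Finite)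
variable (hr : 0 < r) (hδ₀₂ : δ₀ + δ ≤ δ₂) (hδ₂r : δ₂ < r)

include hδ hδ₀ hhyp hwgeo hfin hr hδ₀₂ hδ₂r

lemma mu_pos_step {x a z : X} (h2r : 2*r < dist x a) (hz : z ∈ SS r δ₂ x a)
    {y : X} (hy : muAL r δ₂ z a y ≠ 0) : muAL r δ₂ x a y ≠ 0 := by
  have hδ₂' : 0 ≤ δ₂ := by linarith
  have hSfin := SS_finite (δ₂ := δ₂) hfin hr x a
  rw [mu_avg hfin hr hδ₂r hδ₂' h2r y]
  have hzf : z ∈ hSfin.toFinset := hSfin.mem_toFinset.mpr hz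
  have hpos : 0 < muAL r δ₂ z a y := lt_of_le_of_ne (mu_nonneg z a y) (Ne.symm hy)
  have hsum : muAL r δ₂ z a y ≤ ∑ z' ∈ hSfin.toFinset, muAL r δ₂ z' a y :=
    Finset.single_le_sum (fun z' _ => mu_nonneg z' a y) hzf
  have hcard : (0:ℝ) < (hSfin.toFinset.card : ℝ) := by
    exact_mod_cast Finset.card_pos.mpr ⟨z, hzf⟩
  exact ne_of_gt (mul_pos (inv_pos.mpr hcard) (lt_of_lt_of_le hpos hsum))

lemma mu_exists_pos (x a : X) : ∃ y, muAL r δ₂ x a y ≠ 0 := by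
  by_contra hc
  push_neg at hc
  have h1 := mu_sum hfin hδ₀ (by linarith) hwgeo hr hδ₂r (δ₂ := δ₂) x a
  rw [finsum_eq_zero_of_forall_eq_zero hc] at h1
  norm_num at h1

lemma INTslab (hc1 : δ₂ + δ ≤ Kst) (hc2 : δ₂ + δ₂ + 3*δ ≤ 2*Kst)
    (hCP : 2*Kst + δ₂ + δ ≤ 2*r) (hr2 : 2*δ₂ + 3*δ ≤ r) :
    ∀ (t : ℕ) (j : ℕ) (u u' a : X),
      r*j - δ₂ ≤ dist u a → dist u a ≤ r*j →
      r*j - δ₂ ≤ dist u' a → dist u' a ≤ r*j →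
      dist u u' ≤ Kst + t*r → 3 + t ≤ j →
      ∃ y, muAL r δ₂ u a y ≠ 0 ∧ muAL r δ₂ u' a y ≠ 0 := by
  have hδ₂' : 0 ≤ δ₂ := by linarith
  intro t
  induction t with
  | zero =>
    intro j u u' a hu1 hu2 hu1' hu2' hK hj
    obtain ⟨j', hj'⟩ : ∃ j', j = j' + 1 := ⟨j - 1, by omega⟩
    subst hj'
    have hj'2 : 2 ≤ j' := by omega
    have hj'2R : (2:ℝ) ≤ (j':ℝ) := by exact_mod_cast hj'2
    push_cast at hu1 hu2 hu1' hu2'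
    have hexp : r*((j':ℝ)+1) = r*(j':ℝ) + r := by ring
    rw [hexp] at hu1 hu2 hu1' hu2'
    have h2rj : 2*r ≤ r*(j':ℝ) := by nlinarith [hr.le]
    have h2r : 2*r < dist u a := by linarith
    have h2r' : 2*r < dist u' a := by linarith
    have hmu : mval r u a = j' + 1 := mval_eq hr u a j' (by push_cast; linarith) (by push_cast; linarith)
    have hmu' : mval r u' a = j' + 1 := mval_eq hr u' a j' (by push_cast; linarith) (by push_cast; linarith)
    have hlev : lev r u a = r * j' := lev_eq_of_mval hr u a j' hmu
    have hlev' : lev r u' a = r * j' := lev_eq_of_mval hr u' a j' hmu'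
    obtain ⟨w, hw1, hw2, hw3⟩ := CP hδ hhyp hδ₀ hδ₀₂ hwgeo (u := u) (u' := u') (a := a)
      (L := r*(j':ℝ)) (Kst := Kst) (by positivity) (by linarith) (by linarith)
      (by push_cast at hK; linarith) hCP (le_of_lt hδ₂r)
    have hwS : w ∈ SS r δ₂ u a := ⟨by rw [hlev]; exact hw1, by rw [hlev]; exact hw2⟩
    have hwS' : w ∈ SS r δ₂ u' a := ⟨by rw [hlev']; exact hw1, by rw [hlev']; exact hw3⟩
    obtain ⟨y, hy⟩ := mu_exists_pos hδ hδ₀ hhyp hwgeo hfin hr hδ₀₂ hδ₂r (δ₂ := δ₂) w a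
    exact ⟨y, mu_pos_step hδ hδ₀ hhyp hwgeo hfin hr hδ₀₂ hδ₂r h2r hwS hy,
      mu_pos_step hδ hδ₀ hhyp hwgeo hfin hr hδ₀₂ hδ₂r h2r' hwS' hy⟩
  | succ t IH =>
    intro j u u' a hu1 hu2 hu1' hu2' hK hj
    obtain ⟨j', hj'⟩ : ∃ j', j = j' + 1 := ⟨j - 1, by omega⟩
    subst hj'
    have hj'2 : 3 + t ≤ j' := by omega
    have hj'2R : (3:ℝ) ≤ (j':ℝ) := by exact_mod_cast (by omega : 3 ≤ j')
    push_cast at hu1 hu2 hu1' hu2'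
    have hexp : r*((j':ℝ)+1) = r*(j':ℝ) + r := by ring
    rw [hexp] at hu1 hu2 hu1' hu2'
    have h2rj : 2*r ≤ r*(j':ℝ) := by nlinarith [hr.le]
    have h2r : 2*r < dist u a := by linarith
    have h2r' : 2*r < dist u' a := by linarith
    have hmu : mval r u a = j' + 1 := mval_eq hr u a j' (by push_cast; linarith) (by push_cast; linarith)
    have hmu' : mval r u' a = j' + 1 := mval_eq hr u' a j' (by push_cast; linarith) (by push_cast; linarith)
    have hlev : lev r u a = r * j' := lev_eq_of_mval hr u a j' hmu
    have hlev' : lev r u' a = r * j' := lev_eq_of_mval hr u' a j' hmu'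
    obtain ⟨z, hz⟩ := SS_nonempty (δ₀ := δ₀) (δ₂ := δ₂) hδ₀ (by linarith) hwgeo hr h2r
    obtain ⟨z', hz'⟩ := SS_nonempty (δ₀ := δ₀) (δ₂ := δ₂) hδ₀ (by linarith) hwgeo hr h2r'
    have hza : dist z a ≤ r*(j':ℝ) := by rw [← hlev]; exact hz.1
    have hzl : r*(j':ℝ) - δ₂ ≤ dist z a := by
      have := SS_lower hz; rw [hlev] at this; exact this
    have hzx : dist u z ≤ dist u a - r*(j':ℝ) + δ₂ := by rw [← hlev]; exact hz.2
    have hza' : dist z' a ≤ r*(j':ℝ) := by rw [← hlev']; exact hz'.1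
    have hzl' : r*(j':ℝ) - δ₂ ≤ dist z' a := by
      have := SS_lower hz'; rw [hlev'] at this; exact this
    have hzx' : dist u' z' ≤ dist u' a - r*(j':ℝ) + δ₂ := by rw [← hlev']; exact hz'.2
    have hzz' : dist z z' ≤ Kst + t*r := by
      have hgp := GP hδ hhyp (x := u) (x' := u') (a := a) (z := z) (z' := z')
        (L := r*(j':ℝ)) (κ := Kst + (t+1)*r) (c₁ := δ₂) (c₂ := δ₂) hza hzx hza' hzx'
        (by push_cast at hK ⊢; linarith)
      refine le_trans hgp ?_
      have htr : (0:ℝ) ≤ t*r := by positivity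
      apply max_le
      · apply max_le <;> linarith
      · apply max_le
        · linarith
        · push_cast
          linarith
    obtain ⟨y, hy1, hy2⟩ := IH j' z z' a (by push_cast; linarith) (by push_cast; linarith)
      (by push_cast; linarith) (by push_cast; linarith) hzz' hj'2
    exact ⟨y, mu_pos_step hδ hδ₀ hhyp hwgeo hfin hr hδ₀₂ hδ₂r h2r hz hy1,
      mu_pos_step hδ hδ₀ hhyp hwgeo hfin hr hδ₀₂ hδ₂r h2r' hz' hy2⟩

lemma DESC (hrδ : δ ≤ 2*(r - δ₂)) :
    ∀ (s : ℕ) (v a : X), 2*r < dist v a → s + 3 ≤ mval r v a →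
      ∃ w : X, (∀ y, muAL r δ₂ w a y ≠ 0 → muAL r δ₂ v a y ≠ 0) ∧
        mval r w a + s = mval r v a ∧ dist w a ≤ dist v a ∧
        (s = 0 → w = v) ∧
        (1 ≤ s → r*(mval r w a) - δ₂ ≤ dist w a ∧ dist w a ≤ r*(mval r w a) ∧
          dist v w ≤ dist v a - dist w a + (δ₂ + δ)) := by
  have hδ₂' : 0 ≤ δ₂ := by linarith
  intro s
  induction s with
  | zero =>
    intro v a h2r _
    exact ⟨v, fun y h => h, by omega, le_refl _, fun _ => rfl, fun h => by omega⟩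
  | succ s IH =>
    intro v a h2r hs
    obtain ⟨ws, hmono, hmval, hda, hs0, hslab⟩ := IH v a h2r (by omega)
    have hmws : 4 ≤ mval r ws a := by omega
    obtain ⟨k, hk⟩ : ∃ k, mval r ws a = k + 1 := ⟨mval r ws a - 1, by omega⟩
    have hk3 : 3 ≤ k := by omega
    have h2rws : 2*r < dist ws a := by
      have h1 := mval_lower hr hk
      have : (3:ℝ) ≤ (k:ℝ) := by exact_mod_cast hk3
      nlinarith [hr.le]
    obtain ⟨z, hz⟩ := SS_nonempty (δ₀ := δ₀) (δ₂ := δ₂) hδ₀ (by linarith) hwgeo hr h2rws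
    have hlevws : lev r ws a = r * k := lev_eq_of_mval hr ws a k hk
    have hza : dist z a ≤ r*(k:ℝ) := by rw [← hlevws]; exact hz.1
    have hzl : r*(k:ℝ) - δ₂ ≤ dist z a := by
      have := SS_lower hz; rw [hlevws] at this; exact this
    have hzx : dist ws z ≤ dist ws a - r*(k:ℝ) + δ₂ := by rw [← hlevws]; exact hz.2
    have hmz : mval r z a + 1 = mval r ws a := SS_mval hr hδ₂' hδ₂r h2rws hz
    have hmzk : mval r z a = k := by omega
    have hstep : dist ws z ≤ dist ws a - dist z a + δ₂ := by linarith
    refine ⟨z, ?_, by omega, ?_, by omega, ?_⟩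
    · intro y hy
      exact hmono y (mu_pos_step hδ hδ₀ hhyp hwgeo hfin hr hδ₀₂ hδ₂r h2rws hz hy)
    · have := lev_lt hr ws a
      rw [hlevws] at this
      linarith
    · intro _
      rw [hmzk]
      refine ⟨hzl, hza, ?_⟩
      by_cases hs1 : 1 ≤ s
      · obtain ⟨hwsl, hwsu, hexc⟩ := hslab hs1
        have hgap : δ/2 ≤ dist ws a - dist z a := by
          rw [hk] at hwsl
          push_cast at hwsl
          linarith
        have := EXstep hδ hhyp (E := δ₂ + δ) hexc hstep hgap
        simpa [max_self] using this
      · have hs0' : s = 0 := by omega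
        have hwsv : ws = v := hs0 hs0'
        subst hwsv
        linarith [dist_nonneg (x := z) (y := a)]
      
lemma INTtop0 (hc1 : δ₂ + δ ≤ Kst) (hc2 : δ₂ + δ₂ + 3*δ ≤ 2*Kst)
    (hCP : 2*Kst + δ₂ + δ ≤ 2*r) (hr2 : 2*δ₂ + 3*δ ≤ r) (hrδ : δ ≤ 2*(r - δ₂))
    (t : ℕ) {x x' a : X}
    (hm : 4 + t ≤ mval r x a) (hm' : 4 + t ≤ mval r x' a)
    (hle : mval r x a ≤ mval r x' a)
    (hT : 2*dist x x' + 3*δ₂ + 4*δ ≤ Kst + t*r) :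
    ∃ y, muAL r δ₂ x a y ≠ 0 ∧ muAL r δ₂ x' a y ≠ 0 := by
  have hδ₂' : 0 ≤ δ₂ := by linarith
  have hT0 : (0:ℝ) ≤ dist x x' := dist_nonneg
  obtain ⟨m0, hm0⟩ : ∃ m0, mval r x a = m0 + 1 := ⟨mval r x a - 1, by omega⟩
  have hm03 : 3 + t ≤ m0 := by omega
  have h2rx : 2*r < dist x a := by
    have h1 := mval_lower hr hm0
    have : (3:ℝ) ≤ (m0:ℝ) := by exact_mod_cast (by omega : 3 ≤ m0)
    nlinarith [hr.le]
  have h2rx' : 2*r < dist x' a := by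
    obtain ⟨m0', hm0'⟩ : ∃ m0', mval r x' a = m0' + 1 := ⟨mval r x' a - 1, by omega⟩
    have h1 := mval_lower hr hm0'
    have : (3:ℝ) ≤ (m0':ℝ) := by exact_mod_cast (by omega : 3 ≤ m0')
    nlinarith [hr.le]
  -- descend x' to the level of x
  set s : ℕ := mval r x' a - mval r x a with hsdef
  obtain ⟨w, hmono, hmvalw, hdwa, hw0, hwslab⟩ :=
    DESC hδ hδ₀ hhyp hwgeo hfin hr hδ₀₂ hδ₂r hrδ s x' a h2rx' (by omega)
  have hmw : mval r w a = m0 + 1 := by omega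
  -- unroll x once
  obtain ⟨z, hz⟩ := SS_nonempty (δ₀ := δ₀) (δ₂ := δ₂) hδ₀ (by linarith) hwgeo hr h2rx
  have hlevx : lev r x a = r * m0 := lev_eq_of_mval hr x a m0 hm0
  have hza : dist z a ≤ r*(m0:ℝ) := by rw [← hlevx]; exact hz.1
  have hzl : r*(m0:ℝ) - δ₂ ≤ dist z a := by
    have := SS_lower hz; rw [hlevx] at this; exact this
  have hzx : dist x z ≤ dist x a - r*(m0:ℝ) + δ₂ := by rw [← hlevx]; exact hz.2
  have hDlx : r * (m0:ℝ) < dist x a := mval_lower hr hm0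
  by_cases hs0 : s = 0
  · -- same level: w = x'
    have hwx' : w = x' := hw0 hs0
    subst hwx'
    obtain ⟨z', hz'⟩ := SS_nonempty (δ₀ := δ₀) (δ₂ := δ₂) hδ₀ (by linarith) hwgeo hr h2rx'
    have hlevx' : lev r w a = r * m0 := lev_eq_of_mval hr w a m0 hmw
    have hza' : dist z' a ≤ r*(m0:ℝ) := by rw [← hlevx']; exact hz'.1
    have hzl' : r*(m0:ℝ) - δ₂ ≤ dist z' a := by
      have := SS_lower hz'; rw [hlevx'] at this; exact this
    have hzx' : dist w z' ≤ dist w a - r*(m0:ℝ) + δ₂ := by rw [← hlevx']; exact hz'.2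
    have hDlx' : r * (m0:ℝ) < dist w a := mval_lower hr hmw
    have hzz' : dist z z' ≤ Kst + t*r := by
      have hgp := GP hδ hhyp (x := x) (x' := w) (a := a) (z := z) (z' := z')
        (L := r*(m0:ℝ)) (κ := dist x w) (c₁ := δ₂) (c₂ := δ₂) hza hzx hza' hzx' le_rfl
      refine le_trans hgp ?_
      have htr : (0:ℝ) ≤ t*r := by positivity
      apply max_le
      · apply max_le <;> linarith
      · apply max_le <;> linarith
    obtain ⟨y, hy1, hy2⟩ := INTslab hδ hδ₀ hhyp hwgeo hfin hr hδ₀₂ hδ₂r hc1 hc2 hCP hr2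
      t m0 z z' a (by push_cast; linarith) (by push_cast; linarith)
      (by push_cast; linarith) (by push_cast; linarith) hzz' hm03
    exact ⟨y, mu_pos_step hδ hδ₀ hhyp hwgeo hfin hr hδ₀₂ hδ₂r h2rx hz hy1,
      mu_pos_step hδ hδ₀ hhyp hwgeo hfin hr hδ₀₂ hδ₂r h2rx' hz' hy2⟩
  · -- s ≥ 1 : w is in slab m0+1
    have hs1 : 1 ≤ s := by omega
    obtain ⟨hwl, hwu, hexc⟩ := hwslab hs1
    rw [hmw] at hwl hwu
    push_cast at hwl hwu
    have h2rw : 2*r < dist w a := by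
      have : (3:ℝ) ≤ (m0:ℝ) := by exact_mod_cast (by omega : 3 ≤ m0)
      nlinarith [hr.le]
    obtain ⟨z', hz'⟩ := SS_nonempty (δ₀ := δ₀) (δ₂ := δ₂) hδ₀ (by linarith) hwgeo hr h2rw
    have hlevw : lev r w a = r * m0 := lev_eq_of_mval hr w a m0 hmw
    have hza' : dist z' a ≤ r*(m0:ℝ) := by rw [← hlevw]; exact hz'.1
    have hzl' : r*(m0:ℝ) - δ₂ ≤ dist z' a := by
      have := SS_lower hz'; rw [hlevw] at this; exact this
    have hzx' : dist w z' ≤ dist w a - r*(m0:ℝ) + δ₂ := by rw [← hlevw]; exact hz'.2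
    -- bound r*s
    have hrs : r * ((s:ℕ):ℝ) < dist x x' + r := by
      have hDx' : r * ((mval r x' a : ℕ) : ℝ) - r < dist x' a := by
        obtain ⟨m0', hm0'⟩ : ∃ m0', mval r x' a = m0' + 1 := ⟨mval r x' a - 1, by omega⟩
        have := mval_lower hr hm0'
        rw [hm0']
        push_cast
        linarith
      have hDx : dist x a ≤ r * ((mval r x a : ℕ) : ℝ) := dist_le_mval hr x a
      have htri : dist x' a ≤ dist x' x + dist x a := dist_triangle x' x a
      rw [dist_comm x' x] at htri
      have hcast : ((s:ℕ):ℝ) = ((mval r x' a : ℕ):ℝ) - ((mval r x a : ℕ):ℝ) := by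
        have : s + mval r x a = mval r x' a := by omega
        push_cast [← this]
        ring
      rw [hcast, mul_sub]
      linarith
    -- κ bound
    have hκ : dist x w ≤ 2*dist x x' + r + δ₂ + (δ₂ + δ) := by
      have htri : dist x w ≤ dist x x' + dist x' w := dist_triangle x x' w
      have hDx' : dist x' a ≤ r * ((mval r x' a : ℕ) : ℝ) := dist_le_mval hr x' a
      have hexps : r * ((mval r x' a : ℕ):ℝ) = r*((mval r x a : ℕ):ℝ) + r*((s:ℕ):ℝ) := by
        have : mval r x a + s = mval r x' a := by omega
        rw [← this]
        push_cast
        ring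
      have hmx : ((mval r x a : ℕ):ℝ) = (m0:ℝ) + 1 := by rw [hm0]; push_cast; ring
      have he2 : r * ((mval r x a : ℕ):ℝ) = r*((m0:ℝ)+1) := by rw [hmx]
      have he3 : r*((m0:ℝ)+1) = r*(m0:ℝ) + r := by ring
      linarith [hexc, hwl, hrs]
    have hzz' : dist z z' ≤ Kst + t*r := by
      have hgp := GP hδ hhyp (x := x) (x' := w) (a := a) (z := z) (z' := z')
        (L := r*(m0:ℝ)) (κ := 2*dist x x' + r + δ₂ + (δ₂ + δ)) (c₁ := δ₂) (c₂ := δ₂)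
        hza hzx hza' hzx' hκ
      refine le_trans hgp ?_
      have htr : (0:ℝ) ≤ t*r := by positivity
      apply max_le
      · apply max_le <;> linarith
      · apply max_le
        · linarith
        · linarith
    obtain ⟨y, hy1, hy2⟩ := INTslab hδ hδ₀ hhyp hwgeo hfin hr hδ₀₂ hδ₂r hc1 hc2 hCP hr2
      t m0 z z' a (by push_cast; linarith) (by push_cast; linarith)
      (by push_cast; linarith) (by push_cast; linarith) hzz' hm03
    refine ⟨y, mu_pos_step hδ hδ₀ hhyp hwgeo hfin hr hδ₀₂ hδ₂r h2rx hz hy1, ?_⟩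
    exact hmono y (mu_pos_step hδ hδ₀ hhyp hwgeo hfin hr hδ₀₂ hδ₂r h2rw hz' hy2)

lemma INTtop (hc1 : δ₂ + δ ≤ Kst) (hc2 : δ₂ + δ₂ + 3*δ ≤ 2*Kst)
    (hCP : 2*Kst + δ₂ + δ ≤ 2*r) (hr2 : 2*δ₂ + 3*δ ≤ r) (hrδ : δ ≤ 2*(r - δ₂))
    (t : ℕ) {x x' a : X}
    (hm : 4 + t ≤ mval r x a) (hm' : 4 + t ≤ mval r x' a)
    (hT : 2*dist x x' + 3*δ₂ + 4*δ ≤ Kst + t*r) :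
    ∃ y, muAL r δ₂ x a y ≠ 0 ∧ muAL r δ₂ x' a y ≠ 0 := by
  rcases le_total (mval r x a) (mval r x' a) with hle | hle
  · exact INTtop0 hδ hδ₀ hhyp hwgeo hfin hr hδ₀₂ hδ₂r hc1 hc2 hCP hr2 hrδ t hm hm' hle hT
  · obtain ⟨y, h1, h2⟩ := INTtop0 hδ hδ₀ hhyp hwgeo hfin hr hδ₀₂ hδ₂r hc1 hc2 hCP hr2 hrδ t
      (x := x') (x' := x) hm' hm hle (by rw [dist_comm]; exact hT)
    exact ⟨y, h2, h1⟩

end int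
end ALaux

open ALaux in
set_option maxHeartbeats 2000000 in


/-- Theorem 5.2 of Alvarez–Lafforgue. Let `(X, d)` be a δ-hyperbolic, weakly
δ₀-geodesic, uniformly locally finite metric space with an isometric action of a
group `G`. Then there is a `G`-equivariant family of finitely supported probability
measures `μ x a` on `X` satisfying: (i) uniformly bounded supports, (ii) exponential
decay of `‖μ x a - μ x' a‖₁` in `d(x, a)` when `d(x, x') ≤ k`, (iii) linearly many
points `a` with disjoint supports when `d(x, x')` is large. -/
theorem exists_equivariant_measures_hyperbolic
    {X : Type*} [MetricSpace X] {G : Type*} [Group G] [MulAction G X]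
    (δ : ℝ) (hδ : 0 ≤ δ)
    (hhyp : ∀ x₁ x₂ x₃ x₄ : X, dist x₁ x₄ + dist x₂ x₃ ≤
      max (dist x₁ x₂ + dist x₃ x₄) (dist x₁ x₃ + dist x₂ x₄) + δ)
    (δ₀ : ℝ) (hδ₀ : 0 ≤ δ₀)
    (hwgeo : ∀ x y : X, ∀ s : ℝ, 0 ≤ s → s ≤ dist x y + δ₀ →
      ∃ z : X, dist x z ≤ s ∧ dist z y ≤ dist x y - s + δ₀)
    (hulf : ∀ r : ℝ, ∃ K : ℕ, ∀ x : X,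
      (Metric.closedBall x r).Finite ∧ Nat.card (Metric.closedBall x r) ≤ K)
    (hiso : ∀ (g : G) (x y : X), dist (g • x) (g • y) = dist x y) :
    ∃ μ : X → X → X → ℝ,
      -- each `μ x a` is a finitely supported probability measure on `X`
      (∀ x a y, 0 ≤ μ x a y) ∧
      (∀ x a, (Function.support (μ x a)).Finite) ∧
      (∀ x a, ∑ᶠ y, μ x a y = 1) ∧
      -- `G`-equivariance
      (∀ (g : G) (x a y : X), μ (g • x) (g • a) (g • y) = μ x a y) ∧
      -- (i) supports uniformly contained in balls `B(a, R)`
      (∃ R : ℕ, ∀ x a y : X, μ x a y ≠ 0 → dist a y ≤ (R : ℝ)) ∧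
      -- (ii) exponential decay of `‖μ x a - μ x' a‖₁`
      (∃ ε : ℝ, 0 < ε ∧ ∀ k : ℕ, ∃ C : ℝ, 0 < C ∧
        ∀ x x' a : X, dist x x' ≤ (k : ℝ) →
          ∑ᶠ y, |μ x a y - μ x' a y| ≤ C * Real.exp (-ε * dist x a)) ∧
      -- (iii) many points `a` with disjoint supports when `d(x,x')` is large
      (∃ η : ℝ, 0 < η ∧ ∃ N : ℕ, ∀ x x' : X, (N : ℝ) ≤ dist x x' →
        {a : X | ∀ y, μ x a y = 0 ∨ μ x' a y = 0}.Finite ∧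
        η * dist x x' ≤ (Nat.card {a : X | ∀ y, μ x a y = 0 ∨ μ x' a y = 0} : ℝ)) := by
  classical
  -- constants
  set δ₂ : ℝ := δ₀ + δ + 1 with hδ₂def
  set r : ℝ := 100*(δ + δ₀ + 1) with hrdef
  set Kst : ℝ := 2*δ₂ + δ₀ + 3*δ + 2 with hKstdef
  have hr : 0 < r := by simp only [hrdef]; linarith
  have hδ₀₂ : δ₀ + δ ≤ δ₂ := by simp only [hδ₂def]; linarith
  have hδ₂r : δ₂ < r := by simp only [hδ₂def, hrdef]; linarith
  have hδ₂' : 0 ≤ δ₂ := by linarith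
  have hc1 : δ₂ + δ ≤ Kst := by simp only [hKstdef]; linarith
  have hc2 : δ₂ + δ₂ + 3*δ ≤ 2*Kst := by simp only [hKstdef]; linarith
  have hrδ : 3*δ ≤ 2*(r - δ₂) := by simp only [hδ₂def, hrdef]; linarith
  have hCP : 2*Kst + δ₂ + δ ≤ 2*r := by simp only [hδ₂def, hrdef, hKstdef]; linarith
  have hKst3 : δ₀ + 1 + 2*δ₂ + 3*δ ≤ Kst := by simp only [hδ₂def, hKstdef]; linarith
  have hδ₀r : δ₀ + 1 ≤ r := by simp only [hrdef]; linarith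
  have hr2 : 2*δ₂ + 3*δ ≤ r := by simp only [hδ₂def, hrdef]; linarith
  have hrδ' : δ ≤ 2*(r - δ₂) := by linarith
  have hKst0 : 0 ≤ Kst := by simp only [hKstdef]; linarith
  -- finiteness of balls
  have hfin : ∀ (c : X) (ρ : ℝ), (Metric.closedBall c ρ).Finite :=
    fun c ρ => ((hulf ρ).choose_spec c).1
  obtain ⟨K₀, hK₀⟩ := hulf (r + δ₂)
  set Kb : ℕ := K₀ + 2 with hKbdef
  have hKb : ∀ u : X, Nat.card (Metric.closedBall u (r + δ₂)) ≤ Kb :=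
    fun u => le_trans (hK₀ u).2 (by omega)
  have hKb1 : 1 ≤ Kb := by omega
  have hKb2 : 2 ≤ Kb := by omega
  set β : ℝ := 1 - ((Kb:ℝ) * (Kb:ℝ))⁻¹ with hβdef
  have hKbR : (2:ℝ) ≤ (Kb:ℝ) := by exact_mod_cast hKb2
  have hKbsq : (4:ℝ) ≤ (Kb:ℝ) * (Kb:ℝ) := by nlinarith
  have hKbsq0 : (0:ℝ) < (Kb:ℝ) * (Kb:ℝ) := by nlinarith
  have hβ0 : 0 < β := by
    have : ((Kb:ℝ) * (Kb:ℝ))⁻¹ ≤ 4⁻¹ := by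
      apply inv_anti₀ (by norm_num) hKbsq
    simp only [hβdef]
    norm_num at this ⊢
    linarith
  have hβ1 : β < 1 := by
    have : 0 < ((Kb:ℝ) * (Kb:ℝ))⁻¹ := by positivity
    simp only [hβdef]; linarith
  refine ⟨muAL r δ₂, ?_, ?_, ?_, ?_, ?_, ?_, ?_⟩
  · exact fun x a y => mu_nonneg x a y
  · exact fun x a => (hfin a (2*r)).subset (mu_supp_sub hfin hr hδ₂' hδ₂r x a)
  · exact fun x a => mu_sum hfin hδ₀ (by linarith) hwgeo hr hδ₂r x a
  · exact fun g x a y => mu_smul hiso g x a y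
  · -- (i)
    refine ⟨⌈2*r⌉₊, fun x a y hne => ?_⟩
    have h1 := mu_supp hfin hr hδ₂' hδ₂r (mval r x a) x a y rfl hne
    rw [dist_comm]
    exact le_trans h1 (Nat.le_ceil _)
  · -- (ii)
    set ε : ℝ := (1 - β)/r with hεdef
    have hε0 : 0 < ε := by
      have : 0 < 1 - β := by linarith
      positivity
    refine ⟨ε, hε0, fun k => ?_⟩
    set B : ℝ := (δ₀+1)*k + 6*r with hBdef
    have hB0 : 0 ≤ B := by
      have : (0:ℝ) ≤ (k:ℝ) := Nat.cast_nonneg k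
      simp only [hBdef]
      nlinarith
    refine ⟨2*(k+2)*Real.exp (ε*B), by positivity, fun x x' a hxx' => ?_⟩
    -- convert finsum to Finset sum
    have hsupp : Function.support (fun y => |muAL r δ₂ x a y - muAL r δ₂ x' a y|)
        ⊆ ↑((hfin a (2*r)).toFinset) := by
      intro y hy
      rw [Set.Finite.coe_toFinset]
      by_cases h1 : muAL r δ₂ x a y = 0
      · by_cases h2 : muAL r δ₂ x' a y = 0
        · exfalso; apply hy; simp [h1, h2]
        · exact mu_supp_sub hfin hr hδ₂' hδ₂r x' a h2
      · exact mu_supp_sub hfin hr hδ₂' hδ₂r x a h1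
    rw [finsum_eq_sum_of_support_subset _ hsupp]
    have hexpβ : ∀ j : ℕ, β ^ j ≤ Real.exp (-(ε * (r * j))) := by
      intro j
      have h1 : β ≤ Real.exp (β - 1) := by
        have := Real.add_one_le_exp (β - 1)
        linarith
      have h2 : β ^ j ≤ (Real.exp (β-1)) ^ j := pow_le_pow_left₀ hβ0.le h1 j
      rw [← Real.exp_nat_mul] at h2
      refine le_trans h2 (le_of_eq ?_)
      congr 1
      simp only [hεdef]
      field_simp
      ring
    by_cases hcase : dist x a ≤ (δ₀+1)*k + 5*r
    · -- trivial bound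
      have htriv : ∑ y ∈ (hfin a (2*r)).toFinset, |muAL r δ₂ x a y - muAL r δ₂ x' a y| ≤ 2 := by
        refine L1_le_two (fun y => mu_nonneg x a y) (fun y => mu_nonneg x' a y) ?_ ?_
        · exact le_of_eq (mu_sum_YF hfin hδ₀ (by linarith) hwgeo hr hδ₂r (mval r x a) x a rfl)
        · exact le_of_eq (mu_sum_YF hfin hδ₀ (by linarith) hwgeo hr hδ₂r (mval r x' a) x' a rfl)
      refine le_trans htriv ?_
      have h1 : Real.exp (ε*B) * Real.exp (-ε * dist x a) = Real.exp (ε*B - ε*dist x a) := by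
        rw [← Real.exp_add]; congr 1; ring
      have h2 : (1:ℝ) ≤ Real.exp (ε*B - ε*dist x a) := by
        rw [Real.one_le_exp_iff]
        have : dist x a ≤ B - r := by simp only [hBdef]; linarith
        nlinarith [hε0.le, hr.le]
      have h3 : (1:ℝ) ≤ (k:ℝ)+2 := by
        have : (0:ℝ) ≤ (k:ℝ) := Nat.cast_nonneg k
        linarith
      calc (2:ℝ) ≤ 2*((k:ℝ)+2)*Real.exp (ε*B - ε*dist x a) := by nlinarith
        _ = 2*((k:ℝ)+2)*Real.exp (ε*B) * Real.exp (-ε * dist x a) := by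
            rw [← h1]; ring
    · push_neg at hcase
      set q : ℝ := (dist x a - (δ₀+1)*k - 4*r)/r with hqdef
      have hq0 : 0 ≤ q := by
        have : 0 ≤ dist x a - (δ₀+1)*k - 4*r := by linarith
        positivity
      set j : ℕ := ⌊q⌋₊ with hjdef
      have hjq : (j:ℝ) ≤ q := Nat.floor_le hq0
      have hjq' : q - 1 ≤ (j:ℝ) := by
        have := Nat.lt_floor_add_one q
        linarith
      have hrj : r*(j:ℝ) ≤ dist x a - (δ₀+1)*k - 4*r := by
        have h1 : r*(j:ℝ) ≤ r*q := mul_le_mul_of_nonneg_left hjq hr.le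
        have h2 : r*q = dist x a - (δ₀+1)*k - 4*r := by
          simp only [hqdef]; field_simp
        linarith
      have hrj' : dist x a - (δ₀+1)*k - 5*r ≤ r*(j:ℝ) := by
        have h1 : r*(q-1) ≤ r*(j:ℝ) := mul_le_mul_of_nonneg_left hjq' hr.le
        have h2 : r*q = dist x a - (δ₀+1)*k - 4*r := by
          simp only [hqdef]; field_simp
        nlinarith
      have hQ := Qchain hδ hδ₀ hhyp hwgeo hfin hr hδ₀₂ hδ₂r hKb hKb1 rfl hc1 hc2 hrδ hCP
        hKst3 hδ₀r k j x x' a hxx' (by push_cast; linarith)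
      refine le_trans hQ ?_
      have hβj := hexpβ j
      have hexp2 : Real.exp (-(ε * (r*j))) ≤ Real.exp (ε*((δ₀+1)*k + 5*r)) * Real.exp (-ε*dist x a) := by
        rw [← Real.exp_add, Real.exp_le_exp]
        nlinarith [hε0.le]
      have hk1 : (0:ℝ) ≤ (k:ℝ) := Nat.cast_nonneg k
      have hle1 : Real.exp (ε*((δ₀+1)*k + 5*r)) ≤ Real.exp (ε*B) := by
        rw [Real.exp_le_exp]
        simp only [hBdef]
        nlinarith [hε0.le, hr.le]
      have hpos1 : (0:ℝ) < Real.exp (-ε*dist x a) := Real.exp_pos _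
      have hchain : β ^ j ≤ Real.exp (ε*B) * Real.exp (-ε*dist x a) := by
        refine le_trans hβj (le_trans hexp2 ?_)
        exact mul_le_mul_of_nonneg_right hle1 hpos1.le
      calc 2*((k:ℝ)+1) * β ^ j ≤ 2*((k:ℝ)+1) * (Real.exp (ε*B) * Real.exp (-ε*dist x a)) := by
            refine mul_le_mul_of_nonneg_left hchain (by positivity)
        _ ≤ 2*((k:ℝ)+2)*Real.exp (ε*B) * Real.exp (-ε * dist x a) := by
            nlinarith [Real.exp_pos (ε*B), hpos1]
  · -- (iii)
    set E : ℝ := δ₂ + δ with hEdef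
    set η : ℝ := 1/(2*(δ₀+2)) with hηdef
    have hδ₀r3 : δ₀ + 3 ≤ r := by simp only [hrdef]; linarith only [hδ, hδ₀]
    have hη0 : 0 < η := by simp only [hηdef]; positivity
    refine ⟨η, hη0, ⌈10*r⌉₊, fun x x' hT => ?_⟩
    set T : ℝ := dist x x' with hTdef
    have hT10 : 10*r ≤ T := le_trans (Nat.le_ceil _) hT
    have hT0 : 0 < T := by linarith only [hT10, hr]
    set Dset : Set X := {a : X | ∀ y, muAL r δ₂ x a y = 0 ∨ muAL r δ₂ x' a y = 0} with hDdef
    -- finiteness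
    obtain ⟨t, htdef⟩ : ∃ n : ℕ, n = ⌈(2*T + 3*δ₂ + 4*δ)/r⌉₊ := ⟨_, rfl⟩
    have ht : 2*T + 3*δ₂ + 4*δ ≤ Kst + t*r := by
      have h1 : (2*T + 3*δ₂ + 4*δ)/r ≤ (t:ℝ) := by rw [htdef]; exact Nat.le_ceil _
      have h2 : 2*T + 3*δ₂ + 4*δ ≤ (t:ℝ)*r := by
        rw [← div_le_iff₀ hr]
        exact h1
      linarith only [h2, hKst0]
    have hDsub : Dset ⊆ Metric.closedBall x (r*((4+t:ℕ):ℝ)) ∪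
        Metric.closedBall x' (r*((4+t:ℕ):ℝ)) := by
      intro a ha
      by_contra hc
      simp only [Set.mem_union, Metric.mem_closedBall, not_or, not_le] at hc
      obtain ⟨hc1', hc2'⟩ := hc
      rw [dist_comm a x] at hc1'
      rw [dist_comm a x'] at hc2'
      have hcast : r*((3+t:ℕ):ℝ) + r = r*((4+t:ℕ):ℝ) := by push_cast; ring
      have hm : 4 + t ≤ mval r x a := by
        have := mval_ge hr (x := x) (a := a) (k := 3+t)
          (by linarith only [hc1', hcast, hr])
        omega
      have hm' : 4 + t ≤ mval r x' a := by
        have := mval_ge hr (x := x') (a := a) (k := 3+t)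
          (by linarith only [hc2', hcast, hr])
        omega
      obtain ⟨y, hy1, hy2⟩ := INTtop hδ hδ₀ hhyp hwgeo hfin hr hδ₀₂ hδ₂r hc1 hc2 hCP hr2 hrδ'
        t hm hm' ht
      rcases ha y with h | h
      · exact hy1 h
      · exact hy2 h
    have hDfin : Dset.Finite :=
      Set.Finite.subset ((hfin x _).union (hfin x' _)) hDsub
    refine ⟨hDfin, ?_⟩
    -- the chain points
    obtain ⟨Δn, hΔdef⟩ : ∃ n : ℕ, n = ⌈δ₀⌉₊ + 1 := ⟨_, rfl⟩
    obtain ⟨i₀, hi₀def⟩ : ∃ n : ℕ, n = ⌈2*r + δ₀⌉₊ + 1 := ⟨_, rfl⟩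
    have hΔ0 : 0 < Δn := by omega
    have hΔδ₀ : δ₀ < (Δn:ℝ) := by
      have h1 := Nat.le_ceil δ₀
      rw [hΔdef]
      push_cast
      linarith only [h1]
    have hΔle : (Δn:ℝ) ≤ δ₀ + 2 := by
      have h1 := Nat.ceil_lt_add_one hδ₀
      rw [hΔdef]
      push_cast
      linarith only [h1]
    have hi₀l : 2*r + δ₀ < (i₀:ℝ) := by
      have h1 := Nat.le_ceil (2*r + δ₀)
      rw [hi₀def]
      push_cast
      linarith only [h1]
    have hi₀u : (i₀:ℝ) ≤ 2*r + δ₀ + 2 := by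
      have h1 := Nat.ceil_lt_add_one (by positivity : (0:ℝ) ≤ 2*r + δ₀)
      rw [hi₀def]
      push_cast
      linarith only [h1]
    have hΔpos0 : (0:ℝ) < (Δn:ℝ) := by exact_mod_cast hΔ0
    obtain ⟨qM, hqMdef⟩ : ∃ q : ℝ, q = (T - (i₀:ℝ) - 2*r - 1)/(Δn:ℝ) := ⟨_, rfl⟩
    have hi₀T : (i₀:ℝ) + 2*r + 1 ≤ T/2 := by
      linarith only [hi₀u, hT10, hδ₀r3]
    have hqM0 : 0 ≤ qM := by
      rw [hqMdef]
      refine div_nonneg (by linarith only [hi₀T, hT0]) hΔpos0.le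
    obtain ⟨M, hMdef⟩ : ∃ n : ℕ, n = ⌊qM⌋₊ + 1 := ⟨_, rfl⟩
    have hMq : qM < (M:ℝ) := by
      rw [hMdef]
      push_cast
      exact Nat.lt_floor_add_one qM
    have hMq' : (M:ℝ) - 1 ≤ qM := by
      rw [hMdef]
      push_cast
      have := Nat.floor_le hqM0
      linarith only [this]
    have hidx : ∀ k : ℕ, k < M → ((i₀ + Δn*k : ℕ):ℝ) ≤ T - 2*r - 1 := by
      intro k hk
      have h1 : (k:ℝ) ≤ (M:ℝ) - 1 := by
        have : (k:ℝ) + 1 ≤ (M:ℝ) := by exact_mod_cast hk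
        linarith only [this]
      have h2 : (k:ℝ) ≤ qM := le_trans h1 hMq'
      have h3 : (Δn:ℝ)*(k:ℝ) ≤ (Δn:ℝ)*qM := mul_le_mul_of_nonneg_left h2 hΔpos0.le
      have h4 : (Δn:ℝ)*qM = T - (i₀:ℝ) - 2*r - 1 := by
        rw [hqMdef]; field_simp
      push_cast
      linarith only [h3, h4]
    -- choose chain points
    have hch : ∀ k : ℕ, ∃ z : X, k < M →
        dist x z ≤ ((i₀ + Δn*k : ℕ):ℝ) ∧ dist z x' ≤ T - ((i₀ + Δn*k : ℕ):ℝ) + δ₀ := by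
      intro k
      by_cases hk : k < M
      · obtain ⟨z, hz1, hz2⟩ := hwgeo x x' ((i₀ + Δn*k : ℕ):ℝ) (by positivity)
          (by
            have h1 := hidx k hk
            rw [← hTdef]
            linarith only [h1, hδ₀, hr])
        exact ⟨z, fun _ => ⟨hz1, by rw [← hTdef] at hz2; exact hz2⟩⟩
      · exact ⟨x, fun h => absurd h hk⟩
    choose f hf using hch
    have hfl : ∀ k : ℕ, k < M → T - ((i₀ + Δn*k : ℕ):ℝ) ≤ dist (f k) x' := by
      intro k hk
      have h1 := (hf k hk).1
      have h2 : T ≤ dist x (f k) + dist (f k) x' := by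
        rw [hTdef]; exact dist_triangle x (f k) x'
      linarith only [h1, h2]
    have hfxl : ∀ k : ℕ, k < M → ((i₀ + Δn*k : ℕ):ℝ) - δ₀ ≤ dist x (f k) := by
      intro k hk
      have h1 := (hf k hk).2
      have h2 : T ≤ dist x (f k) + dist (f k) x' := by
        rw [hTdef]; exact dist_triangle x (f k) x'
      linarith only [h1, h2]
    have hik0 : ∀ k : ℕ, (2*r + δ₀ : ℝ) < ((i₀ + Δn*k : ℕ):ℝ) := by
      intro k
      have h1 : (0:ℝ) ≤ (Δn:ℝ)*(k:ℝ) := by positivity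
      push_cast
      linarith only [hi₀l, h1]
    have hfD : ∀ k : ℕ, k < M → f k ∈ Dset := by
      intro k hk
      intro y
      by_contra hcon
      push_neg at hcon
      obtain ⟨hy1, hy2⟩ := hcon
      have h2rx : 2*r < dist x (f k) := by
        linarith only [hfxl k hk, hik0 k]
      have h2rx' : 2*r < dist x' (f k) := by
        have h1 := hfl k hk
        have h2 := hidx k hk
        rw [dist_comm]
        linarith only [h1, h2]
      obtain ⟨hs1, hs2, hs3⟩ := supp_struct hδ hhyp hfin hr hδ₂' hδ₂r hrδ' h2rx y hy1
      obtain ⟨hs1', hs2', hs3'⟩ := supp_struct hδ hhyp hfin hr hδ₂' hδ₂r hrδ' h2rx' y hy2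
      have htri : T ≤ dist x y + dist y x' := by
        rw [hTdef]; exact dist_triangle x y x'
      have hyx' : dist y x' = dist x' y := dist_comm _ _
      have hda : dist x (f k) ≤ ((i₀ + Δn*k : ℕ):ℝ) := (hf k hk).1
      have hda' : dist x' (f k) ≤ T - ((i₀ + Δn*k : ℕ):ℝ) + δ₀ := by
        rw [dist_comm]; exact (hf k hk).2
      have hbad : 4*r ≤ δ₀ + 2*δ₂ + 2*(δ₂+δ) := by
        linarith only [htri, hyx', hs1, hs2, hs3, hs1', hs2', hs3', hda, hda']
      rw [hδ₂def, hrdef] at hbad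
      linarith only [hbad, hδ, hδ₀]
    have hinj : Set.InjOn (fun k => f k) ↑(Finset.range M) := by
      intro k₁ hk₁ k₂ hk₂ hfe
      have hfe' : f k₁ = f k₂ := hfe
      simp only [Finset.coe_range, Set.mem_Iio] at hk₁ hk₂
      by_contra hne
      rcases Nat.lt_or_ge k₁ k₂ with hlt | hge
      · have h1 := hfl k₁ hk₁
        have h2 := (hf k₂ hk₂).2
        rw [← hfe'] at h2
        have h3 : ((i₀ + Δn*k₂ : ℕ):ℝ) - ((i₀ + Δn*k₁ : ℕ):ℝ) ≤ δ₀ := by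
          linarith only [h1, h2]
        have hk21 : (1:ℝ) ≤ (k₂:ℝ) - (k₁:ℝ) := by
          have : (k₁:ℝ) + 1 ≤ (k₂:ℝ) := by exact_mod_cast hlt
          linarith only [this]
        have h5 : (Δn:ℝ)*1 ≤ (Δn:ℝ)*((k₂:ℝ)-(k₁:ℝ)) :=
          mul_le_mul_of_nonneg_left hk21 hΔpos0.le
        have h6 : ((i₀ + Δn*k₂ : ℕ):ℝ) - ((i₀ + Δn*k₁ : ℕ):ℝ)
            = (Δn:ℝ)*((k₂:ℝ)-(k₁:ℝ)) := by push_cast; ring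
        rw [h6] at h3
        linarith only [h3, h5, hΔδ₀]
      · have hlt : k₂ < k₁ := by omega
        have h1 := hfl k₂ hk₂
        have h2 := (hf k₁ hk₁).2
        rw [hfe'] at h2
        have h3 : ((i₀ + Δn*k₁ : ℕ):ℝ) - ((i₀ + Δn*k₂ : ℕ):ℝ) ≤ δ₀ := by
          linarith only [h1, h2]
        have hk21 : (1:ℝ) ≤ (k₁:ℝ) - (k₂:ℝ) := by
          have : (k₂:ℝ) + 1 ≤ (k₁:ℝ) := by exact_mod_cast hlt
          linarith only [this]
        have h5 : (Δn:ℝ)*1 ≤ (Δn:ℝ)*((k₁:ℝ)-(k₂:ℝ)) :=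
          mul_le_mul_of_nonneg_left hk21 hΔpos0.le
        have h6 : ((i₀ + Δn*k₁ : ℕ):ℝ) - ((i₀ + Δn*k₂ : ℕ):ℝ)
            = (Δn:ℝ)*((k₁:ℝ)-(k₂:ℝ)) := by push_cast; ring
        rw [h6] at h3
        linarith only [h3, h5, hΔδ₀]
    have hcard : M ≤ Nat.card Dset := by
      rw [Nat.card_coe_set_eq]
      have h1 : ((Finset.range M).image (fun k => f k) : Set X) ⊆ Dset := by
        intro z hz
        simp only [Finset.coe_image, Set.mem_image, Finset.coe_range, Set.mem_Iio] at hz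
        obtain ⟨k, hk, rfl⟩ := hz
        exact hfD k hk
      have h2 : ((Finset.range M).image (fun k => f k)).card = M := by
        rw [Finset.card_image_of_injOn hinj, Finset.card_range]
      calc M = ((Finset.range M).image (fun k => f k)).card := h2.symm
        _ = (((Finset.range M).image (fun k => f k) : Finset X) : Set X).ncard := by
            rw [Set.ncard_coe_finset]
        _ ≤ Dset.ncard := Set.ncard_le_ncard h1 hDfin
    have hηT : η * T ≤ (M:ℝ) := by
      have h1 : η * T ≤ (T/2)/(Δn:ℝ) := by
        rw [le_div_iff₀ hΔpos0]
        have hηT0 : (0:ℝ) ≤ η * T := mul_nonneg hη0.le hT0.le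
        calc η * T * (Δn:ℝ) ≤ η * T * (δ₀+2) := mul_le_mul_of_nonneg_left hΔle hηT0
          _ = T/2 := by rw [hηdef]; field_simp
      have h2 : (T/2)/(Δn:ℝ) ≤ qM := by
        rw [hqMdef, div_le_div_iff₀ hΔpos0 hΔpos0]
        have h3 : T/2 ≤ T - (i₀:ℝ) - 2*r - 1 := by
          linarith only [hi₀T]
        exact mul_le_mul_of_nonneg_right h3 hΔpos0.le
      linarith only [h1, h2, hMq]
    have hMcast : (M:ℝ) ≤ (Nat.card Dset : ℝ) := by exact_mod_cast hcard
    linarith only [hηT, hMcast]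
end

section
/- Let n ≥ 1 be an integer, let p be a real number with p > n, and let x, x' be two distinct points of n-dimensional Euclidean space ℝⁿ. Define v : ℝⁿ → ℝⁿ by v(a) = (x − a)/‖x − a‖ − (x' − a)/‖x' − a‖ for a ∉ {x, x'}, and v(a) = 0 for a ∈ {x, x'}. Then ∫_{ℝⁿ} ‖v(a)‖^p da < ∞ with respect to Lebesgue measure; that is, v belongs to L^p(ℝⁿ; ℝⁿ). -/
open MeasureTheory
open scoped ENNReal NNReal

lemma unit_diff_le_two {E : Type*} [NormedAddCommGroup E] [NormedSpace ℝ E] (u w : E) :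
    ‖‖u‖⁻¹ • u - ‖w‖⁻¹ • w‖ ≤ 2 := by
  have h1 : ‖‖u‖⁻¹ • u‖ ≤ 1 := by
    rcases eq_or_ne u 0 with h | h
    · simp [h]
    · rw [norm_smul, norm_inv, norm_norm, inv_mul_cancel₀ (norm_ne_zero_iff.2 h)]
  have h2 : ‖‖w‖⁻¹ • w‖ ≤ 1 := by
    rcases eq_or_ne w 0 with h | h
    · simp [h]
    · rw [norm_smul, norm_inv, norm_norm, inv_mul_cancel₀ (norm_ne_zero_iff.2 h)]
  calc ‖‖u‖⁻¹ • u - ‖w‖⁻¹ • w‖ ≤ ‖‖u‖⁻¹ • u‖ + ‖‖w‖⁻¹ • w‖ := norm_sub_le _ _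
    _ ≤ 2 := by linarith

lemma unit_diff_le_ratio {E : Type*} [NormedAddCommGroup E] [NormedSpace ℝ E]
    {u w : E} (hu : u ≠ 0) (hw : w ≠ 0) :
    ‖‖u‖⁻¹ • u - ‖w‖⁻¹ • w‖ ≤ 2 * ‖u - w‖ / ‖u‖ := by
  have hu0 : (0:ℝ) < ‖u‖ := norm_pos_iff.2 hu
  have hw0 : (0:ℝ) < ‖w‖ := norm_pos_iff.2 hw
  have hkey : ‖u‖⁻¹ • u - ‖w‖⁻¹ • w = ‖u‖⁻¹ • (u - w) + (‖u‖⁻¹ - ‖w‖⁻¹) • w := by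
    module
  rw [hkey]
  have h1 : ‖‖u‖⁻¹ • (u - w)‖ = ‖u - w‖ / ‖u‖ := by
    rw [norm_smul, norm_inv, norm_norm]; ring
  have h2 : ‖(‖u‖⁻¹ - ‖w‖⁻¹) • w‖ ≤ ‖u - w‖ / ‖u‖ := by
    have habs : |‖w‖ - ‖u‖| ≤ ‖u - w‖ := by
      have h := abs_norm_sub_norm_le w u
      rwa [show w - u = -(u - w) by abel, norm_neg] at h
    rw [norm_smul, Real.norm_eq_abs]
    have heq : |‖u‖⁻¹ - ‖w‖⁻¹| * ‖w‖ = |‖w‖ - ‖u‖| / ‖u‖ := by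
      rw [show ‖u‖⁻¹ - ‖w‖⁻¹ = (‖w‖ - ‖u‖) / (‖u‖ * ‖w‖) by field_simp, abs_div,
        abs_of_pos (mul_pos hu0 hw0)]
      field_simp
    rw [heq]
    gcongr
  calc ‖‖u‖⁻¹ • (u - w) + (‖u‖⁻¹ - ‖w‖⁻¹) • w‖
      ≤ ‖‖u‖⁻¹ • (u - w)‖ + ‖(‖u‖⁻¹ - ‖w‖⁻¹) • w‖ := norm_add_le _ _
    _ ≤ ‖u - w‖ / ‖u‖ + ‖u - w‖ / ‖u‖ := by rw [h1]; linarith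
    _ = 2 * ‖u - w‖ / ‖u‖ := by ring

/-- The Euclidean computation of Section 2 of Alvarez–Lafforgue: for `p > n` and two
distinct points `x, x'` of `ℝⁿ`, the difference of the unit geodesic fields pointing
toward `x` and toward `x'`, i.e. `v(a) = (x - a)/‖x - a‖ - (x' - a)/‖x' - a‖`,
belongs to `L^p(ℝⁿ; ℝⁿ)`. -/
theorem geodesic_field_difference_memLp
    (n : ℕ) (hn : 1 ≤ n) (p : ℝ) (hp : (n : ℝ) < p)
    (x x' : EuclideanSpace ℝ (Fin n)) (hxx' : x ≠ x')
    (v : EuclideanSpace ℝ (Fin n) → EuclideanSpace ℝ (Fin n))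
    (hv : ∀ a, a ≠ x → a ≠ x' →
      v a = ‖x - a‖⁻¹ • (x - a) - ‖x' - a‖⁻¹ • (x' - a))
    (hvx : v x = 0) (hvx' : v x' = 0) :
    (∫⁻ a, ENNReal.ofReal (‖v a‖ ^ p) ∂(volume : Measure (EuclideanSpace ℝ (Fin n)))) < ⊤
      ∧ MemLp v (ENNReal.ofReal p)
        (volume : Measure (EuclideanSpace ℝ (Fin n))) := by
  haveI : Nontrivial (EuclideanSpace ℝ (Fin n)) := ⟨⟨x, x', hxx'⟩⟩
  set C : ℝ := ‖x - x'‖ with hC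
  have hC0 : 0 < C := norm_pos_iff.2 (sub_ne_zero.2 hxx')
  set M : ℝ := 2 * (1 + C) with hM
  have hM0 : 0 < M := by positivity
  have hp0 : 0 < p := lt_of_le_of_lt (Nat.cast_nonneg n) hp
  -- pointwise bound
  have hbound : ∀ a, ‖v a‖ ≤ M * (1 + ‖x - a‖)⁻¹ := by
    intro a
    rcases eq_or_ne a x with rfl | hax
    · rw [hvx]; simp only [norm_zero]; positivity
    rcases eq_or_ne a x' with rfl | hax'
    · rw [hvx']; simp only [norm_zero]; positivity
    rw [hv a hax hax']
    have hux : x - a ≠ 0 := sub_ne_zero.2 (Ne.symm hax)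
    have hux' : x' - a ≠ 0 := sub_ne_zero.2 (Ne.symm hax')
    have hxa0 : (0:ℝ) < ‖x - a‖ := norm_pos_iff.2 hux
    have hpos : (0:ℝ) < 1 + ‖x - a‖ := by positivity
    rcases le_or_gt ‖x - a‖ C with h | h
    · refine le_trans (unit_diff_le_two _ _) ?_
      have h3 : 2 * (1 + ‖x - a‖) ≤ M := by rw [hM]; linarith
      calc (2:ℝ) = 2 * (1 + ‖x - a‖) * (1 + ‖x - a‖)⁻¹ := by field_simp
        _ ≤ M * (1 + ‖x - a‖)⁻¹ := mul_le_mul_of_nonneg_right h3 (inv_nonneg.2 hpos.le)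
    · have h1 := unit_diff_le_ratio hux hux'
      have h2 : (x - a) - (x' - a) = x - x' := by abel
      rw [h2, ← hC] at h1
      refine le_trans h1 ?_
      rw [← div_eq_mul_inv, div_le_div_iff₀ hxa0 hpos, hM]
      nlinarith
  -- integrable majorant
  have hmaj : Integrable (fun a : EuclideanSpace ℝ (Fin n) => (M * (1 + ‖x - a‖)⁻¹) ^ p)
      volume := by
    have hfin : (Module.finrank ℝ (EuclideanSpace ℝ (Fin n)) : ℝ) < p := by
      rwa [finrank_euclideanSpace_fin]
    have h0 : Integrable (fun a : EuclideanSpace ℝ (Fin n) => (1 + ‖a‖) ^ (-p)) volume :=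
      integrable_one_add_norm hfin
    have h1 : Integrable (fun a : EuclideanSpace ℝ (Fin n) => (1 + ‖x - a‖) ^ (-p)) volume :=
      ((Measure.measurePreserving_sub_left volume x).integrable_comp h0.aestronglyMeasurable).mpr h0
    have h2 := h1.const_mul (M ^ p)
    have heq : (fun a : EuclideanSpace ℝ (Fin n) => (M * (1 + ‖x - a‖)⁻¹) ^ p)
        = fun a => M ^ p * (1 + ‖x - a‖) ^ (-p) := by
      funext a
      have hpos : (0:ℝ) < 1 + ‖x - a‖ := by positivity
      rw [Real.mul_rpow hM0.le (by positivity), Real.rpow_neg hpos.le,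
        ← Real.inv_rpow hpos.le]
    rw [heq]; exact h2
  -- pointwise rpow bound
  have hlep : ∀ a, ‖v a‖ ^ p ≤ (M * (1 + ‖x - a‖)⁻¹) ^ p := fun a =>
    Real.rpow_le_rpow (norm_nonneg _) (hbound a) hp0.le
  have hlint : (∫⁻ a, ENNReal.ofReal (‖v a‖ ^ p)
      ∂(volume : Measure (EuclideanSpace ℝ (Fin n)))) < ⊤ := by
    refine lt_of_le_of_lt (lintegral_mono fun a => ENNReal.ofReal_le_ofReal (hlep a)) ?_
    exact hmaj.lintegral_lt_top
  -- measurability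
  have hmeas : AEStronglyMeasurable v (volume : Measure (EuclideanSpace ℝ (Fin n))) := by
    have hw : Measurable (fun a : EuclideanSpace ℝ (Fin n) =>
        ‖x - a‖⁻¹ • (x - a) - ‖x' - a‖⁻¹ • (x' - a)) := by
      fun_prop
    refine (hw.aestronglyMeasurable).congr ?_
    have hnull : (volume : Measure (EuclideanSpace ℝ (Fin n))) {x, x'} = 0 :=
      (Set.toFinite _).measure_zero _
    filter_upwards [measure_eq_zero_iff_ae_notMem.mp hnull] with a ha
    simp only [Set.mem_insert_iff, Set.mem_singleton_iff, not_or] at ha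
    exact (hv a ha.1 ha.2).symm
  refine ⟨hlint, hmeas, ?_⟩
  rw [eLpNorm_eq_lintegral_rpow_enorm_toReal (by simp [hp0, ENNReal.ofReal_eq_zero, not_le])
    ENNReal.ofReal_ne_top, ENNReal.toReal_ofReal hp0.le]
  have heq2 : (∫⁻ a, ‖v a‖ₑ ^ p ∂(volume : Measure (EuclideanSpace ℝ (Fin n))))
      = ∫⁻ a, ENNReal.ofReal (‖v a‖ ^ p) ∂(volume : Measure (EuclideanSpace ℝ (Fin n))) := by
    congr 1; funext a
    rw [← ofReal_norm, ← ENNReal.ofReal_rpow_of_nonneg (norm_nonneg _) hp0.le]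
  rw [heq2]
  exact ENNReal.rpow_lt_top_of_nonneg (by positivity) hlint.ne
end

section
/- Let (X,d) be a δ-hyperbolic metric space (δ ≥ 0) and let a, x, x', y, y' be points of X with d(x,x') ≤ 1, d(a,y) = d(a,y'), y ∈ δ-geod(a,x) and y' ∈ δ-geod(a,x'). Then d(y,y') ≤ 2δ + 2. -/
/-- From Lemma 4.5 of Alvarez–Lafforgue: in a δ-hyperbolic space, if `d(x,x') ≤ 1`,
`d(a,y) = d(a,y')`, `y ∈ δ-geod(a,x)` and `y' ∈ δ-geod(a,x')`, then `d(y,y') ≤ 2δ + 2`. -/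
theorem dist_le_of_approx_geod_neighbors
    {X : Type*} [MetricSpace X] (δ : ℝ) (hδ : 0 ≤ δ)
    (hhyp : ∀ x₁ x₂ x₃ x₄ : X, dist x₁ x₄ + dist x₂ x₃ ≤
      max (dist x₁ x₂ + dist x₃ x₄) (dist x₁ x₃ + dist x₂ x₄) + δ)
    (a x x' y y' : X)
    (hxx' : dist x x' ≤ 1)
    (hsphere : dist a y = dist a y')
    (hy : dist a y + dist y x ≤ dist a x + δ)
    (hy' : dist a y' + dist y' x' ≤ dist a x' + δ) :
    dist y y' ≤ 2 * δ + 2 := by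
  have h := hhyp y a x' y'
  have t1 : dist a x ≤ dist a x' + dist x x' := by
    rw [dist_comm x x']; exact dist_triangle a x' x
  have t2 : dist y x' ≤ dist y x + dist x x' := dist_triangle y x x'
  rcases le_total (dist y a + dist x' y') (dist y x' + dist a y') with hc | hc
  · rw [max_eq_right hc] at h
    linarith
  · rw [max_eq_left hc] at h
    rw [dist_comm y a, dist_comm x' y'] at h
    linarith
end

section
/- Let (X,d) be a δ-hyperbolic metric space (δ ≥ 0) and let a, x, x', y, y' be points of X with d(x,a) = d(x',a), d(x,x') ≤ 4δ, d(a,y) = d(a,y'), y ∈ δ-geod(a,x), y' ∈ δ-geod(a,x'), and d(x',y') ≥ 5δ. Then d(y,y') ≤ 3δ. -/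
/-- From Lemma 4.6 of Alvarez–Lafforgue: in a δ-hyperbolic space, if `d(x,a) = d(x',a)`,
`d(x,x') ≤ 4δ`, `d(a,y) = d(a,y')`, `y ∈ δ-geod(a,x)`, `y' ∈ δ-geod(a,x')` and
`d(x',y') ≥ 5δ`, then `d(y,y') ≤ 3δ`. -/
theorem dist_le_three_delta_of_approx_geod
    {X : Type*} [MetricSpace X] (δ : ℝ) (hδ : 0 ≤ δ)
    (hhyp : ∀ x₁ x₂ x₃ x₄ : X, dist x₁ x₄ + dist x₂ x₃ ≤
      max (dist x₁ x₂ + dist x₃ x₄) (dist x₁ x₃ + dist x₂ x₄) + δ)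
    (a x x' y y' : X)
    (hxa : dist x a = dist x' a)
    (hxx' : dist x x' ≤ 4 * δ)
    (hsphere : dist a y = dist a y')
    (hy : dist a y + dist y x ≤ dist a x + δ)
    (hy' : dist a y' + dist y' x' ≤ dist a x' + δ)
    (hx'y' : 5 * δ ≤ dist x' y') :
    dist y y' ≤ 3 * δ := by
  have hax : dist a x = dist a x' := by
    rw [dist_comm a x, dist_comm a x', hxa]
  -- R - r ≥ 4δ
  have hRr : 4 * δ ≤ dist a x' - dist a y' := by
    have h1 : dist x' y' = dist y' x' := dist_comm x' y'
    linarith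
  -- bound d(y, x') ≤ R - r + 2δ
  have h2 := hhyp y a x x'
  have hyx' : dist y x' ≤ dist a x' - dist a y' + 2 * δ := by
    rcases le_total (dist y a + dist x x') (dist y x + dist a x') with h | h
    · rw [max_eq_right h] at h2
      linarith
    · rw [max_eq_left h] at h2
      have hya : dist y a = dist a y := dist_comm y a
      linarith
  -- main application
  have h1 := hhyp y a x' y'
  rcases le_total (dist y a + dist x' y') (dist y x' + dist a y') with h | h
  · rw [max_eq_right h] at h1
    linarith
  · rw [max_eq_left h] at h1
    have hya : dist y a = dist a y := dist_comm y a
    have hx'y'' : dist x' y' = dist y' x' := dist_comm x' y'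
    linarith
end
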